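/- arXiv:2102.10549 — 7 statements merged into one kernel-verified Lean document; each statement's English description precedes it below -/
import Mathlib

section
/- Let f : ℝ → ℝ be lower semicontinuous and let g : ℝ → ℝ be the convex hull (largest convex minorant) of f, i.e. g is convex, g ≤ f, and every convex function h : ℝ → ℝ with h ≤ f satisfies h ≤ g. If a < b and f(x) > g(x) for every x ∈ (a,b), then g is affine on (a,b): there exist α, β ∈ ℝ such that g(x) = α + β·x for all x ∈ (a,b). -/
open MeasureTheory Set Filter Topology

private lemma chord_le {g : ℝ → ℝ} (hg : ConvexOn ℝ Set.univ g) {x y z : ℝ}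
    (hxy : x < y) (hyz : y < z) :
    (z - x) * g y ≤ (z - y) * g x + (y - x) * g z := by
  have hzx : (0:ℝ) < z - x := by linarith
  have ha : (0:ℝ) ≤ (z - y)/(z - x) := div_nonneg (by linarith) hzx.le
  have hb : (0:ℝ) ≤ (y - x)/(z - x) := div_nonneg (by linarith) hzx.le
  have hab1 : (z - y)/(z - x) + (y - x)/(z - x) = 1 := by field_simp; ring
  have h := hg.2 (Set.mem_univ x) (Set.mem_univ z) ha hb hab1
  have hxy' : ((z - y)/(z - x)) • x + ((y - x)/(z - x)) • z = y := by
    simp only [smul_eq_mul]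
    field_simp
    ring
  rw [hxy'] at h
  simp only [smul_eq_mul] at h
  have h2 := mul_le_mul_of_nonneg_left h hzx.le
  have e1 : (z - x) * ((z - y)/(z - x) * g x + (y - x)/(z - x) * g z)
      = (z - y) * g x + (y - x) * g z := by
    field_simp
  linarith [h2, e1.symm.le, e1.le]

private lemma lsc_pos_compact {φ : ℝ → ℝ} (hφ : LowerSemicontinuous φ) {J : Set ℝ}
    (hJ : IsCompact J) (hpos : ∀ x ∈ J, 0 < φ x) : ∃ δ > 0, ∀ x ∈ J, δ ≤ φ x := by
  have hcov : J ⊆ ⋃ n : ℕ, φ ⁻¹' Set.Ioi (1/(n+1)) := by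
    intro x hx
    obtain ⟨n, hn⟩ := exists_nat_one_div_lt (hpos x hx)
    exact Set.mem_iUnion.2 ⟨n, hn⟩
  obtain ⟨t, ht⟩ := hJ.elim_finite_subcover _ (fun n => hφ.isOpen_preimage _) hcov
  refine ⟨1/((t.sup id : ℕ) + 1), by positivity, fun x hx => ?_⟩
  obtain ⟨n, hn, hxn⟩ := Set.mem_iUnion₂.1 (ht hx)
  have hle : (n : ℝ) + 1 ≤ (t.sup id : ℕ) + 1 := by
    have : n ≤ t.sup id := Finset.le_sup (f := id) hn
    exact_mod_cast Nat.succ_le_succ this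
  have h1 : 1/((t.sup id : ℕ) + 1 : ℝ) ≤ 1/((n:ℝ)+1) :=
    one_div_le_one_div_of_le (by positivity) hle
  exact h1.trans (le_of_lt hxn)

theorem stmt0 (f g : ℝ → ℝ) (hf : LowerSemicontinuous f)
    (hg : ConvexOn ℝ Set.univ g) (hgf : ∀ x, g x ≤ f x)
    (hmax : ∀ h : ℝ → ℝ, ConvexOn ℝ Set.univ h → (∀ x, h x ≤ f x) → ∀ x, h x ≤ g x)
    (a b : ℝ) (hab : a < b) (hfg : ∀ x ∈ Set.Ioo a b, g x < f x) :
    ∃ α β : ℝ, ∀ x ∈ Set.Ioo a b, g x = α + β * x := by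
  by_cases H : ∃ x1 ∈ Set.Ioo a b, ∃ x2 ∈ Set.Ioo a b, ∃ x3 ∈ Set.Ioo a b,
      x1 < x2 ∧ x2 < x3 ∧ (x3 - x1) * g x2 < (x3 - x2) * g x1 + (x2 - x1) * g x3
  · exfalso
    obtain ⟨x1, hx1, x2, hx2, x3, hx3, h12, h23, hstrict⟩ := H
    have h13 : x1 < x3 := h12.trans h23
    have h31 : (0:ℝ) < x3 - x1 := by linarith
    obtain ⟨s, hs⟩ : ∃ s : ℝ, s * (x3 - x1) = g x3 - g x1 :=
      ⟨(g x3 - g x1)/(x3 - x1), by field_simp⟩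
    have hgc : Continuous g := by
      rw [← continuousOn_univ]
      exact hg.continuousOn isOpen_univ
    set φ0 : ℝ → ℝ := fun x => g x - s * x with hφ0_def
    have hφ0c : Continuous φ0 := by rw [hφ0_def]; fun_prop
    clear_value φ0
    have hφ0 : ∀ x, φ0 x = g x - s * x := fun x => by rw [hφ0_def]
    have hφ013 : φ0 x1 = φ0 x3 := by
      rw [hφ0, hφ0]; linear_combination hs
    obtain ⟨w, hw, hwmin⟩ := isCompact_Icc.exists_isMinOn (Set.nonempty_Icc.2 h13.le)
      hφ0c.continuousOn
    obtain ⟨c, hc⟩ : ∃ c : ℝ, c = φ0 w := ⟨_, rfl⟩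
    have hwmin' : ∀ x ∈ Set.Icc x1 x3, c ≤ φ0 x := fun x hx => hc ▸ hwmin hx
    have hc2 : c ≤ φ0 x2 := hwmin' x2 ⟨h12.le, h23.le⟩
    have hc1 : c < φ0 x1 := by
      refine hc2.trans_lt ?_
      have key : (x3 - x1) * φ0 x2 < (x3 - x1) * φ0 x1 := by
        rw [hφ0, hφ0]
        have he : (x2 - x1) * (g x1 - g x3) + (x2 - x1) * (s * (x3 - x1)) = 0 := by
          linear_combination (x2 - x1) * hs
        nlinarith [hstrict, he]
      exact lt_of_mul_lt_mul_left key h31.le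
    have houtside : ∀ x, x ∉ Set.Icc x1 x3 → φ0 x1 ≤ φ0 x := by
      intro x hx
      rw [Set.mem_Icc, not_and_or, not_le, not_le] at hx
      rcases hx with hx | hx
      · have hch := chord_le hg hx h13
        have key : (x3 - x1) * φ0 x1 ≤ (x3 - x1) * φ0 x := by
          rw [hφ0, hφ0]
          have he : (x1 - x) * (g x1 - g x3) + (x1 - x) * (s * (x3 - x1)) = 0 := by
            linear_combination (x1 - x) * hs
          nlinarith [hch, he]
        exact le_of_mul_le_mul_left key h31
      · have hch := chord_le hg h13 hx
        have key : (x3 - x1) * φ0 x3 ≤ (x3 - x1) * φ0 x := by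
          rw [hφ0, hφ0]
          have he : (x - x3) * (g x3 - g x1) - (x - x3) * (s * (x3 - x1)) = 0 := by
            linear_combination (-(x - x3)) * hs
          nlinarith [hch, he]
        rw [hφ013]
        exact le_of_mul_le_mul_left key h31
    have hglob : ∀ x, c ≤ φ0 x := by
      intro x
      by_cases hx : x ∈ Set.Icc x1 x3
      · exact hwmin' x hx
      · exact hc1.le.trans (houtside x hx)
    obtain ⟨δ0, hδ0_def⟩ : ∃ δ0 : ℝ, δ0 = (φ0 x1 - c)/2 := ⟨_, rfl⟩
    have hδ0 : 0 < δ0 := by rw [hδ0_def]; linarith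
    set J : Set ℝ := Set.Icc x1 x3 ∩ φ0 ⁻¹' Set.Iic (c + δ0) with hJ_def
    have hJcomp : IsCompact J :=
      isCompact_Icc.inter_right (isClosed_Iic.preimage hφ0c)
    clear_value J
    have hJmem : ∀ x, x ∈ J ↔ x ∈ Set.Icc x1 x3 ∧ φ0 x ≤ c + δ0 := by
      intro x; rw [hJ_def]; rfl
    have hJab : J ⊆ Set.Ioo a b := by
      intro x hxJ
      obtain ⟨hxI, hφx⟩ := (hJmem x).1 hxJ
      have hlt1 : φ0 x < φ0 x1 := by rw [hδ0_def] at hφx; linarith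
      have hne1 : x ≠ x1 := fun h => by rw [h] at hlt1; exact lt_irrefl _ hlt1
      have hne3 : x ≠ x3 := fun h => by rw [h, ← hφ013] at hlt1; exact lt_irrefl _ hlt1
      obtain ⟨hl, hr⟩ := hxI
      exact ⟨hx1.1.trans_le (lt_of_le_of_ne hl (Ne.symm hne1)).le,
        lt_of_le_of_lt (lt_of_le_of_ne hr hne3).le hx3.2⟩
    have hψlsc : LowerSemicontinuous (fun x => f x + (-(s * x) - c)) :=
      hf.add ((continuous_const.mul continuous_id').neg.sub continuous_const).lowerSemicontinuous
    have hψpos : ∀ x ∈ J, 0 < f x + (-(s * x) - c) := by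
      intro x hx
      have h1 : g x < f x := hfg x (hJab hx)
      have h2 : c ≤ φ0 x := hglob x
      rw [hφ0] at h2
      linarith
    obtain ⟨δ1, hδ1, hδ1le⟩ := lsc_pos_compact hψlsc hJcomp hψpos
    obtain ⟨δ, hδ_def⟩ : ∃ δ : ℝ, δ = min δ0 δ1 := ⟨_, rfl⟩
    have hδ : 0 < δ := by rw [hδ_def]; exact lt_min hδ0 hδ1
    have hδa : δ ≤ δ0 := by rw [hδ_def]; exact min_le_left _ _
    have hδb : δ ≤ δ1 := by rw [hδ_def]; exact min_le_right _ _
    have hLconv : ConvexOn ℝ Set.univ (fun x : ℝ => s * x + c + δ) := by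
      refine ⟨convex_univ, fun x _ y _ p q hp hq hpq => le_of_eq ?_⟩
      simp only [smul_eq_mul]
      linear_combination (-(c + δ)) * hpq
    have hhconv : ConvexOn ℝ Set.univ (fun x => max (g x) (s * x + c + δ)) := hg.sup hLconv
    have hhf : ∀ x, max (g x) (s * x + c + δ) ≤ f x := by
      intro x
      by_cases hx : s * x + c + δ ≤ g x
      · exact max_le (hgf x) (hx.trans (hgf x))
      · push_neg at hx
        have hφx : φ0 x < c + δ := by rw [hφ0]; linarith
        have hφx0 : φ0 x ≤ c + δ0 := by linarith
        have hxI : x ∈ Set.Icc x1 x3 := by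
          by_contra hxI
          have h2 := houtside x hxI
          rw [hδ0_def] at hφx0
          linarith
        have hxJ : x ∈ J := (hJmem x).2 ⟨hxI, hφx0⟩
        have h3 := hδ1le x hxJ
        exact max_le (hgf x) (by linarith)
    have hcontra : max (g w) (s * w + c + δ) ≤ g w :=
      hmax (fun x => max (g x) (s * x + c + δ)) hhconv hhf w
    have h4 : s * w + c + δ ≤ g w := le_trans (le_max_right _ _) hcontra
    have h5 : c = g w - s * w := by rw [hc, hφ0]
    linarith
  · push_neg at H
    have heq : ∀ u ∈ Set.Ioo a b, ∀ v ∈ Set.Ioo a b, ∀ w ∈ Set.Ioo a b,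
        u < v → v < w → (w - u) * g v = (w - v) * g u + (v - u) * g w := by
      intro u hu v hv w hw huv hvw
      exact le_antisymm (chord_le hg huv hvw) (H u hu v hv w hw huv hvw)
    obtain ⟨p, hp_def⟩ : ∃ p : ℝ, p = a + (b - a)/3 := ⟨_, rfl⟩
    obtain ⟨q, hq_def⟩ : ∃ q : ℝ, q = b - (b - a)/3 := ⟨_, rfl⟩
    have hpq : p < q := by rw [hp_def, hq_def]; linarith
    have hpab : p ∈ Set.Ioo a b := by rw [hp_def, Set.mem_Ioo]; constructor <;> linarith
    have hqab : q ∈ Set.Ioo a b := by rw [hq_def, Set.mem_Ioo]; constructor <;> linarith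
    have hqp : q - p ≠ 0 := by intro h; linarith [sub_eq_zero.1 h]
    refine ⟨g p - (g q - g p)/(q - p) * p, (g q - g p)/(q - p), fun x hx => ?_⟩
    rcases lt_trichotomy x p with hxp | hxp | hxp
    · have h1 := heq x hx p hpab q hqab hxp hpq
      field_simp
      linarith
    · rw [hxp]; ring
    · rcases lt_trichotomy x q with hxq | hxq | hxq
      · have h1 := heq p hpab x hx q hqab hxp hxq
        field_simp
        linarith
      · rw [hxq]; field_simp; ring
      · have h1 := heq p hpab q hqab x hx hpq hxq
        field_simp
        linarith
end

section
/- Let f : ℝ → ℝ be continuous and let g : ℝ → ℝ be the convex hull (largest convex minorant) of f. Fix y ∈ ℝ and define, in the extended reals, X(y) = sup{x ∈ ℝ : x ≤ y and g(x) = f(x)} (with sup ∅ = −∞) and Z(y) = inf{z ∈ ℝ : z ≥ y and g(z) = f(z)} (with inf ∅ = +∞). If x, z ∈ ℝ with x < y < z and f(k) > f(x) + ((f(z) − f(x))/(z − x))·(k − x) for every k ∈ (x,z), then X(y) ≤ x and Z(y) ≥ z. -/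
open MeasureTheory Set Filter Topology

theorem stmt1 (f g : ℝ → ℝ) (hf : Continuous f)
    (hg : ConvexOn ℝ Set.univ g) (hgf : ∀ x, g x ≤ f x)
    (hmax : ∀ h : ℝ → ℝ, ConvexOn ℝ Set.univ h → (∀ x, h x ≤ f x) → ∀ x, h x ≤ g x)
    (y x z : ℝ) (hxy : x < y) (hyz : y < z)
    (hline : ∀ k ∈ Set.Ioo x z, f x + (f z - f x) / (z - x) * (k - x) < f k) :
    sSup ((fun t : ℝ => (t : EReal)) '' {t : ℝ | t ≤ y ∧ g t = f t}) ≤ (x : EReal) ∧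
    (z : EReal) ≤ sInf ((fun t : ℝ => (t : EReal)) '' {t : ℝ | y ≤ t ∧ g t = f t}) := by
  have hxz : x < z := hxy.trans hyz
  have hlt : ∀ t ∈ Set.Ioo x z, g t < f t := by
    intro t ht
    have ha : (0:ℝ) ≤ (z - t) / (z - x) := by
      apply div_nonneg <;> linarith [ht.2]
    have hb : (0:ℝ) ≤ (t - x) / (z - x) := by
      apply div_nonneg <;> linarith [ht.1]
    have hne : z - x ≠ 0 := by linarith
    have hab : (z - t) / (z - x) + (t - x) / (z - x) = 1 := by
      field_simp [hne]
      ring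
    have hcomb : ((z - t) / (z - x)) • x + ((t - x) / (z - x)) • z = t := by
      rw [smul_eq_mul, smul_eq_mul, div_mul_eq_mul_div, div_mul_eq_mul_div, ← add_div, div_eq_iff hne]
      ring
    have h1 := hg.2 (Set.mem_univ x) (Set.mem_univ z) ha hb hab
    rw [hcomb] at h1
    have h2 : ((z - t) / (z - x)) • g x + ((t - x) / (z - x)) • g z ≤
        ((z - t) / (z - x)) * f x + ((t - x) / (z - x)) * f z := by
      simp only [smul_eq_mul]
      gcongr <;> [exact hgf x; exact hgf z]
    have h3 : ((z - t) / (z - x)) * f x + ((t - x) / (z - x)) * f z =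
        f x + (f z - f x) / (z - x) * (t - x) := by
      field_simp [hne]
      ring
    calc g t ≤ _ := h1
      _ ≤ _ := h2
      _ = _ := h3
      _ < f t := hline t ht
  constructor
  · apply sSup_le
    rintro _ ⟨t, ⟨hty, htg⟩, rfl⟩
    simp only [EReal.coe_le_coe_iff]
    by_contra hxt
    push_neg at hxt
    exact absurd htg (ne_of_lt (hlt t ⟨hxt, hty.trans_lt hyz⟩))
  · apply le_sInf
    rintro _ ⟨t, ⟨hty, htg⟩, rfl⟩
    simp only [EReal.coe_le_coe_iff]
    by_contra htz
    push_neg at htz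
    exact absurd htg (ne_of_lt (hlt t ⟨hxy.trans_le hty, htz⟩))
end

section
/- For every u ∈ (0,1), φ(u) = (ℰ_u^c)'(G(u)−) = (ℰ_u^c)'(S(u)−), where g'(k−) denotes the left derivative of the convex function g at k. -/
open MeasureTheory Set Filter Topology

namespace S7

lemma affine_convexOn (a b : ℝ) : ConvexOn ℝ univ (fun x => a * x + b) := by
  refine ⟨convex_univ, fun x _ y _ p q hp hq hpq => ?_⟩
  simp only [smul_eq_mul]
  have hq1 : q = 1 - p := by linarith
  subst hq1
  apply le_of_eq
  ring

lemma max_convexOn {f g : ℝ → ℝ} (hf : ConvexOn ℝ univ f) (hg : ConvexOn ℝ univ g) :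
    ConvexOn ℝ univ (fun x => max (f x) (g x)) := by
  have := hf.sup hg
  exact this

variable {f : ℝ → ℝ}

/-- left slopes at a point -/
noncomputable def Lam (f : ℝ → ℝ) (x : ℝ) : ℝ := sSup (slope f x '' Iio x)

lemma slope_eq (f : ℝ → ℝ) (x y : ℝ) : slope f x y = (f y - f x) / (y - x) := slope_def_field f x y

lemma slope_monoOn (hf : ConvexOn ℝ univ f) (x : ℝ) : MonotoneOn (slope f x) (Iio x) := by
  intro a ha b hb hab
  rw [slope_eq, slope_eq]
  exact hf.secant_mono trivial trivial trivial (ne_of_lt ha) (ne_of_lt hb) hab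

lemma slope_le_slope_right (hf : ConvexOn ℝ univ f) {x y z : ℝ} (hy : y < x) (hz : x < z) :
    slope f x y ≤ slope f x z := by
  rw [slope_eq, slope_eq]
  exact hf.secant_mono trivial trivial trivial (ne_of_lt hy) (ne_of_gt hz) (le_of_lt (hy.trans hz))

lemma bddAbove_lslopes (hf : ConvexOn ℝ univ f) (x : ℝ) : BddAbove (slope f x '' Iio x) := by
  refine ⟨slope f x (x + 1), ?_⟩
  rintro _ ⟨y, hy, rfl⟩
  exact slope_le_slope_right hf hy (by linarith)

lemma lslopes_nonempty (f : ℝ → ℝ) (x : ℝ) : (slope f x '' Iio x).Nonempty :=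
  ⟨_, mem_image_of_mem _ (show x - 1 ∈ Iio x by simp)⟩

lemma lslope_le_Lam (hf : ConvexOn ℝ univ f) {x y : ℝ} (hy : y < x) :
    (f y - f x) / (y - x) ≤ Lam f x := by
  rw [← slope_eq]
  exact le_csSup (bddAbove_lslopes hf x) (mem_image_of_mem _ hy)

lemma Lam_le_rslope (hf : ConvexOn ℝ univ f) {x z : ℝ} (hz : x < z) :
    Lam f x ≤ (f z - f x) / (z - x) := by
  rw [← slope_eq]
  refine csSup_le (lslopes_nonempty f x) ?_
  rintro _ ⟨y, hy, rfl⟩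
  exact slope_le_slope_right hf hy hz

/-- Λ is a subgradient slope at x -/
lemma Lam_subgrad (hf : ConvexOn ℝ univ f) (x : ℝ) :
    ∀ y, f x + Lam f x * (y - x) ≤ f y := by
  intro y
  rcases lt_trichotomy y x with h | h | h
  · have := lslope_le_Lam hf h
    have hyx : y - x < 0 := by linarith
    rw [div_le_iff_of_neg hyx] at this
    linarith
  · simp [h]
  · have := Lam_le_rslope hf h
    have hyx : 0 < y - x := by linarith
    rw [le_div_iff₀ hyx] at this
    linarith

lemma hasDerivWithinAt_left (hf : ConvexOn ℝ univ f) (x : ℝ) :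
    HasDerivWithinAt f (Lam f x) (Iio x) x := by
  rw [hasDerivWithinAt_iff_tendsto_slope]
  have h1 : Iio x \ {x} = Iio x := diff_singleton_eq_self (by simp)
  rw [h1]
  exact (slope_monoOn hf x).tendsto_nhdsLT (bddAbove_lslopes hf x)

lemma derivWithin_Iio_eq (hf : ConvexOn ℝ univ f) (x : ℝ) :
    derivWithin f (Iio x) x = Lam f x := by
  refine (hasDerivWithinAt_left hf x).derivWithin ?_
  refine uniqueDiffWithinAt_convex (convex_Iio x) ⟨x - 1, ?_⟩ ?_
  · rw [interior_Iio]; exact (show x - 1 ∈ Iio x by simp)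
  · rw [closure_Iio]; exact self_mem_Iic

/-- sInf of the subgradient set equals Λ -/
lemma sInf_subgrad_eq_Lam (hf : ConvexOn ℝ univ f) (x : ℝ) :
    sInf {ψ : ℝ | ∀ y, f x + ψ * (y - x) ≤ f y} = Lam f x := by
  refine IsLeast.csInf_eq ⟨Lam_subgrad hf x, ?_⟩
  intro ψ hψ
  refine csSup_le (lslopes_nonempty f x) ?_
  rintro _ ⟨y, hy, rfl⟩
  rw [slope_eq]
  have hy' : y < x := hy
  have := hψ y
  have hyx : y - x < 0 := by linarith
  rw [div_le_iff_of_neg hyx]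
  linarith

/-- If f lies above the line through (g, f g) with slope ψ, with equality at g and s, g < s,
then Λ f s = ψ. -/
lemma Lam_eq_of_affine_touch (hf : ConvexOn ℝ univ f) {g s ψ : ℝ} (hgs : g < s)
    (hsub : ∀ y, f g + ψ * (y - g) ≤ f y) (hs : f s = f g + ψ * (s - g)) :
    Lam f s = ψ := by
  refine IsGreatest.csSup_eq ⟨?_, ?_⟩
  · refine ⟨g, hgs, ?_⟩
    rw [slope_eq, hs]
    have hne : g - s ≠ 0 := by linarith
    field_simp
    ring
  · rintro _ ⟨y, hy, rfl⟩
    rw [slope_eq]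
    have hy' : y < s := hy
    have h1 := hsub y
    have hys : y - s < 0 := by linarith
    rw [div_le_iff_of_neg hys, hs]
    nlinarith [h1]



lemma conv_cont (hf : ConvexOn ℝ univ f) : Continuous f := by
  rw [continuous_iff_continuousAt]
  intro x
  set C := max |f x - f (x - 1)| |f (x + 1) - f x| with hC
  have key : ∀ y ∈ Ioo (x - 1) (x + 1), |f y - f x| ≤ C * |y - x| := by
    intro y hy
    rcases lt_trichotomy y x with h | h | h
    · -- x - 1 < y < x
      have h1 : (f (x-1) - f x) / ((x-1) - x) ≤ (f y - f x) / (y - x) :=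
        hf.secant_mono trivial trivial trivial (by linarith) (by linarith) (le_of_lt hy.1)
      have h2 : (f y - f x) / (y - x) ≤ (f (x+1) - f x) / ((x+1) - x) :=
        hf.secant_mono trivial trivial trivial (by linarith) (by linarith) (by linarith)
      have hyx : y - x < 0 := by linarith
      have e1 : (f (x-1) - f x) / ((x-1) - x) = f x - f (x-1) := by ring_nf
      have e2 : (f (x+1) - f x) / ((x+1) - x) = f (x+1) - f x := by ring_nf
      rw [e1] at h1; rw [e2] at h2
      rw [div_le_iff_of_neg hyx] at h2
      rw [le_div_iff_of_neg hyx] at h1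
      rw [abs_sub_le_iff]
      have hay : |y - x| = x - y := by rw [abs_of_neg hyx]; ring
      have hc1 : f x - f (x-1) ≤ C := le_trans (le_abs_self _) (le_max_left _ _)
      have hc1' : -C ≤ f x - f (x-1) := by
        have := le_trans (neg_le_abs (f x - f (x-1))) (le_max_left |f x - f (x - 1)| |f (x + 1) - f x|)
        linarith
      have hc2 : f (x+1) - f x ≤ C := le_trans (le_abs_self _) (le_max_right _ _)
      have hc2' : -C ≤ f (x+1) - f x := by
        have := le_trans (neg_le_abs (f (x+1) - f x)) (le_max_right |f x - f (x - 1)| |f (x + 1) - f x|)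
        linarith
      constructor <;> nlinarith
    · rw [h]
      simp
    · have h1 : (f x - f (x-1)) ≤ (f y - f x) / (y - x) := by
        have := hf.secant_mono trivial trivial trivial (by linarith : x - 1 ≠ x) (by linarith : y ≠ x) (by linarith)
        have e1 : (f (x-1) - f x) / ((x-1) - x) = f x - f (x-1) := by ring_nf
        rw [e1] at this; exact this
      have h2 : (f y - f x) / (y - x) ≤ f (x+1) - f x := by
        have := hf.secant_mono trivial trivial trivial (by linarith : y ≠ x) (by linarith : x + 1 ≠ x) (by linarith [hy.2])
        have e2 : (f (x+1) - f x) / ((x+1) - x) = f (x+1) - f x := by ring_nf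
        rw [e2] at this; exact this
      have hyx : 0 < y - x := by linarith
      rw [le_div_iff₀ hyx] at h1
      rw [div_le_iff₀ hyx] at h2
      rw [abs_sub_le_iff]
      have hay : |y - x| = y - x := abs_of_pos hyx
      have hc1 : f x - f (x-1) ≤ C := le_trans (le_abs_self _) (le_max_left _ _)
      have hc1' : -(f x - f (x-1)) ≤ C := le_trans (neg_le_abs _) (le_max_left _ _)
      have hc2 : f (x+1) - f x ≤ C := le_trans (le_abs_self _) (le_max_right _ _)
      have hc2' : -(f (x+1) - f x) ≤ C := le_trans (neg_le_abs _) (le_max_right _ _)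
      constructor <;> nlinarith
  have habs : Tendsto (fun y => |f y - f x|) (𝓝 x) (𝓝 0) := by
    have hb : Tendsto (fun y => C * |y - x|) (𝓝 x) (𝓝 0) := by
      have : Tendsto (fun y : ℝ => y - x) (𝓝 x) (𝓝 0) := by
        have h0 := ((continuous_id (X := ℝ)).sub (continuous_const (y := x))).tendsto x
        simpa [Pi.sub_def] using h0
      simpa using (this.abs.const_mul C)
    refine squeeze_zero' ?_ ?_ hb
    · exact Eventually.of_forall (fun y => abs_nonneg _)
    · filter_upwards [Ioo_mem_nhds (by linarith : x - 1 < x) (by linarith : x < x + 1)] with y hy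
      exact key y hy
  have : Tendsto f (𝓝 x) (𝓝 (f x)) := by
    rw [tendsto_iff_dist_tendsto_zero]
    simpa [Real.dist_eq] using habs
  exact this


end S7

namespace S7
variable {f E : ℝ → ℝ}

/-- The raising lemma: if ℓ is a global affine minorant of f touching at x₀, then for every ε>0
there is a point where f is ε-close to ℓ and E is ε-close to f. -/
lemma raise (hf : ConvexOn ℝ univ f)
    (hfE : ∀ x, f x ≤ E x)
    (hmax : ∀ h : ℝ → ℝ, ConvexOn ℝ univ h → (∀ k, h k ≤ E k) → ∀ k, h k ≤ f k)
    {σ c x₀ : ℝ} (hsub : ∀ x, σ * x + c ≤ f x) (hx₀ : σ * x₀ + c = f x₀)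
    {ε : ℝ} (hε : 0 < ε) :
    ∃ x, f x < σ * x + c + ε ∧ E x < f x + ε := by
  by_contra hcon
  push_neg at hcon
  set h : ℝ → ℝ := fun x => max (f x) (σ * x + (c + ε)) with hh
  have hconv : ConvexOn ℝ univ h := max_convexOn hf (affine_convexOn σ (c + ε))
  have hle : ∀ k, h k ≤ E k := by
    intro k
    refine max_le (hfE k) ?_
    by_cases hk : f k < σ * k + c + ε
    · have := hcon k hk
      have h2 := hsub k
      linarith
    · push_neg at hk
      have := hfE k
      linarith
  have := hmax h hconv hle x₀
  have h2 : σ * x₀ + (c + ε) ≤ h x₀ := le_max_right _ _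
  have h3 : h x₀ ≤ f x₀ := this
  linarith

/-- no kink where f < E -/
lemma no_kink (hf : ConvexOn ℝ univ f) (hfc : Continuous f) (hEc : Continuous E)
    (hfE : ∀ x, f x ≤ E x)
    (hmax : ∀ h : ℝ → ℝ, ConvexOn ℝ univ h → (∀ k, h k ≤ E k) → ∀ k, h k ≤ f k)
    {y ψ1 ψ2 : ℝ} (hy : f y < E y)
    (h1 : ∀ z, z < y → f y + ψ1 * (z - y) ≤ f z)
    (h2 : ∀ z, y < z → f y + ψ2 * (z - y) ≤ f z)
    (h12 : ψ1 < ψ2) : False := by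
  set ψm := (ψ1 + ψ2) / 2 with hψm
  set κ := (ψ2 - ψ1) / 2 with hκ
  have hκpos : 0 < κ := by rw [hκ]; linarith
  set c := f y - ψm * y with hc
  have hsub : ∀ x, ψm * x + c ≤ f x := by
    intro x
    rcases lt_trichotomy x y with h | h | h
    · have := h1 x h
      nlinarith
    · rw [h, hc]; linarith
    · have := h2 x h
      nlinarith
  have hcoer : ∀ x, κ * |x - y| ≤ f x - (ψm * x + c) := by
    intro x
    rcases le_or_gt x y with h | h
    · rcases eq_or_lt_of_le h with rfl | h
      · simp only [sub_self, abs_zero, mul_zero]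
        linarith [hsub x]
      · have := h1 x h
        rw [abs_of_nonpos (by linarith)]
        rw [hc, hψm, hκ]
        nlinarith
    · have := h2 x h
      rw [abs_of_pos (by linarith)]
      rw [hc, hψm, hκ]
      nlinarith
  set η := E y - f y with hη
  have hηpos : 0 < η := by rw [hη]; linarith
  -- continuity of E - f at y: get δ
  have hcont : ContinuousAt (fun x => E x - f x) y := ((hEc.sub hfc).continuousAt)
  rw [Metric.continuousAt_iff] at hcont
  obtain ⟨δ, hδpos, hδ⟩ := hcont (η / 2) (by linarith)
  set ε := min (κ * δ) (η / 2) / 2 with hε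
  have hεpos : 0 < ε := by
    rw [hε]
    have : 0 < κ * δ := mul_pos hκpos hδpos
    positivity
  obtain ⟨x, hx1, hx2⟩ := raise hf hfE hmax (σ := ψm) (c := c) (x₀ := y) hsub (by rw [hc]; ring) hεpos
  rcases lt_or_ge (dist x y) δ with h | h
  · have := hδ h
    rw [Real.dist_eq] at this
    have h3 : E x - f x > η / 2 := by
      have := abs_lt.mp this
      linarith
    have h4 : ε ≤ η / 2 / 2 := by
      rw [hε]
      have := min_le_right (κ * δ) (η / 2)
      linarith
    linarith
  · have h5 := hcoer x
    rw [Real.dist_eq] at h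
    have h6 : κ * δ ≤ κ * |x - y| := by
      apply mul_le_mul_of_nonneg_left h (le_of_lt hκpos)
    have h7 : ε ≤ κ * δ / 2 := by
      rw [hε]
      have := min_le_left (κ * δ) (η / 2)
      linarith
    have : 0 < κ * δ := mul_pos hκpos hδpos
    linarith

/-- the affinity engine -/
lemma engine {f E : ℝ → ℝ} (hf : ConvexOn ℝ univ f) (hfc : Continuous f) (hEc : Continuous E)
    (hfE : ∀ x, f x ≤ E x)
    (hmax : ∀ h : ℝ → ℝ, ConvexOn ℝ univ h → (∀ k, h k ≤ E k) → ∀ k, h k ≤ f k)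
    {a b : ℝ} (hab : a < b)
    (hstrict : ∀ x, a ≤ x → x < b → f x < E x) :
    ∀ x ∈ Icc a b, f x = f a + (f b - f a) / (b - a) * (x - a) := by
  by_contra hcon
  push_neg at hcon
  obtain ⟨x₀, hx₀m, hx₀⟩ := hcon
  set σ := (f b - f a) / (b - a) with hσdef
  have hba : (0:ℝ) < b - a := by linarith
  have hfb : f b = f a + σ * (b - a) := by rw [hσdef]; field_simp; ring
  have hchord : ∀ x ∈ Icc a b, f x ≤ f a + σ * (x - a) := by
    intro x hx
    have hp : 0 ≤ (b - x)/(b-a) := div_nonneg (by linarith [hx.2]) hba.le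
    have hq : 0 ≤ (x - a)/(b-a) := div_nonneg (by linarith [hx.1]) hba.le
    have hpq : (b - x)/(b-a) + (x - a)/(b-a) = 1 := by field_simp; ring
    have h := hf.2 (mem_univ a) (mem_univ b) hp hq hpq
    have he : ((b - x)/(b-a)) • a + ((x - a)/(b-a)) • b = x := by
      simp only [smul_eq_mul]
      field_simp
      ring
    rw [he] at h
    simp only [smul_eq_mul] at h
    calc f x ≤ (b-x)/(b-a) * f a + (x-a)/(b-a) * f b := h
    _ = f a + σ * (x - a) := by rw [hσdef]; field_simp; ring
  have hx₀lt : f x₀ < f a + σ * (x₀ - a) := lt_of_le_of_ne (hchord _ hx₀m) hx₀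
  set M : ℝ → ℝ := fun x => f x - (f a + σ * (x - a)) with hM
  have hMa : M a = 0 := by simp [hM]
  have hMb : M b = 0 := by simp only [hM]; rw [hfb]; ring
  have hMcont : ContinuousOn M (Icc a b) :=
    (hfc.sub (continuous_const.add (continuous_const.mul (continuous_id.sub continuous_const)))).continuousOn
  obtain ⟨z, hzm, hzmin⟩ := isCompact_Icc.exists_isMinOn ⟨a, left_mem_Icc.2 hab.le⟩ hMcont
  have hMzneg : M z < 0 := lt_of_le_of_lt (hzmin hx₀m) (by simp only [hM]; linarith)
  have hza : a < z := lt_of_le_of_ne hzm.1 (by rintro rfl; rw [hMa] at hMzneg; linarith)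
  have hzb : z < b := lt_of_le_of_ne hzm.2 (by rintro rfl; rw [hMb] at hMzneg; linarith)
  set ρ := -(M z) with hρ
  have hρpos : 0 < ρ := by rw [hρ]; linarith
  set ℓ : ℝ → ℝ := fun x => σ * x + (f z - σ * z) with hℓ
  have hℓz : ℓ z = f z := by simp [hℓ]
  have hℓa : ℓ a + ρ = f a := by simp only [hℓ, hρ, hM]; ring
  have hℓb : ℓ b + ρ = f b := by simp only [hℓ, hρ, hM]; rw [hfb]; ring
  -- margin outside [a,b]
  have houts : ∀ x, x < a ∨ b < x → ℓ x + ρ ≤ f x := by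
    intro x hx
    rcases hx with hx | hx
    · have h1 : (f a - f x)/(a - x) ≤ (f z - f a)/(z - a) :=
        hf.slope_mono_adjacent (mem_univ x) (mem_univ z) hx hza
      have h2 : (f z - f a)/(z - a) ≤ σ := by
        rw [div_le_iff₀ (by linarith : (0:ℝ) < z - a)]
        have : f z - f a = σ * (z - a) - ρ := by
          simp only [hρ, hM]; ring
        rw [this]; linarith
      have h3 : (f a - f x)/(a - x) ≤ σ := le_trans h1 h2
      rw [div_le_iff₀ (by linarith : (0:ℝ) < a - x)] at h3
      have : ℓ x + ρ = f a + σ * (x - a) := by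
        rw [← hℓa]; simp only [hℓ]; ring
      rw [this]; linarith
    · have h1 : (f b - f z)/(b - z) ≤ (f x - f b)/(x - b) :=
        hf.slope_mono_adjacent (mem_univ z) (mem_univ x) hzb hx
      have h2 : σ ≤ (f b - f z)/(b - z) := by
        rw [le_div_iff₀ (by linarith : (0:ℝ) < b - z)]
        have : f b - f z = σ * (b - z) + ρ := by
          simp only [hρ, hM]; rw [hfb]; ring
        rw [this]; linarith
      have h3 : σ ≤ (f x - f b)/(x - b) := le_trans h2 h1
      rw [le_div_iff₀ (by linarith : (0:ℝ) < x - b)] at h3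
      have : ℓ x + ρ = f b + σ * (x - b) := by
        rw [← hℓb]; simp only [hℓ]; ring
      rw [this]; linarith
  -- global subtangent
  have hsub : ∀ x, σ * x + (f z - σ * z) ≤ f x := by
    intro x
    rcases le_or_gt x b with hxb | hxb
    · rcases le_or_gt a x with hax | hax
      · have h := hzmin (⟨hax, hxb⟩ : x ∈ Icc a b)
        simp only [mem_setOf_eq, hM] at h
        linarith
      · have := houts x (Or.inl hax)
        simp only [hℓ] at this
        linarith
    · have := houts x (Or.inr hxb)
      simp only [hℓ] at this
      linarith
  -- compact positivity of the obstruction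
  set M2 : ℝ → ℝ := fun x => max (f x - ℓ x) (E x - f x) with hM2
  have hM2cont : ContinuousOn M2 (Icc a b) := by
    have hℓc : Continuous ℓ := by
      rw [hℓ]
      exact (continuous_const.mul continuous_id).add continuous_const
    exact ((hfc.sub hℓc).max (hEc.sub hfc)).continuousOn
  obtain ⟨w, hwm, hwmin⟩ := isCompact_Icc.exists_isMinOn ⟨a, left_mem_Icc.2 hab.le⟩ hM2cont
  clear_value M ρ ℓ M2
  have hM2w : 0 < M2 w := by
    simp only [hM2]
    rcases lt_or_eq_of_le hwm.2 with hwb | hwb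
    · exact lt_of_lt_of_le (by linarith [hstrict w hwm.1 hwb]) (le_max_right _ _)
    · refine lt_of_lt_of_le hρpos (le_trans ?_ (le_max_left _ _))
      rw [hwb]
      linarith [hℓb]
  obtain ⟨ε, hεpos, hεM2, hερ⟩ : ∃ ε : ℝ, 0 < ε ∧ ε < M2 w ∧ ε < ρ := by
    refine ⟨min (M2 w) ρ / 2, ?_, ?_, ?_⟩
    · have := lt_min hM2w hρpos
      positivity
    · have h1 := min_le_left (M2 w) ρ
      linarith
    · have h2 := min_le_right (M2 w) ρ
      linarith
  obtain ⟨x, hx1, hx2⟩ := raise hf hfE hmax (σ := σ) (c := f z - σ * z) (x₀ := z) hsub (by simp only [hℓ] at hℓz; linarith [hℓz]) hεpos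
  rcases le_or_gt x b with hxb | hxb
  · rcases le_or_gt a x with hax | hax
    · have hmem : x ∈ Icc a b := ⟨hax, hxb⟩
      have h4 := hwmin hmem
      simp only [mem_setOf_eq] at h4
      have h5 : M2 x < ε := by
        simp only [hM2, hℓ]
        apply max_lt
        · linarith
        · linarith
      linarith
    · have := houts x (Or.inl hax)
      simp only [hℓ] at this hx1
      linarith
  · have := houts x (Or.inr hxb)
    simp only [hℓ] at this hx1
    linarith

/-- contact exists at or to the right of g -/
lemma exists_contact {f E : ℝ → ℝ} (hf : ConvexOn ℝ univ f) (hfc : Continuous f)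
    (hEc : Continuous E) (hfE : ∀ x, f x ≤ E x)
    (hmax : ∀ h : ℝ → ℝ, ConvexOn ℝ univ h → (∀ k, h k ≤ E k) → ∀ k, h k ≤ f k)
    {u g cA : ℝ} (hu1 : u < 1)
    (hAle : ∀ x, (1 - u) * x + cA ≤ E x)
    (hE0 : ∀ x, (0:ℝ) ≤ E x)
    (hAg : (1 - u) * g + cA ≤ 0)
    (htd : Tendsto (fun x => E x - ((1 - u) * x + cA)) atTop (𝓝 0)) :
    ∃ z, g ≤ z ∧ f z = E z := by
  by_contra hno
  push_neg at hno
  have hstrict : ∀ z, g ≤ z → f z < E z := fun z hz => lt_of_le_of_ne (hfE z) (hno z hz)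
  have hfA : ∀ x, (1 - u) * x + cA ≤ f x := hmax _ (affine_convexOn _ _) hAle
  have hf0 : ∀ x, (0:ℝ) ≤ f x := hmax (fun _ => 0) (convexOn_const 0 convex_univ) hE0
  by_cases haff : ∀ X, g < X → ∀ x ∈ Icc g X, f x = f g + (f X - f g) / (X - g) * (x - g)
  · -- f is affine on [g, ∞)
    set σ0 := f (g + 1) - f g with hσ0
    have key : ∀ x, g ≤ x → f x = f g + σ0 * (x - g) := by
      intro x hx
      rcases eq_or_lt_of_le hx with rfl | hx
      · simp
      · set X := max x (g + 1) with hX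
        have hgX : g < X := lt_of_lt_of_le (by linarith : g < g + 1) (le_max_right _ _)
        have h1 := haff X hgX x ⟨hx.le, le_max_left _ _⟩
        have h2 := haff X hgX (g + 1) ⟨by linarith, le_max_right _ _⟩
        have hσX : (f X - f g) / (X - g) = σ0 := by
          rw [hσ0]
          have : g + 1 - g = 1 := by ring
          rw [this] at h2
          linarith [h2]
        rw [hσX] at h1
        exact h1
    have hσge : 1 - u ≤ σ0 := by
      by_contra hlt
      push_neg at hlt
      set d := (1 - u) - σ0 with hd
      have hdpos : 0 < d := by rw [hd]; linarith
      set N := f g - ((1 - u) * g + cA) + 1 with hN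
      have hNpos : 0 < N := by
        have := hfA g
        rw [hN]; linarith
      set x := g + N / d with hx
      have hxg : g ≤ x := by
        rw [hx]
        have : 0 < N / d := div_pos hNpos hdpos
        linarith
      have h1 := hfA x
      have h2 := key x hxg
      rw [h2] at h1
      have hxsub : x - g = N / d := by rw [hx]; ring
      have : (1 - u) * x + cA - f g - σ0 * (x - g) = 1 := by
        have hd0 : d ≠ 0 := ne_of_gt hdpos
        rw [hxsub, hx]
        field_simp
        rw [hN, hd]
        ring
      linarith
    have hσle : σ0 ≤ 1 - u := by
      by_contra hgt
      push_neg at hgt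
      set t := σ0 - (1 - u) with ht
      have htpos : 0 < t := by rw [ht]; linarith
      have hev1 : ∀ᶠ x in atTop, E x - ((1 - u) * x + cA) < 1 :=
        htd.eventually_lt_const one_pos
      have hev2 : ∀ᶠ x : ℝ in atTop, g + 1 / t ≤ x := eventually_ge_atTop _
      obtain ⟨x, hx1, hx2⟩ := (hev1.and hev2).exists
      have hxg : g ≤ x := by
        have : 0 < 1 / t := by positivity
        linarith
      have h2 := key x hxg
      have h3 := hfA g
      have h4 : t * (x - g) ≥ 1 := by
        have : x - g ≥ 1 / t := by linarith
        calc t * (x - g) ≥ t * (1 / t) := by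
              apply mul_le_mul_of_nonneg_left this htpos.le
        _ = 1 := by field_simp
      have h5 : f x - ((1 - u) * x + cA) ≥ 1 := by
        rw [h2]
        have : f g + σ0 * (x - g) - ((1 - u) * x + cA)
            = (f g - ((1 - u) * g + cA)) + t * (x - g) := by
          rw [ht]; ring
        rw [this]
        linarith
      have h6 := hfE x
      linarith
    have hσ : σ0 = 1 - u := le_antisymm hσle hσge
    -- c₀ = 0
    have hc0le : f g - ((1 - u) * g + cA) ≤ 0 := by
      refine ge_of_tendsto htd ?_
      filter_upwards [eventually_ge_atTop g] with x hx
      have h2 := key x hx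
      have h6 := hfE x
      rw [hσ] at h2
      have : f x - ((1 - u) * x + cA) = f g - ((1 - u) * g + cA) := by rw [h2]; ring
      linarith
    have hc0ge : 0 ≤ f g - ((1 - u) * g + cA) := by linarith [hfA g]
    have hfg0 : f g = 0 := by
      have h1 : f g = (1 - u) * g + cA := by linarith
      have := hf0 g
      linarith
    -- kink at g
    refine no_kink hf hfc hEc hfE hmax (hstrict g le_rfl) (ψ1 := 0) (ψ2 := 1 - u) ?_ ?_ (by linarith)
    · intro z hz
      rw [hfg0]
      simpa using hf0 z
    · intro z hz
      have := key z hz.le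
      rw [hσ] at this
      linarith [this]
  · push_neg at haff
    obtain ⟨X, hgX, x, hxm, hxne⟩ := haff
    exact hxne (engine hf hfc hEc hfE hmax hgX (fun x h1 h2 => hstrict x h1) x hxm)

/-- full structure in the strict case -/
lemma case2 {f E : ℝ → ℝ} (hf : ConvexOn ℝ univ f) (hfc : Continuous f)
    (hEc : Continuous E) (hfE : ∀ x, f x ≤ E x)
    (hmax : ∀ h : ℝ → ℝ, ConvexOn ℝ univ h → (∀ k, h k ≤ E k) → ∀ k, h k ≤ f k)
    {u g cA : ℝ} (hu1 : u < 1)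
    (hAle : ∀ x, (1 - u) * x + cA ≤ E x)
    (hE0 : ∀ x, (0:ℝ) ≤ E x)
    (hAg : (1 - u) * g + cA ≤ 0)
    (htd : Tendsto (fun x => E x - ((1 - u) * x + cA)) atTop (𝓝 0))
    (hgE : f g < E g) :
    g < sInf {z : ℝ | g ≤ z ∧ f z = E z} ∧
      f (sInf {z : ℝ | g ≤ z ∧ f z = E z}) =
        f g + Lam f g * (sInf {z : ℝ | g ≤ z ∧ f z = E z} - g) := by
  set T := {z : ℝ | g ≤ z ∧ f z = E z} with hT
  have hTne : T.Nonempty := exists_contact hf hfc hEc hfE hmax hu1 hAle hE0 hAg htd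
  have hTbdd : BddBelow T := ⟨g, fun z hz => hz.1⟩
  have hTclosed : IsClosed T := by
    have : T = Ici g ∩ {z | f z = E z} := by
      ext z; simp only [hT, mem_setOf_eq, mem_inter_iff, mem_Ici]
    rw [this]
    exact isClosed_Ici.inter (isClosed_eq hfc hEc)
  set s := sInf T with hs
  have hsT : s ∈ T := hTclosed.csInf_mem hTne hTbdd
  have hgs : g < s := by
    rcases eq_or_lt_of_le hsT.1 with h | h
    · exfalso
      have := hsT.2
      rw [← h] at this
      linarith
    · exact h
  have hstrict : ∀ x, g ≤ x → x < s → f x < E x := by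
    intro x h1 h2
    refine lt_of_le_of_ne (hfE x) ?_
    intro he
    have : s ≤ x := csInf_le hTbdd ⟨h1, he⟩
    linarith
  have haff := engine hf hfc hEc hfE hmax hgs hstrict
  set σ := (f s - f g) / (s - g) with hσ
  have hσΛ : σ ≤ Lam f g := by
    by_contra hgt
    push_neg at hgt
    refine no_kink hf hfc hEc hfE hmax hgE (ψ1 := Lam f g) (ψ2 := σ) ?_ ?_ hgt
    · intro z hz
      exact Lam_subgrad hf g z
    · intro z hz
      rcases le_or_gt z s with hzs | hzs
      · have := haff z ⟨hz.le, hzs⟩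
        linarith [this]
      · have h1 : (f s - f g) / (s - g) ≤ (f z - f g) / (z - g) :=
          hf.secant_mono (mem_univ g) (mem_univ s) (mem_univ z)
            (ne_of_gt hgs) (ne_of_gt (hgs.trans hzs)) hzs.le
        rw [← hσ] at h1
        rw [le_div_iff₀ (by linarith : (0:ℝ) < z - g)] at h1
        linarith
  have hΛσ : Lam f g ≤ σ := Lam_le_rslope hf hgs
  have heq : Lam f g = σ := le_antisymm hΛσ hσΛ
  refine ⟨hgs, ?_⟩
  have := haff s ⟨hgs.le, le_refl s⟩
  rw [heq]
  exact this

end S7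

namespace S7

variable {ρ : MeasureTheory.Measure ℝ} [IsProbabilityMeasure ρ]

lemma int_pp (hint : Integrable (fun x => x) ρ) (k : ℝ) :
    Integrable (fun x => max (k - x) 0) ρ :=
  ((integrable_const k).sub hint).pos_part

lemma P_cont (hint : Integrable (fun x => x) ρ) :
    Continuous (fun k => ∫ x, max (k - x) 0 ∂ρ) := by
  have key : ∀ a b : ℝ, dist (∫ x, max (a - x) 0 ∂ρ) (∫ x, max (b - x) 0 ∂ρ) ≤ 1 * dist a b := by
    intro a b
    rw [Real.dist_eq, Real.dist_eq, one_mul]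
    rw [← integral_sub (int_pp hint a) (int_pp hint b)]
    calc |∫ x, (max (a - x) 0 - max (b - x) 0) ∂ρ|
        ≤ ∫ x, |max (a - x) 0 - max (b - x) 0| ∂ρ := by
          simpa using norm_integral_le_integral_norm (fun x => max (a - x) 0 - max (b - x) 0) (μ := ρ)
      _ ≤ ∫ _x, |a - b| ∂ρ := by
          apply integral_mono ((int_pp hint a).sub (int_pp hint b)).abs (integrable_const _)
          intro x
          calc |max (a - x) 0 - max (b - x) 0| ≤ |(a - x) - (b - x)| := abs_max_sub_max_le_abs _ _ _
          _ = |a - b| := by ring_nf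
      _ = |a - b| := by simp
  exact (LipschitzWith.of_dist_le_mul (K := 1) (by exact_mod_cast key)).continuous

lemma P_ge (hint : Integrable (fun x => x) ρ) (k : ℝ) :
    k - (∫ x, x ∂ρ) ≤ ∫ x, max (k - x) 0 ∂ρ := by
  have h1 : k - (∫ x, x ∂ρ) = ∫ x, (k - x) ∂ρ := by
    rw [integral_sub (integrable_const k) hint]
    simp
  rw [h1]
  exact integral_mono ((integrable_const k).sub hint) (int_pp hint k) (fun x => le_max_left _ _)

lemma P_nonneg (k : ℝ) : (0:ℝ) ≤ ∫ x, max (k - x) 0 ∂ρ :=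
  integral_nonneg (fun x => le_max_right _ _)

lemma P_umono (hint : Integrable (fun x => x) ρ) {g k u : ℝ} (hk : g ≤ k)
    (hu : u ≤ (ρ (Iic g)).toReal) (hu0 : 0 ≤ u) :
    u * (k - g) ≤ (∫ x, max (k - x) 0 ∂ρ) - ∫ x, max (g - x) 0 ∂ρ := by
  rw [← integral_sub (int_pp hint k) (int_pp hint g)]
  have h1 : ∫ x, (Iic g).indicator (fun _ => k - g) x ∂ρ = (ρ (Iic g)).toReal * (k - g) := by
    rw [integral_indicator_const (k - g) measurableSet_Iic]
    simp [mul_comm, measureReal_def]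
  have h2 : (Iic g).indicator (fun _ : ℝ => k - g) ≤ fun x => max (k - x) 0 - max (g - x) 0 := by
    intro x
    by_cases hx : x ≤ g
    · rw [indicator_of_mem (mem_Iic.2 hx)]
      show k - g ≤ max (k - x) 0 - max (g - x) 0
      rw [max_eq_left (by linarith : (0:ℝ) ≤ k - x), max_eq_left (by linarith : (0:ℝ) ≤ g - x)]
      linarith
    · rw [indicator_of_notMem (by simpa using hx)]
      push_neg at hx
      show (0:ℝ) ≤ max (k - x) 0 - max (g - x) 0
      rw [max_eq_right (by linarith : g - x ≤ 0)]
      simpa using le_max_right (k - x) 0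
  calc u * (k - g) ≤ (ρ (Iic g)).toReal * (k - g) := by
        apply mul_le_mul_of_nonneg_right hu (by linarith)
  _ = ∫ x, (Iic g).indicator (fun _ => k - g) x ∂ρ := h1.symm
  _ ≤ _ := integral_mono ((integrable_const _).indicator measurableSet_Iic)
        ((int_pp hint k).sub (int_pp hint g)) h2

lemma P_tendsto (hint : Integrable (fun x => x) ρ) :
    Tendsto (fun k => (∫ x, max (k - x) 0 ∂ρ) - (k - ∫ x, x ∂ρ)) atTop (𝓝 0) := by
  have hrw : ∀ k : ℝ, (∫ x, max (k - x) 0 ∂ρ) - (k - ∫ x, x ∂ρ) = ∫ x, max (x - k) 0 ∂ρ := by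
    intro k
    have h1 : ∀ x : ℝ, max (x - k) 0 = max (k - x) 0 - (k - x) := by
      intro x
      rcases le_total x k with h | h
      · rw [max_eq_right (by linarith : x - k ≤ 0), max_eq_left (by linarith : (0:ℝ) ≤ k - x)]
        ring
      · rw [max_eq_left (by linarith : (0:ℝ) ≤ x - k), max_eq_right (by linarith : k - x ≤ 0)]
        ring
    have h2 : ∫ x, max (x - k) 0 ∂ρ = ∫ x, (max (k - x) 0 - (k - x)) ∂ρ := by
      congr 1
      ext x
      exact h1 x
    have h3 : ∫ x, (max (k - x) 0 - (k - x)) ∂ρ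
        = (∫ x, max (k - x) 0 ∂ρ) - ∫ x, (k - x) ∂ρ :=
      integral_sub (int_pp hint k) ((integrable_const k).sub hint)
    have h4 : ∫ x, (k - x) ∂ρ = k - ∫ x, x ∂ρ := by
      rw [integral_sub (integrable_const k) hint]
      simp
    rw [h2, h3, h4]
  have h0 : Tendsto (fun k => ∫ x, max (x - k) 0 ∂ρ) atTop (𝓝 0) := by
    have h0' : Tendsto (fun k => ∫ x, max (x - k) 0 ∂ρ) atTop (𝓝 (∫ x, (0:ℝ) ∂ρ)) := by
      apply tendsto_integral_filter_of_dominated_convergence (fun x => |x|)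
      · exact Eventually.of_forall (fun k =>
          (((continuous_id.sub continuous_const).max continuous_const).aestronglyMeasurable))
      · filter_upwards [eventually_ge_atTop (0:ℝ)] with k hk
        refine Eventually.of_forall (fun x => ?_)
        rw [Real.norm_eq_abs]
        rcases le_total x k with h | h
        · rw [max_eq_right (by linarith), abs_zero]
          positivity
        · rw [max_eq_left (by linarith), abs_of_nonneg (by linarith)]
          have : 0 ≤ k := hk
          calc x - k ≤ x := by linarith
          _ ≤ |x| := le_abs_self x
      · exact hint.abs
      · refine Eventually.of_forall (fun x => ?_)
        refine tendsto_const_nhds.congr' ?_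
        filter_upwards [eventually_ge_atTop x] with k hk
        show (0:ℝ) = max (x - k) 0
        rw [max_eq_right (by linarith)]
    simpa using h0'
  exact Tendsto.congr (fun k => (hrw k).symm) h0

end S7
open S7

theorem stmt7
    (μ ν : Measure ℝ)
    [IsProbabilityMeasure μ] [IsProbabilityMeasure ν]
    (hμint : Integrable (fun x => x) μ) (hνint : Integrable (fun x => x) ν)
    (hcx : ∀ f : ℝ → ℝ, ConvexOn ℝ Set.univ f → Integrable f μ → Integrable f ν →
      ∫ x, f x ∂μ ≤ ∫ x, f x ∂ν)
    (Pμ Pν D : ℝ → ℝ)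
    (hPμ : ∀ k, Pμ k = ∫ x, max (k - x) 0 ∂μ)
    (hPν : ∀ k, Pν k = ∫ x, max (k - x) 0 ∂ν)
    (hD : ∀ k, D k = Pν k - Pμ k)
    (hDconn : Set.OrdConnected {k : ℝ | 0 < D k})
    (G : ℝ → ℝ) (hGmono : MonotoneOn G (Set.Ioo 0 1))
    (hGq : ∀ u ∈ Set.Ioo (0:ℝ) 1,
      (μ (Set.Iio (G u))).toReal ≤ u ∧ u ≤ (μ (Set.Iic (G u))).toReal)
    (E Ec : ℝ → ℝ → ℝ)
    (hE : ∀ u ∈ Set.Ioo (0:ℝ) 1, ∀ k, E u k = Pν k - Pμ (min k (G u)) - u * max (k - G u) 0)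
    (hEcConv : ∀ u ∈ Set.Ioo (0:ℝ) 1, ConvexOn ℝ Set.univ (Ec u))
    (hEcLe : ∀ u ∈ Set.Ioo (0:ℝ) 1, ∀ k, Ec u k ≤ E u k)
    (hEcMax : ∀ u ∈ Set.Ioo (0:ℝ) 1, ∀ h : ℝ → ℝ, ConvexOn ℝ Set.univ h →
      (∀ k, h k ≤ E u k) → ∀ k, h k ≤ Ec u k)
    (S : ℝ → ℝ) (hS : ∀ u ∈ Set.Ioo (0:ℝ) 1, S u = sInf {z : ℝ | G u ≤ z ∧ Ec u z = E u z})
    (φ : ℝ → ℝ) (hφ : ∀ u ∈ Set.Ioo (0:ℝ) 1,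
      φ u = sInf {ψ : ℝ | ∀ y, Ec u (G u) + ψ * (y - G u) ≤ Ec u y})
    :
    ∀ u ∈ Set.Ioo (0:ℝ) 1,
      φ u = derivWithin (Ec u) (Set.Iio (G u)) (G u) ∧
      φ u = derivWithin (Ec u) (Set.Iio (S u)) (S u) := by
  intro u hu
  have hu0 : (0:ℝ) < u := hu.1
  have hu1 : u < 1 := hu.2
  have hfconv : ConvexOn ℝ Set.univ (Ec u) := hEcConv u hu
  have hfc : Continuous (Ec u) := conv_cont hfconv
  have hfE : ∀ k, Ec u k ≤ E u k := hEcLe u hu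
  have hmax : ∀ h : ℝ → ℝ, ConvexOn ℝ Set.univ h → (∀ k, h k ≤ E u k) → ∀ k, h k ≤ Ec u k :=
    hEcMax u hu
  have hEu : ∀ k, E u k = Pν k - Pμ (min k (G u)) - u * max (k - G u) 0 := hE u hu
  have hPνe : Pν = fun k => ∫ x, max (k - x) 0 ∂ν := funext hPν
  have hPμe : Pμ = fun k => ∫ x, max (k - x) 0 ∂μ := funext hPμ
  have hPνc : Continuous Pν := by rw [hPνe]; exact P_cont hνint
  have hPμc : Continuous Pμ := by rw [hPμe]; exact P_cont hμint
  have hEuc : Continuous (E u) := by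
    have he : E u = fun k => Pν k - Pμ (min k (G u)) - u * max (k - G u) 0 := funext hEu
    rw [he]
    exact (hPνc.sub (hPμc.comp (continuous_id.min continuous_const))).sub
      (continuous_const.mul ((continuous_id.sub continuous_const).max continuous_const))
  have hconvmax : ∀ k : ℝ, ConvexOn ℝ Set.univ (fun x : ℝ => max (k - x) 0) := by
    intro k
    have h1 : ConvexOn ℝ Set.univ (fun x : ℝ => k - x) := by
      have := affine_convexOn (-1) k
      have he : (fun x : ℝ => (-1) * x + k) = fun x : ℝ => k - x := by funext x; ring
      rwa [he] at this
    exact max_convexOn h1 (convexOn_const 0 convex_univ)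
  have hPle : ∀ k, Pμ k ≤ Pν k := by
    intro k
    rw [hPνe, hPμe]
    exact hcx _ (hconvmax k) (int_pp hμint k) (int_pp hνint k)
  have hmeq : ∫ x, x ∂μ = ∫ x, x ∂ν := by
    have h1 : ∫ x, x ∂μ ≤ ∫ x, x ∂ν := hcx _ (convexOn_id convex_univ) hμint hνint
    have hnegc : ConvexOn ℝ Set.univ (fun x : ℝ => -x) := by
      have := affine_convexOn (-1 : ℝ) 0
      have he : (fun x : ℝ => (-1) * x + 0) = fun x : ℝ => -x := by funext x; ring
      rwa [he] at this
    have h2 := hcx _ hnegc hμint.neg hνint.neg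
    rw [integral_neg, integral_neg] at h2
    linarith
  have hq := (hGq u hu).2
  have hE0 : ∀ x, (0:ℝ) ≤ E u x := by
    intro x
    rcases le_total x (G u) with hx | hx
    · rw [hEu x, min_eq_left hx, max_eq_right (by linarith : x - G u ≤ 0)]
      have := hPle x
      simp only [mul_zero, sub_zero]
      linarith
    · rw [hEu x, min_eq_right hx, max_eq_left (by linarith : (0:ℝ) ≤ x - G u)]
      have h1 := hPle x
      have h2 : u * (x - G u) ≤ Pμ x - Pμ (G u) := by
        rw [hPμe]
        exact P_umono hμint hx hq (le_of_lt hu0)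
      linarith
  set cA := u * G u - (∫ x, x ∂ν) - Pμ (G u) with hcA
  have hAg : (1 - u) * G u + cA ≤ 0 := by
    have h1 : G u - (∫ x, x ∂μ) ≤ Pμ (G u) := by
      rw [hPμe]
      exact P_ge hμint (G u)
    rw [hcA, ← hmeq]
    nlinarith [h1]
  have hAle : ∀ x, (1 - u) * x + cA ≤ E u x := by
    intro x
    rcases le_total x (G u) with hx | hx
    · have h2 : (1 - u) * x ≤ (1 - u) * (G u) :=
        mul_le_mul_of_nonneg_left hx (by linarith : (0:ℝ) ≤ 1 - u)
      linarith [hE0 x, hAg]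
    · rw [hEu x, min_eq_right hx, max_eq_left (by linarith : (0:ℝ) ≤ x - G u)]
      have h1 : x - (∫ t, t ∂ν) ≤ Pν x := by
        rw [hPνe]
        exact P_ge hνint x
      rw [hcA]
      nlinarith [h1]
  have htd : Tendsto (fun x => E u x - ((1 - u) * x + cA)) atTop (𝓝 0) := by
    have h0 : Tendsto (fun k => (∫ x, max (k - x) 0 ∂ν) - (k - ∫ x, x ∂ν)) atTop (𝓝 0) :=
      P_tendsto hνint
    refine h0.congr' ?_
    filter_upwards [eventually_ge_atTop (G u)] with x hx
    rw [hEu x, min_eq_right hx, max_eq_left (by linarith : (0:ℝ) ≤ x - G u), hcA]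
    have hPνx : Pν x = ∫ t, max (x - t) 0 ∂ν := hPν x
    rw [hPνx]
    ring
  have hA : φ u = derivWithin (Ec u) (Set.Iio (G u)) (G u) := by
    rw [hφ u hu, derivWithin_Iio_eq hfconv (G u), sInf_subgrad_eq_Lam hfconv (G u)]
  refine ⟨hA, ?_⟩
  rw [hS u hu]
  by_cases hco : Ec u (G u) = E u (G u)
  · have hleast : IsLeast {z : ℝ | G u ≤ z ∧ Ec u z = E u z} (G u) :=
      ⟨⟨le_rfl, hco⟩, fun z hz => hz.1⟩
    rw [hleast.csInf_eq]
    exact hA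
  · have hlt : Ec u (G u) < E u (G u) := lt_of_le_of_ne (hfE (G u)) hco
    obtain ⟨hgs, heqs⟩ := case2 hfconv hfc hEuc hfE hmax hu1 hAle hE0 hAg htd hlt
    rw [derivWithin_Iio_eq hfconv _,
      Lam_eq_of_affine_touch hfconv hgs (Lam_subgrad hfconv (G u)) heqs,
      hφ u hu, sInf_subgrad_eq_Lam hfconv (G u)]
end

section
/- Let 0 < u < v < 1 and k ∈ ℝ with G(v−) ≤ k ≤ G(v+) and G(u+) < k, where G(w−) and G(w+) denote the one-sided limits of the nondecreasing function G at w. Suppose ℰ_v'(k−) ≤ ℰ_v'(k+) and ψ ∈ [ℰ_v'(k−), ℰ_v'(k+)], where ℰ_w'(k−) and ℰ_w'(k+) denote the one-sided derivatives of ℰ_w at k (which exist since each ℰ_w is a difference of convex functions). Then ℰ_u'(k−) ≤ ψ + (v−u) ≤ ℰ_u'(k+). -/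
open MeasureTheory Set Filter Topology

private lemma intMax (ρ : Measure ℝ) [IsFiniteMeasure ρ] (hρ : Integrable (fun x => x) ρ)
    (c : ℝ) : Integrable (fun x => max (c - x) 0) ρ :=
  ((integrable_const c).sub hρ).pos_part

private lemma convP (ρ : Measure ℝ) [IsProbabilityMeasure ρ] (hρ : Integrable (fun x => x) ρ)
    (P : ℝ → ℝ) (hP : ∀ k, P k = ∫ x, max (k - x) 0 ∂ρ) : ConvexOn ℝ Set.univ P := by
  refine ⟨convex_univ, fun x _ y _ a b ha hb hab => ?_⟩
  simp only [smul_eq_mul, hP]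
  rw [← integral_const_mul, ← integral_const_mul,
    ← integral_add ((intMax ρ hρ x).const_mul a) ((intMax ρ hρ y).const_mul b)]
  refine integral_mono (intMax ρ hρ _) (((intMax ρ hρ x).const_mul a).add
    ((intMax ρ hρ y).const_mul b)) fun t => ?_
  have h1 : x - t ≤ max (x - t) 0 := le_max_left _ _
  have h2 : y - t ≤ max (y - t) 0 := le_max_left _ _
  have h3 : (0:ℝ) ≤ max (x - t) 0 := le_max_right _ _
  have h4 : (0:ℝ) ≤ max (y - t) 0 := le_max_right _ _
  have e : a * x + b * y - t = a * (x - t) + b * (y - t) := by linear_combination t * hab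
  refine max_le ?_ ?_
  · rw [e]
    exact add_le_add (mul_le_mul_of_nonneg_left h1 ha) (mul_le_mul_of_nonneg_left h2 hb)
  · have := add_le_add (mul_le_mul_of_nonneg_left h3 ha) (mul_le_mul_of_nonneg_left h4 hb)
    simpa using this

private lemma cvx_hasDerivWithinAt_Iio {f : ℝ → ℝ} (hf : ConvexOn ℝ Set.univ f) (k : ℝ) :
    HasDerivWithinAt f (sSup (slope f k '' Set.Iio k)) (Set.Iio k) k := by
  have mono : MonotoneOn (slope f k) (Set.Iio k) := by
    intro x hx y hy hxy
    simp only [slope_def_field]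
    exact hf.secant_mono trivial trivial trivial (ne_of_lt hx) (ne_of_lt hy) hxy
  have bdd : BddAbove (slope f k '' Set.Iio k) := by
    refine ⟨slope f k (k + 1), ?_⟩
    rintro _ ⟨x, hx, rfl⟩
    simp only [slope_def_field]
    exact hf.secant_mono trivial trivial trivial (ne_of_lt hx) (by linarith)
      (by simp at hx; linarith)
  have := mono.tendsto_nhdsLT bdd
  rw [hasDerivWithinAt_iff_tendsto_slope,
    Set.diff_singleton_eq_self (by simp : k ∉ Set.Iio k)]
  exact this

private lemma cvx_hasDerivWithinAt_Ioi {f : ℝ → ℝ} (hf : ConvexOn ℝ Set.univ f) (k : ℝ) :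
    HasDerivWithinAt f (sInf (slope f k '' Set.Ioi k)) (Set.Ioi k) k := by
  have mono : MonotoneOn (slope f k) (Set.Ioi k) := by
    intro x hx y hy hxy
    simp only [slope_def_field]
    exact hf.secant_mono trivial trivial trivial (ne_of_gt hx) (ne_of_gt hy) hxy
  have bdd : BddBelow (slope f k '' Set.Ioi k) := by
    refine ⟨slope f k (k - 1), ?_⟩
    rintro _ ⟨x, hx, rfl⟩
    simp only [slope_def_field]
    exact hf.secant_mono trivial trivial trivial (by linarith) (ne_of_gt hx)
      (by simp at hx; linarith)
  have := mono.tendsto_nhdsGT bdd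
  rw [hasDerivWithinAt_iff_tendsto_slope,
    Set.diff_singleton_eq_self (by simp : k ∉ Set.Ioi k)]
  exact this

theorem stmt8
    (μ ν : Measure ℝ)
    [IsProbabilityMeasure μ] [IsProbabilityMeasure ν]
    (hμint : Integrable (fun x => x) μ) (hνint : Integrable (fun x => x) ν)
    (hcx : ∀ f : ℝ → ℝ, ConvexOn ℝ Set.univ f → Integrable f μ → Integrable f ν →
      ∫ x, f x ∂μ ≤ ∫ x, f x ∂ν)
    (Pμ Pν D : ℝ → ℝ)
    (hPμ : ∀ k, Pμ k = ∫ x, max (k - x) 0 ∂μ)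
    (hPν : ∀ k, Pν k = ∫ x, max (k - x) 0 ∂ν)
    (hD : ∀ k, D k = Pν k - Pμ k)
    (hDconn : Set.OrdConnected {k : ℝ | 0 < D k})
    (G : ℝ → ℝ) (hGmono : MonotoneOn G (Set.Ioo 0 1))
    (hGq : ∀ u ∈ Set.Ioo (0:ℝ) 1,
      (μ (Set.Iio (G u))).toReal ≤ u ∧ u ≤ (μ (Set.Iic (G u))).toReal)
    (E Ec : ℝ → ℝ → ℝ)
    (hE : ∀ u ∈ Set.Ioo (0:ℝ) 1, ∀ k, E u k = Pν k - Pμ (min k (G u)) - u * max (k - G u) 0)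
    (hEcConv : ∀ u ∈ Set.Ioo (0:ℝ) 1, ConvexOn ℝ Set.univ (Ec u))
    (hEcLe : ∀ u ∈ Set.Ioo (0:ℝ) 1, ∀ k, Ec u k ≤ E u k)
    (hEcMax : ∀ u ∈ Set.Ioo (0:ℝ) 1, ∀ h : ℝ → ℝ, ConvexOn ℝ Set.univ h →
      (∀ k, h k ≤ E u k) → ∀ k, h k ≤ Ec u k)
    (u v k : ℝ) (hu : 0 < u) (huv : u < v) (hv : v < 1)
    (hk1 : sSup (G '' Set.Ioo 0 v) ≤ k) (hk2 : k ≤ sInf (G '' Set.Ioo v 1))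
    (hk3 : sInf (G '' Set.Ioo u 1) < k)
    (hEv : derivWithin (E v) (Set.Iio k) k ≤ derivWithin (E v) (Set.Ioi k) k)
    (ψ : ℝ) (hψ1 : derivWithin (E v) (Set.Iio k) k ≤ ψ)
    (hψ2 : ψ ≤ derivWithin (E v) (Set.Ioi k) k) :
    derivWithin (E u) (Set.Iio k) k ≤ ψ + (v - u) ∧
    ψ + (v - u) ≤ derivWithin (E u) (Set.Ioi k) k := by
  have hu1 : u ∈ Set.Ioo (0:ℝ) 1 := ⟨hu, huv.trans hv⟩
  have hv1 : v ∈ Set.Ioo (0:ℝ) 1 := ⟨hu.trans huv, hv⟩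
  -- convexity of Pμ, Pν and their one-sided derivatives at k
  have hPμc : ConvexOn ℝ Set.univ Pμ := convP μ hμint Pμ hPμ
  have hPνc : ConvexOn ℝ Set.univ Pν := convP ν hνint Pν hPν
  set dl := sSup (slope Pν k '' Set.Iio k) with hdl
  set dr := sInf (slope Pν k '' Set.Ioi k) with hdr
  have hl : HasDerivWithinAt Pν dl (Set.Iio k) k := cvx_hasDerivWithinAt_Iio hPνc k
  have hr : HasDerivWithinAt Pν dr (Set.Ioi k) k := cvx_hasDerivWithinAt_Ioi hPνc k
  set pl := sSup (slope Pμ k '' Set.Iio k) with hpl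
  set pr := sInf (slope Pμ k '' Set.Ioi k) with hpr
  have hml : HasDerivWithinAt Pμ pl (Set.Iio k) k := cvx_hasDerivWithinAt_Iio hPμc k
  have hmr : HasDerivWithinAt Pμ pr (Set.Ioi k) k := cvx_hasDerivWithinAt_Ioi hPμc k
  -- G u < k
  have hGuk : G u < k := by
    refine lt_of_le_of_lt (le_csInf ⟨G v, Set.mem_image_of_mem G (Set.mem_Ioo.mpr ⟨huv, hv⟩)⟩ ?_) hk3
    rintro _ ⟨w, hw, rfl⟩
    exact hGmono hu1 ⟨hu.trans hw.1, hw.2⟩ hw.1.le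
  -- G w ≤ k for w < v
  have hGwk : ∀ w ∈ Set.Ioo (0:ℝ) v, G w ≤ k := by
    intro w hw
    refine le_trans (le_trans (le_csSup ?_ (Set.mem_image_of_mem G hw)) hk1) le_rfl
    refine ⟨G v, ?_⟩
    rintro _ ⟨w', hw', rfl⟩
    exact hGmono ⟨hw'.1, hw'.2.trans hv⟩ hv1 hw'.2.le
  -- generic computation of derivWithin (E w) when G w < k
  have key : ∀ w ∈ Set.Ioo (0:ℝ) 1, G w < k →
      derivWithin (E w) (Set.Iio k) k = dl - w ∧
      derivWithin (E w) (Set.Ioi k) k = dr - w := by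
    intro w hw hGk
    have heq : ∀ x ∈ Set.Ioi (G w), E w x = Pν x - Pμ (G w) - w * (x - G w) := by
      intro x hx
      rw [hE w hw x, min_eq_right (le_of_lt hx), max_eq_left (by simp at hx ⊢; linarith)]
    have hEk : E w k = Pν k - Pμ (G w) - w * (k - G w) := heq k hGk
    have hmem : ∀ s : Set ℝ, E w =ᶠ[𝓝[s] k] fun x => Pν x - Pμ (G w) - w * (x - G w) := by
      intro s
      filter_upwards [mem_nhdsWithin_of_mem_nhds (Ioi_mem_nhds hGk)] with x hx
      exact heq x hx
    constructor
    · have h1 : HasDerivWithinAt (fun x => Pν x - Pμ (G w) - w * (x - G w)) (dl - w)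
          (Set.Iio k) k := by
        have := (hl.sub_const (Pμ (G w))).sub
          (((hasDerivWithinAt_id k (Set.Iio k)).sub_const (G w)).const_mul w)
        exact this.congr_deriv (by ring)
      exact ((h1.congr_of_eventuallyEq (hmem _) hEk)).derivWithin (uniqueDiffWithinAt_Iio k)
    · have h1 : HasDerivWithinAt (fun x => Pν x - Pμ (G w) - w * (x - G w)) (dr - w)
          (Set.Ioi k) k := by
        have := (hr.sub_const (Pμ (G w))).sub
          (((hasDerivWithinAt_id k (Set.Ioi k)).sub_const (G w)).const_mul w)
        exact this.congr_deriv (by ring)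
      exact ((h1.congr_of_eventuallyEq (hmem _) hEk)).derivWithin (uniqueDiffWithinAt_Ioi k)
  obtain ⟨hEuL, hEuR⟩ := key u hu1 hGuk
  rcases lt_or_ge (G v) k with hGv | hGv
  · obtain ⟨hEvL, hEvR⟩ := key v hv1 hGv
    rw [hEvL] at hψ1; rw [hEvR] at hψ2
    rw [hEuL, hEuR]
    constructor <;> linarith
  -- case k ≤ G v
  · -- slope bounds for Pμ
    have hintd : ∀ a : ℝ, Integrable (fun y => max (a - y) 0) μ := intMax μ hμint
    -- left slope bound: pl ≤ v
    have hplv : pl ≤ v := by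
      have hslope : ∀ x ∈ Set.Iio k, slope Pμ k x ≤ v := by
        intro x hx
        have hxk : x < k := hx
        have hint : Pμ k - Pμ x ≤ (k - x) * v := by
          have hmono : (μ (Set.Iio (G v))).toReal ≤ v := (hGq v hv1).1
          have step : Pμ k - Pμ x ≤ (k - x) * (μ (Set.Iio (G v))).toReal := by
            rw [hPμ k, hPμ x, ← integral_sub (hintd k) (hintd x)]
            have hcalc : ∫ y, (max (k - y) 0 - max (x - y) 0) ∂μ ≤
                ∫ y, (Set.Iio (G v)).indicator (fun _ => k - x) y ∂μ := by
              refine integral_mono ((hintd k).sub (hintd x))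
                ((integrable_const _).indicator measurableSet_Iio) fun y => ?_
              by_cases hy : y ∈ Set.Iio (G v)
              · rw [Set.indicator_of_mem hy]
                have h1 : x - y ≤ max (x - y) 0 := le_max_left _ _
                have h2 : (0:ℝ) ≤ max (x - y) 0 := le_max_right _ _
                have h3 : max (k - y) 0 ≤ (k - x) + max (x - y) 0 :=
                  max_le (by linarith) (by linarith)
                linarith
              · rw [Set.indicator_of_notMem hy]
                simp only [Set.mem_Iio, not_lt] at hy
                have h1 : max (k - y) 0 = 0 := max_eq_right (by linarith)
                have h2 : (0:ℝ) ≤ max (x - y) 0 := le_max_right _ _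
                linarith
            rw [integral_indicator_const _ measurableSet_Iio, smul_eq_mul, measureReal_def] at hcalc
            linarith [hcalc]
          calc Pμ k - Pμ x ≤ (k - x) * (μ (Set.Iio (G v))).toReal := step
            _ ≤ (k - x) * v := by
              exact mul_le_mul_of_nonneg_left hmono (by linarith)
        rw [slope_def_field, div_le_iff_of_neg (by linarith : x - k < 0)]
        linarith
      have ht := hasDerivWithinAt_iff_tendsto_slope.mp hml
      rw [Set.diff_singleton_eq_self (by simp : k ∉ Set.Iio k)] at ht
      exact le_of_tendsto ht (eventually_mem_nhdsWithin.mono hslope)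
    -- right slope bound: v ≤ pr
    have hprv : v ≤ pr := by
      have hw : ∀ w ∈ Set.Ioo (0:ℝ) v, w ≤ pr := by
        intro w hw0
        have hw1 : w ∈ Set.Ioo (0:ℝ) 1 := ⟨hw0.1, hw0.2.trans hv⟩
        have hGw : G w ≤ k := hGwk w hw0
        have hslope : ∀ x ∈ Set.Ioi k, w ≤ slope Pμ k x := by
          intro x hx
          have hxk : k < x := hx
          have step : (x - k) * (μ (Set.Iic (G w))).toReal ≤ Pμ x - Pμ k := by
            rw [hPμ x, hPμ k, ← integral_sub (hintd x) (hintd k)]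
            have hcalc : ∫ y, (Set.Iic (G w)).indicator (fun _ => x - k) y ∂μ ≤
                ∫ y, (max (x - y) 0 - max (k - y) 0) ∂μ := by
              refine integral_mono ((integrable_const _).indicator measurableSet_Iic)
                ((hintd x).sub (hintd k)) fun y => ?_
              by_cases hy : y ∈ Set.Iic (G w)
              · rw [Set.indicator_of_mem hy]
                simp only [Set.mem_Iic] at hy
                rw [max_eq_left (by linarith), max_eq_left (by linarith)]
                linarith
              · rw [Set.indicator_of_notMem hy]
                have : max (k - y) 0 ≤ max (x - y) 0 :=
                  max_le_max (by linarith) le_rfl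
                linarith
            rw [integral_indicator_const _ measurableSet_Iic, smul_eq_mul, measureReal_def] at hcalc
            linarith [hcalc]
          have hq : w ≤ (μ (Set.Iic (G w))).toReal := (hGq w hw1).2
          rw [slope_def_field, le_div_iff₀ (by linarith : (0:ℝ) < x - k)]
          nlinarith
        have ht := hasDerivWithinAt_iff_tendsto_slope.mp hmr
        rw [Set.diff_singleton_eq_self (by simp : k ∉ Set.Ioi k)] at ht
        exact ge_of_tendsto ht (eventually_mem_nhdsWithin.mono hslope)
      by_contra hcon
      push_neg at hcon
      obtain ⟨w, hw1, hw2⟩ := exists_between (max_lt hcon (hu.trans huv))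
      exact absurd (hw w (Set.mem_Ioo.mpr ⟨(le_max_right _ _).trans_lt hw1, hw2⟩))
        (not_le.mpr ((le_max_left _ _).trans_lt hw1))
    -- left derivative of E v
    have hEvL : derivWithin (E v) (Set.Iio k) k = dl - pl := by
      have h1 : HasDerivWithinAt (fun x => Pν x - Pμ x) (dl - pl) (Set.Iio k) k := hl.sub hml
      have heq : ∀ x ∈ Set.Iio k, E v x = Pν x - Pμ x := by
        intro x hx
        have hxk : x < k := hx
        rw [hE v hv1 x, min_eq_left (by linarith), max_eq_right (by linarith)]
        ring
      have hEk : E v k = Pν k - Pμ k := by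
        rw [hE v hv1 k, min_eq_left hGv, max_eq_right (by linarith)]
        ring
      exact (h1.congr heq hEk).derivWithin (uniqueDiffWithinAt_Iio k)
    rw [hEvL] at hψ1
    constructor
    · rw [hEuL]; linarith
    · rcases eq_or_lt_of_le hGv with hGv' | hGv'
      · -- k = G v : E v x = Pν x - Pμ k - v * (x - k) on Ioi k
        have hEvR : derivWithin (E v) (Set.Ioi k) k = dr - v := by
          have h1 : HasDerivWithinAt (fun x => Pν x - Pμ k - v * (x - k)) (dr - v)
              (Set.Ioi k) k := by
            have := (hr.sub_const (Pμ k)).sub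
              (((hasDerivWithinAt_id k (Set.Ioi k)).sub_const k).const_mul v)
            exact this.congr_deriv (by ring)
          have heq : ∀ x ∈ Set.Ioi k, E v x = Pν x - Pμ k - v * (x - k) := by
            intro x hx
            have hxk : k < x := hx
            rw [hE v hv1 x, ← hGv', min_eq_right (by linarith), max_eq_left (by linarith)]
          have hEk : E v k = Pν k - Pμ k - v * (k - k) := by
            rw [hE v hv1 k, ← hGv', min_eq_right le_rfl, max_eq_left (by linarith)]
          exact (h1.congr heq hEk).derivWithin (uniqueDiffWithinAt_Ioi k)
        rw [hEvR] at hψ2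
        rw [hEuR]; linarith
      · -- k < G v : E v = Pν - Pμ near k on the right
        have hEvR : derivWithin (E v) (Set.Ioi k) k = dr - pr := by
          have h1 : HasDerivWithinAt (fun x => Pν x - Pμ x) (dr - pr) (Set.Ioi k) k :=
            hr.sub hmr
          have heq : E v =ᶠ[𝓝[Set.Ioi k] k] fun x => Pν x - Pμ x := by
            filter_upwards [mem_nhdsWithin_of_mem_nhds (Iio_mem_nhds hGv')] with x hx
            have hxk : x < G v := hx
            rw [hE v hv1 x, min_eq_left (by linarith), max_eq_right (by linarith)]
            ring
          have hEk : E v k = Pν k - Pμ k := by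
            rw [hE v hv1 k, min_eq_left hGv, max_eq_right (by linarith)]
            ring
          exact (h1.congr_of_eventuallyEq heq hEk).derivWithin (uniqueDiffWithinAt_Ioi k)
        rw [hEvR] at hψ2
        rw [hEuR]; linarith
end

section
/- Let 0 < u < v < 1. If there exists z ∈ ℝ with ℰ_u^c(z) = ℰ_v^c(z) = ℰ_u(z), then ℰ_u^c(k) = ℰ_v^c(k) for every k ≤ z. -/
open MeasureTheory Set Filter Topology

lemma aux_support (f : ℝ → ℝ) (hf : ConvexOn ℝ Set.univ f) (z : ℝ) :
    ∃ s : ℝ, ∀ k, f z + s * (k - z) ≤ f k := by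
  set S : Set ℝ := (fun y => (f z - f y) / (z - y)) '' Set.Iio z with hS
  have hne : S.Nonempty := ⟨_, ⟨z - 1, by simp [Set.mem_Iio], rfl⟩⟩
  have hub : ∀ t ∈ S, t ≤ (f (z + 1) - f z) / (z + 1 - z) := by
    rintro t ⟨y, hy, rfl⟩
    exact hf.slope_mono_adjacent trivial trivial hy (by linarith)
  have hbdd : BddAbove S := ⟨_, hub⟩
  refine ⟨sSup S, fun k => ?_⟩
  rcases lt_trichotomy k z with hk | hk | hk
  · have hmem : (f z - f k) / (z - k) ∈ S := ⟨k, hk, rfl⟩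
    have h1 := le_csSup hbdd hmem
    rw [div_le_iff₀ (by linarith : (0:ℝ) < z - k)] at h1
    nlinarith
  · subst hk; simp
  · have h1 : sSup S ≤ (f k - f z) / (k - z) := by
      apply csSup_le hne
      rintro t ⟨y, hy, rfl⟩
      exact hf.slope_mono_adjacent trivial trivial hy hk
    rw [le_div_iff₀ (by linarith : (0:ℝ) < k - z)] at h1
    nlinarith

lemma aux_piecewise_convex (f : ℝ → ℝ) (hf : ConvexOn ℝ Set.univ f) (z s : ℝ)
    (hs : ∀ k, f z + s * (k - z) ≤ f k) :
    ConvexOn ℝ Set.univ (fun k => if k ≤ z then f k else f z + s * (k - z)) := by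
  apply convexOn_of_slope_mono_adjacent convex_univ
  intro x y w _ _ hxy hyw
  have hxw : x < w := hxy.trans hyw
  by_cases hyz : y ≤ z
  · have hx : x ≤ z := hxy.le.trans hyz
    rw [if_pos hx, if_pos hyz]
    by_cases hwz : w ≤ z
    · rw [if_pos hwz]
      exact hf.slope_mono_adjacent trivial trivial hxy hyw
    · push_neg at hwz
      rw [if_neg (not_le.2 hwz)]
      rcases lt_or_eq_of_le hyz with hylt | hyeq
      · have h1 : (f y - f x) / (y - x) ≤ (f z - f y) / (z - y) :=
          hf.slope_mono_adjacent trivial trivial hxy hylt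
        have h2 : f z - f y ≤ s * (z - y) := by nlinarith [hs y]
        have key : (f z - f y) / (z - y) ≤ (f z + s * (w - z) - f y) / (w - y) := by
          rw [div_le_div_iff₀ (by linarith) (by linarith)]
          nlinarith [mul_le_mul_of_nonneg_right h2 (by linarith : (0:ℝ) ≤ w - z)]
        linarith
      · subst hyeq
        have hRHS : (f y + s * (w - y) - f y) / (w - y) = s := by
          rw [div_eq_iff (by intro hc; nlinarith : w - y ≠ 0)]; ring
        rw [hRHS, div_le_iff₀ (by linarith : (0:ℝ) < y - x)]
        nlinarith [hs x]
  · push_neg at hyz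
    have hwz : ¬ w ≤ z := not_le.2 (hyz.trans hyw)
    rw [if_neg (not_le.2 hyz), if_neg hwz]
    have hRHS : (f z + s * (w - z) - (f z + s * (y - z))) / (w - y) = s := by
      rw [div_eq_iff (by linarith : w - y ≠ 0)]; ring
    rw [hRHS]
    have hx : f z + s * (x - z) ≤ (if x ≤ z then f x else f z + s * (x - z)) := by
      by_cases hxz : x ≤ z
      · rw [if_pos hxz]; exact hs x
      · rw [if_neg hxz]
    rw [div_le_iff₀ (by linarith : (0:ℝ) < y - x)]
    nlinarith

lemma aux_P_lb (μ : Measure ℝ) [IsProbabilityMeasure μ]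
    (hint : Integrable (fun x => x) μ) (c c' : ℝ) (h : c ≤ c') :
    (∫ x, max (c - x) 0 ∂μ) + (c' - c) * (μ (Set.Iic c)).toReal ≤ ∫ x, max (c' - x) 0 ∂μ := by
  have hint1 : Integrable (fun x => max (c - x) 0) μ := ((integrable_const c).sub hint).pos_part
  have hint2 : Integrable (fun x => max (c' - x) 0) μ := ((integrable_const c').sub hint).pos_part
  have hind : Integrable ((Set.Iic c).indicator (fun _ => (c' - c)) : ℝ → ℝ) μ :=
    (integrable_const (c' - c)).indicator measurableSet_Iic
  have hmono : ∫ x, (max (c - x) 0 + (Set.Iic c).indicator (fun _ => (c' - c)) x) ∂μ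
      ≤ ∫ x, max (c' - x) 0 ∂μ := by
    apply integral_mono (hint1.add hind) hint2
    intro x
    simp only [Pi.add_apply]
    by_cases hx : x ≤ c
    · simp only [Set.indicator_of_mem (Set.mem_Iic.2 hx)]
      rw [max_eq_left (by linarith : (0:ℝ) ≤ c - x), max_eq_left (by linarith : (0:ℝ) ≤ c' - x)]
      ring_nf; linarith
    · simp only [Set.indicator_of_notMem (fun hc => hx (Set.mem_Iic.1 hc))]
      rw [max_eq_right (by linarith : c - x ≤ (0:ℝ))]
      simp [le_max_iff]
  rw [integral_add hint1 hind, integral_indicator_const _ measurableSet_Iic] at hmono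
  rw [smul_eq_mul] at hmono
  rw [measureReal_def] at hmono
  linarith
theorem stmt9
    (μ ν : Measure ℝ)
    [IsProbabilityMeasure μ] [IsProbabilityMeasure ν]
    (hμint : Integrable (fun x => x) μ) (hνint : Integrable (fun x => x) ν)
    (hcx : ∀ f : ℝ → ℝ, ConvexOn ℝ Set.univ f → Integrable f μ → Integrable f ν →
      ∫ x, f x ∂μ ≤ ∫ x, f x ∂ν)
    (Pμ Pν D : ℝ → ℝ)
    (hPμ : ∀ k, Pμ k = ∫ x, max (k - x) 0 ∂μ)
    (hPν : ∀ k, Pν k = ∫ x, max (k - x) 0 ∂ν)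
    (hD : ∀ k, D k = Pν k - Pμ k)
    (hDconn : Set.OrdConnected {k : ℝ | 0 < D k})
    (G : ℝ → ℝ) (hGmono : MonotoneOn G (Set.Ioo 0 1))
    (hGq : ∀ u ∈ Set.Ioo (0:ℝ) 1,
      (μ (Set.Iio (G u))).toReal ≤ u ∧ u ≤ (μ (Set.Iic (G u))).toReal)
    (E Ec : ℝ → ℝ → ℝ)
    (hE : ∀ u ∈ Set.Ioo (0:ℝ) 1, ∀ k, E u k = Pν k - Pμ (min k (G u)) - u * max (k - G u) 0)
    (hEcConv : ∀ u ∈ Set.Ioo (0:ℝ) 1, ConvexOn ℝ Set.univ (Ec u))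
    (hEcLe : ∀ u ∈ Set.Ioo (0:ℝ) 1, ∀ k, Ec u k ≤ E u k)
    (hEcMax : ∀ u ∈ Set.Ioo (0:ℝ) 1, ∀ h : ℝ → ℝ, ConvexOn ℝ Set.univ h →
      (∀ k, h k ≤ E u k) → ∀ k, h k ≤ Ec u k)
    (u v : ℝ) (hu : 0 < u) (huv : u < v) (hv : v < 1)
    (z : ℝ) (hz1 : Ec u z = Ec v z) (hz2 : Ec u z = E u z) :
    ∀ k ≤ z, Ec u k = Ec v k := by
  have hu' : u ∈ Set.Ioo (0:ℝ) 1 := ⟨hu, huv.trans hv⟩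
  have hv' : v ∈ Set.Ioo (0:ℝ) 1 := ⟨hu.trans huv, hv⟩
  set a := G u with ha
  set b := G v with hb
  have hab : a ≤ b := hGmono hu' hv' huv.le
  have hua : u ≤ (μ (Set.Iic a)).toReal := (hGq u hu').2
  have hPlb : ∀ c c', c ≤ c' → Pμ c + (c' - c) * (μ (Set.Iic c)).toReal ≤ Pμ c' := by
    intro c c' h
    rw [hPμ, hPμ]
    exact aux_P_lb μ hμint c c' h
  have hdif : ∀ k, E u k - E v k
      = Pμ (min k b) - Pμ (min k a) + v * max (k - b) 0 - u * max (k - a) 0 := by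
    intro k
    rw [hE u hu' k, hE v hv' k]
    ring
  have h0 : ∀ k, k ≤ a → E u k - E v k = 0 := by
    intro k hk
    rw [hdif k, min_eq_left (hk.trans hab), min_eq_left hk,
      max_eq_right (sub_nonpos.2 (hk.trans hab)), max_eq_right (sub_nonpos.2 hk)]
    ring
  have h2 : ∀ k k', a ≤ k → k ≤ k' → k' ≤ b → E u k - E v k ≤ E u k' - E v k' := by
    intro k k' hk1 hk2 hk3
    rw [hdif k, hdif k', min_eq_left (hk2.trans hk3), min_eq_right hk1,
      max_eq_right (sub_nonpos.2 (hk2.trans hk3)), max_eq_left (sub_nonneg.2 hk1),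
      min_eq_left hk3, min_eq_right (hk1.trans hk2),
      max_eq_right (sub_nonpos.2 hk3), max_eq_left (sub_nonneg.2 (hk1.trans hk2))]
    have hP := hPlb k k' hk2
    have hF : u ≤ (μ (Set.Iic k)).toReal :=
      hua.trans (ENNReal.toReal_mono (measure_ne_top μ _)
        (measure_mono (Set.Iic_subset_Iic.2 hk1)))
    nlinarith [mul_le_mul_of_nonneg_left hF (sub_nonneg.2 hk2)]
  have h3 : ∀ k k', b ≤ k → k ≤ k' → E u k - E v k ≤ E u k' - E v k' := by
    intro k k' hk1 hk2
    rw [hdif k, hdif k', min_eq_right hk1, min_eq_right (hab.trans hk1),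
      max_eq_left (sub_nonneg.2 hk1), max_eq_left (sub_nonneg.2 (hab.trans hk1)),
      min_eq_right (hk1.trans hk2), min_eq_right ((hab.trans hk1).trans hk2),
      max_eq_left (sub_nonneg.2 (hk1.trans hk2)),
      max_eq_left (sub_nonneg.2 ((hab.trans hk1).trans hk2))]
    nlinarith [mul_nonneg (by linarith : (0:ℝ) ≤ v - u) (by linarith : (0:ℝ) ≤ k' - k)]
  have hmono : ∀ k k', k ≤ k' → E u k - E v k ≤ E u k' - E v k' := by
    intro k k' hkk
    set p := max k (min a k') with hp
    set q := max p (min b k') with hq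
    have hpk' : p ≤ k' := max_le hkk (min_le_right _ _)
    have hqk' : q ≤ k' := max_le hpk' (min_le_right _ _)
    have s1 : E u k - E v k ≤ E u p - E v p := by
      rcases le_total k a with hka | hak
      · have hpa : p ≤ a := max_le hka (min_le_left _ _)
        rw [h0 k hka, h0 p hpa]
      · have : p = k := max_eq_left (le_trans (min_le_left _ _) hak)
        rw [this]
    have s2 : E u p - E v p ≤ E u q - E v q := by
      rcases le_or_gt (min b k') p with hqp | hpq
      · have : q = p := max_eq_left hqp
        rw [this]
      · have hqeq : q = min b k' := max_eq_right hpq.le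
        have hak' : a ≤ k' := by
          by_contra hc
          push_neg at hc
          have h1 : min a k' = k' := min_eq_right hc.le
          have h2' : k' ≤ p := by
            rw [hp, h1]; exact le_max_right _ _
          have h3' : min b k' ≤ k' := min_le_right _ _
          linarith
        have hap : a ≤ p := by
          rw [hp, min_eq_left hak']; exact le_max_right _ _
        have hpq' : p ≤ q := le_max_left _ _
        have hqb : q ≤ b := by rw [hqeq]; exact min_le_left _ _
        exact h2 p q hap hpq' hqb
    have s3 : E u q - E v q ≤ E u k' - E v k' := by
      rcases le_or_gt b q with hbq | hqb
      · exact h3 q k' hbq hqk'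
      · have hmin : min b k' = k' := by
          rcases le_total b k' with hbk | hkb
          · exfalso
            have : b ≤ q := by
              rw [hq, min_eq_left hbk]; exact le_max_right _ _
            linarith
          · exact min_eq_right hkb
        have hk'q : k' ≤ q := by
          rw [hq, hmin]; exact le_max_right _ _
        have : q = k' := le_antisymm hqk' hk'q
        rw [this]
    linarith
  have hnn : ∀ k, 0 ≤ E u k - E v k := by
    intro k
    have h1 := hmono (min k a) k (min_le_left _ _)
    rw [h0 (min k a) (min_le_right _ _)] at h1
    exact h1
  have hEcvu : ∀ k, Ec v k ≤ Ec u k :=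
    hEcMax u hu' (Ec v) (hEcConv v hv') (fun k => (hEcLe v hv' k).trans (by linarith [hnn k]))
  have hEz : E u z ≤ E v z := by
    calc E u z = Ec u z := hz2.symm
    _ = Ec v z := hz1
    _ ≤ E v z := hEcLe v hv' z
  have hleft : ∀ k, k ≤ z → E u k = E v k := by
    intro k hk
    have h1 := hmono k z hk
    have := hnn k
    linarith
  obtain ⟨s, hsupp⟩ := aux_support (Ec v) (hEcConv v hv') z
  have hsupp' : ∀ k, Ec u z + s * (k - z) ≤ Ec u k := by
    intro k
    have := hsupp k
    rw [← hz1] at this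
    exact this.trans (hEcvu k)
  have hconv := aux_piecewise_convex (Ec u) (hEcConv u hu') z s hsupp'
  have hhle : ∀ k, (fun k => if k ≤ z then Ec u k else Ec u z + s * (k - z)) k ≤ E v k := by
    intro k
    dsimp only
    by_cases hk : k ≤ z
    · rw [if_pos hk, ← hleft k hk]
      exact hEcLe u hu' k
    · rw [if_neg hk, hz1]
      exact (hsupp k).trans (hEcLe v hv' k)
  have hfin := hEcMax v hv' _ hconv hhle
  intro k hk
  refine le_antisymm ?_ (hEcvu k)
  have := hfin k
  rw [if_pos hk] at this
  exact this
end

section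
/- Assume additionally that G is the left-continuous quantile function of μ: G(u) = inf{x ∈ ℝ : μ((−∞,x]) ≥ u}. Then for each v ∈ (0,1) and every k ∈ ℝ: lim_{u↑v} ℰ_u(k) = ℰ_v(k) = lim_{u↓v} ℰ_u(k) and lim_{u↑v} ℰ_u^c(k) = ℰ_v^c(k) = lim_{u↓v} ℰ_u^c(k). -/
open MeasureTheory Set Filter Topology

noncomputable section

def cset (f : ℝ → ℝ) (x : ℝ) : Set ℝ :=
  {y | ∃ a b l : ℝ, 0 ≤ l ∧ l ≤ 1 ∧ l * a + (1 - l) * b = x ∧ l * f a + (1 - l) * f b = y}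

def chull (f : ℝ → ℝ) (x : ℝ) : ℝ := sInf (cset f x)

lemma cset_nonempty (f : ℝ → ℝ) (x : ℝ) : (cset f x).Nonempty :=
  ⟨f x, x, x, 1, zero_le_one, le_refl 1, by ring, by ring⟩

lemma cset_nonneg {f : ℝ → ℝ} (hf : ∀ y, 0 ≤ f y) (x : ℝ) :
    ∀ y ∈ cset f x, (0:ℝ) ≤ y := by
  rintro y ⟨a, b, l, h0, h1, -, rfl⟩
  have ha := hf a; have hb := hf b
  have h2 : 0 ≤ l * f a := mul_nonneg h0 ha
  have h3 : 0 ≤ (1 - l) * f b := mul_nonneg (by linarith) hb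
  linarith

lemma cset_bddBelow {f : ℝ → ℝ} (hf : ∀ y, 0 ≤ f y) (x : ℝ) : BddBelow (cset f x) :=
  ⟨0, fun y hy => cset_nonneg hf x y hy⟩

lemma chull_le_combo {f : ℝ → ℝ} (hf : ∀ y, 0 ≤ f y) {x a b l : ℝ}
    (h0 : 0 ≤ l) (h1 : l ≤ 1) (hx : l * a + (1 - l) * b = x) :
    chull f x ≤ l * f a + (1 - l) * f b :=
  csInf_le (cset_bddBelow hf x) ⟨a, b, l, h0, h1, hx, rfl⟩

lemma chull_le {f : ℝ → ℝ} (hf : ∀ y, 0 ≤ f y) (x : ℝ) : chull f x ≤ f x := by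
  have h := chull_le_combo hf (x := x) (a := x) (b := x) (l := 1) zero_le_one le_rfl (by ring)
  linarith

lemma chull_nonneg {f : ℝ → ℝ} (hf : ∀ y, 0 ≤ f y) (x : ℝ) : 0 ≤ chull f x :=
  le_csInf (cset_nonempty f x) (cset_nonneg hf x)

lemma le_chull {f h : ℝ → ℝ} (hconv : ConvexOn ℝ (univ : Set ℝ) h) (hle : ∀ y, h y ≤ f y)
    (x : ℝ) : h x ≤ chull f x := by
  refine le_csInf (cset_nonempty f x) ?_
  rintro y ⟨a, b, l, h0, h1, hx, rfl⟩
  have h2 := hconv.2 (mem_univ a) (mem_univ b) h0 (by linarith : (0:ℝ) ≤ 1 - l) (by ring)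
  simp only [smul_eq_mul] at h2
  rw [hx] at h2
  have h3 : l * h a ≤ l * f a := mul_le_mul_of_nonneg_left (hle a) h0
  have h4 : (1-l) * h b ≤ (1-l) * f b := mul_le_mul_of_nonneg_left (hle b) (by linarith)
  linarith

lemma chull_pair {f : ℝ → ℝ} (hf : ∀ y, 0 ≤ f y) (x : ℝ) {p q a b : ℝ}
    (hp : 0 ≤ p) (hq : 0 ≤ q) (hx : p * a + q * b = (p + q) * x) :
    (p + q) * chull f x ≤ p * f a + q * f b := by
  rcases eq_or_lt_of_le (add_nonneg hp hq) with h | h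
  · have hp0 : p = 0 := by linarith
    have hq0 : q = 0 := by linarith
    simp [hp0, hq0]
  · have hs : (0:ℝ) < p + q := h
    have h1q : (1:ℝ) - p/(p+q) = q/(p+q) := by field_simp; ring
    have hcomb : (p/(p+q)) * a + (1 - p/(p+q)) * b = x := by
      rw [h1q, div_mul_eq_mul_div, div_mul_eq_mul_div, ← add_div,
        div_eq_iff (ne_of_gt hs)]
      linarith [hx]
    have h2 := chull_le_combo hf (div_nonneg hp hs.le)
      ((div_le_one hs).2 (by linarith)) hcomb
    rw [h1q] at h2
    have h3 := mul_le_mul_of_nonneg_left h2 hs.le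
    calc (p + q) * chull f x ≤ (p+q) * (p / (p + q) * f a + q / (p + q) * f b) := h3
      _ = p * f a + q * f b := by field_simp
lemma chull_key {f : ℝ → ℝ} (hf : ∀ y, 0 ≤ f y) (x : ℝ) {n : ℕ} (c w : Fin n → ℝ)
    (hw : ∀ i, 0 ≤ w i) (hmean : ∑ i, w i * c i = (∑ i, w i) * x) :
    (∑ i, w i) * chull f x ≤ ∑ i, w i * f (c i) := by
  classical
  set L := Finset.univ.filter (fun i => c i ≤ x) with hL
  set R := Finset.univ.filter (fun i => ¬ c i ≤ x) with hR
  have hsplit : ∀ g : Fin n → ℝ, ∑ i, g i = ∑ i ∈ L, g i + ∑ i ∈ R, g i := fun g =>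
    (Finset.sum_filter_add_sum_filter_not Finset.univ _ g).symm
  have hLmem : ∀ i ∈ L, c i ≤ x := fun i hi => (Finset.mem_filter.1 hi).2
  have hRmem : ∀ i ∈ R, x < c i := fun i hi => not_le.1 (Finset.mem_filter.1 hi).2
  set S := ∑ i ∈ L, w i * (x - c i) with hSdef
  have key0 : ∑ i, w i * (x - c i) = 0 := by
    calc ∑ i, w i * (x - c i) = ∑ i, (w i * x - w i * c i) := by
          refine Finset.sum_congr rfl (fun i _ => by ring)
      _ = (∑ i, w i * x) - ∑ i, w i * c i := Finset.sum_sub_distrib _ _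
      _ = (∑ i, w i) * x - ∑ i, w i * c i := by rw [Finset.sum_mul]
      _ = 0 := by rw [hmean]; ring
  have hS1 : S + ∑ i ∈ R, w i * (x - c i) = 0 := by
    rw [hSdef, ← hsplit, key0]
  have hS2 : ∑ i ∈ R, w i * (c i - x) = S := by
    have : ∑ i ∈ R, w i * (c i - x) = - ∑ i ∈ R, w i * (x - c i) := by
      rw [← Finset.sum_neg_distrib]
      exact Finset.sum_congr rfl (fun i _ => by ring)
    rw [this]; linarith
  have hLnn : ∀ i ∈ L, 0 ≤ w i * (x - c i) :=
    fun i hi => mul_nonneg (hw i) (sub_nonneg.2 (hLmem i hi))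
  have hRnn : ∀ i ∈ R, 0 ≤ w i * (c i - x) :=
    fun i hi => mul_nonneg (hw i) (sub_nonneg.2 (hRmem i hi).le)
  have hSnn : 0 ≤ S := Finset.sum_nonneg hLnn
  rcases hSnn.eq_or_lt with hS0 | hSpos
  · -- S = 0 case
    have hterm0L : ∀ i ∈ L, w i * (x - c i) = 0 :=
      (Finset.sum_eq_zero_iff_of_nonneg hLnn).1 hS0.symm
    have htermR : ∀ j ∈ R, w j * (c j - x) = 0 :=
      (Finset.sum_eq_zero_iff_of_nonneg hRnn).1 (by rw [hS2, ← hS0])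
    have hwR : ∀ j ∈ R, w j = 0 := by
      intro j hj
      rcases mul_eq_zero.1 (htermR j hj) with h | h
      · exact h
      · exact absurd (sub_eq_zero.1 h) (ne_of_gt (hRmem j hj))
    have hRz1 : ∑ i ∈ R, w i = 0 := Finset.sum_eq_zero hwR
    have hRz2 : ∑ i ∈ R, w i * f (c i) = 0 :=
      Finset.sum_eq_zero (fun i hi => by rw [hwR i hi]; ring)
    rw [hsplit (fun i => w i), hsplit (fun i => w i * f (c i)), hRz1, hRz2]
    simp only [add_zero]
    rw [Finset.sum_mul]
    refine Finset.sum_le_sum (fun i hi => ?_)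
    rcases (hw i).eq_or_lt with h | h
    · rw [← h]; simp
    · have hx0 : x - c i = 0 := by
        rcases mul_eq_zero.1 (hterm0L i hi) with h' | h'
        · exact absurd h'.symm (ne_of_lt h)
        · exact h'
      have hcx : c i = x := by linarith
      rw [hcx]
      exact mul_le_mul_of_nonneg_left (chull_le hf x) (hw i)
  · -- S > 0 case
    have hSne : S ≠ 0 := ne_of_gt hSpos
    have expL : ∀ i ∈ L, ∑ j ∈ R, w i * (w j * (c j - x)) / S = w i := by
      intro i hi
      rw [← Finset.sum_div, ← Finset.mul_sum, hS2]
      field_simp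
    have expR : ∀ j ∈ R, ∑ i ∈ L, w j * (w i * (x - c i)) / S = w j := by
      intro j hj
      rw [← Finset.sum_div, ← Finset.mul_sum, ← hSdef]
      field_simp
    have pairb : ∀ i ∈ L, ∀ j ∈ R,
        (w i * (w j * (c j - x)) / S + w j * (w i * (x - c i)) / S) * chull f x
          ≤ w i * (w j * (c j - x)) / S * f (c i) + w j * (w i * (x - c i)) / S * f (c j) := by
      intro i hi j hj
      refine chull_pair hf x ?_ ?_ ?_
      · exact div_nonneg (mul_nonneg (hw i) (hRnn j hj)) hSnn
      · exact div_nonneg (mul_nonneg (hw j) (hLnn i hi)) hSnn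
      · field_simp
        ring
    have main2 : ∑ i ∈ L, ∑ j ∈ R,
        ((w i * (w j * (c j - x)) / S + w j * (w i * (x - c i)) / S) * chull f x)
        ≤ ∑ i ∈ L, ∑ j ∈ R,
        (w i * (w j * (c j - x)) / S * f (c i) + w j * (w i * (x - c i)) / S * f (c j)) :=
      Finset.sum_le_sum (fun i hi => Finset.sum_le_sum (fun j hj => pairb i hi j hj))
    have lhs_eq : ∑ i ∈ L, ∑ j ∈ R,
        ((w i * (w j * (c j - x)) / S + w j * (w i * (x - c i)) / S) * chull f x)
        = (∑ i, w i) * chull f x := by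
      have e1 : ∑ i ∈ L, ∑ j ∈ R, (w i * (w j * (c j - x)) / S * chull f x)
          = (∑ i ∈ L, w i) * chull f x := by
        rw [Finset.sum_mul]
        refine Finset.sum_congr rfl (fun i hi => ?_)
        rw [← Finset.sum_mul, expL i hi]
      have e2 : ∑ i ∈ L, ∑ j ∈ R, (w j * (w i * (x - c i)) / S * chull f x)
          = (∑ j ∈ R, w j) * chull f x := by
        rw [Finset.sum_comm, Finset.sum_mul]
        refine Finset.sum_congr rfl (fun j hj => ?_)
        rw [← Finset.sum_mul, expR j hj]
      calc ∑ i ∈ L, ∑ j ∈ R,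
          ((w i * (w j * (c j - x)) / S + w j * (w i * (x - c i)) / S) * chull f x)
          = ∑ i ∈ L, ∑ j ∈ R, (w i * (w j * (c j - x)) / S * chull f x
              + w j * (w i * (x - c i)) / S * chull f x) := by
            refine Finset.sum_congr rfl (fun i _ => Finset.sum_congr rfl (fun j _ => by ring))
        _ = ∑ i ∈ L, (∑ j ∈ R, w i * (w j * (c j - x)) / S * chull f x
              + ∑ j ∈ R, w j * (w i * (x - c i)) / S * chull f x) := by
            refine Finset.sum_congr rfl (fun i _ => Finset.sum_add_distrib)
        _ = ∑ i ∈ L, ∑ j ∈ R, w i * (w j * (c j - x)) / S * chull f x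
              + ∑ i ∈ L, ∑ j ∈ R, w j * (w i * (x - c i)) / S * chull f x :=
            Finset.sum_add_distrib
        _ = (∑ i ∈ L, w i) * chull f x + (∑ j ∈ R, w j) * chull f x := by rw [e1, e2]
        _ = (∑ i, w i) * chull f x := by rw [hsplit (fun i => w i)]; ring
    have rhs_eq : ∑ i ∈ L, ∑ j ∈ R,
        (w i * (w j * (c j - x)) / S * f (c i) + w j * (w i * (x - c i)) / S * f (c j))
        = ∑ i, w i * f (c i) := by
      have e1 : ∑ i ∈ L, ∑ j ∈ R, (w i * (w j * (c j - x)) / S * f (c i))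
          = ∑ i ∈ L, w i * f (c i) := by
        refine Finset.sum_congr rfl (fun i hi => ?_)
        rw [← Finset.sum_mul, expL i hi]
      have e2 : ∑ i ∈ L, ∑ j ∈ R, (w j * (w i * (x - c i)) / S * f (c j))
          = ∑ j ∈ R, w j * f (c j) := by
        rw [Finset.sum_comm]
        refine Finset.sum_congr rfl (fun j hj => ?_)
        rw [← Finset.sum_mul, expR j hj]
      calc ∑ i ∈ L, ∑ j ∈ R,
          (w i * (w j * (c j - x)) / S * f (c i) + w j * (w i * (x - c i)) / S * f (c j))
          = ∑ i ∈ L, (∑ j ∈ R, w i * (w j * (c j - x)) / S * f (c i)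
              + ∑ j ∈ R, w j * (w i * (x - c i)) / S * f (c j)) := by
            refine Finset.sum_congr rfl (fun i _ => Finset.sum_add_distrib)
        _ = ∑ i ∈ L, ∑ j ∈ R, w i * (w j * (c j - x)) / S * f (c i)
              + ∑ i ∈ L, ∑ j ∈ R, w j * (w i * (x - c i)) / S * f (c j) :=
            Finset.sum_add_distrib
        _ = ∑ i ∈ L, w i * f (c i) + ∑ j ∈ R, w j * f (c j) := by rw [e1, e2]
        _ = ∑ i, w i * f (c i) := (hsplit (fun i => w i * f (c i))).symm
    rw [← lhs_eq, ← rhs_eq]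
    exact main2
lemma chull_convex {f : ℝ → ℝ} (hf : ∀ y, 0 ≤ f y) :
    ConvexOn ℝ (univ : Set ℝ) (chull f) := by
  refine ⟨convex_univ, ?_⟩
  intro x _ y _ p q hp hq hpq
  simp only [smul_eq_mul]
  refine le_of_forall_pos_le_add ?_
  intro ε hε
  have hε2 : (0:ℝ) < ε/2 := by linarith
  obtain ⟨y₁, hy₁mem, hy₁⟩ := exists_lt_of_csInf_lt (cset_nonempty f x)
    (lt_add_of_pos_right (sInf (cset f x)) hε2)
  obtain ⟨y₂, hy₂mem, hy₂⟩ := exists_lt_of_csInf_lt (cset_nonempty f y)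
    (lt_add_of_pos_right (sInf (cset f y)) hε2)
  obtain ⟨a₁, b₁, l₁, hl₁0, hl₁1, hx₁, hv₁⟩ := hy₁mem
  obtain ⟨a₂, b₂, l₂, hl₂0, hl₂1, hx₂, hv₂⟩ := hy₂mem
  have hkey := chull_key hf (p * x + q * y) (n := 4)
    ![a₁, b₁, a₂, b₂] ![p * l₁, p * (1 - l₁), q * l₂, q * (1 - l₂)]
    (by
      intro i
      fin_cases i <;> simp <;>
        first
          | exact mul_nonneg hp hl₁0
          | exact mul_nonneg hp (by linarith)
          | exact mul_nonneg hq hl₂0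
          | exact mul_nonneg hq (by linarith))
    (by
      simp [Fin.sum_univ_four]
      linear_combination p * hx₁ + q * hx₂ - (p*x + q*y) * hpq)
  simp only [Fin.sum_univ_four] at hkey
  simp only [Matrix.cons_val_zero, Matrix.cons_val_one, Matrix.head_cons,
    Matrix.cons_val_two, Matrix.tail_cons, Matrix.cons_val_three] at hkey
  have hsum1 : p * l₁ + p * (1 - l₁) + q * l₂ + q * (1 - l₂) = 1 := by linarith [hpq]; 
  rw [hsum1, one_mul] at hkey
  have hrhs : p * l₁ * f a₁ + p * (1 - l₁) * f b₁ + q * l₂ * f a₂ + q * (1 - l₂) * f b₂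
      = p * y₁ + q * y₂ := by rw [← hv₁, ← hv₂]; ring
  rw [hrhs] at hkey
  have h1 : p * y₁ ≤ p * (chull f x + ε/2) := mul_le_mul_of_nonneg_left hy₁.le hp
  have h2 : q * y₂ ≤ q * (chull f y + ε/2) := mul_le_mul_of_nonneg_left hy₂.le hq
  have : chull f (p * x + q * y) ≤ p * (chull f x + ε/2) + q * (chull f y + ε/2) := by
    calc chull f (p * x + q * y) ≤ p * y₁ + q * y₂ := hkey
      _ ≤ _ := by linarith
  nlinarith [this, hpq, hp, hq]
lemma intP (μ : Measure ℝ) [IsFiniteMeasure μ] (h : Integrable (fun x => x) μ) (k : ℝ) :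
    Integrable (fun x => max (k - x) 0) μ := ((integrable_const k).sub h).pos_part

lemma P_mono (μ : Measure ℝ) [IsFiniteMeasure μ] (h : Integrable (fun x => x) μ) {a b : ℝ} (hab : a ≤ b) :
    ∫ x, max (a - x) 0 ∂μ ≤ ∫ x, max (b - x) 0 ∂μ :=
  integral_mono (intP μ h a) (intP μ h b) (fun x => max_le_max (by linarith) le_rfl)

lemma P_nonneg (μ : Measure ℝ) (a : ℝ) : 0 ≤ ∫ x, max (a - x) 0 ∂μ :=
  integral_nonneg (fun x => le_max_right _ 0)

lemma P_lb (μ : Measure ℝ) [IsProbabilityMeasure μ] (h : Integrable (fun x => x) μ) (a : ℝ) :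
    a - ∫ x, x ∂μ ≤ ∫ x, max (a - x) 0 ∂μ := by
  have h1 : ∫ x, (a - x) ∂μ ≤ ∫ x, max (a - x) 0 ∂μ :=
    integral_mono ((integrable_const a).sub h) (intP μ h a) (fun x => le_max_left _ _)
  have h2 : ∫ x, (a - x) ∂μ = a - ∫ x, x ∂μ := by
    rw [integral_sub (integrable_const a) h, integral_const]
    simp
  linarith

lemma P_one (μ : Measure ℝ) [IsFiniteMeasure μ] (h : Integrable (fun x => x) μ) {a b : ℝ} (hab : a ≤ b) :
    (b - a) * (μ (Iic a)).toReal ≤ (∫ x, max (b - x) 0 ∂μ) - ∫ x, max (a - x) 0 ∂μ := by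
  have hint : ∫ x, (Iic a).indicator (fun _ => b - a) x ∂μ = (μ (Iic a)).toReal * (b - a) := by
    rw [integral_indicator_const (b - a) measurableSet_Iic, smul_eq_mul]
    rfl
  have hmono : ∫ x, (Iic a).indicator (fun _ => b - a) x ∂μ
      ≤ ∫ x, (max (b - x) 0 - max (a - x) 0) ∂μ := by
    refine integral_mono ((integrable_const (b - a)).indicator measurableSet_Iic)
      ((intP μ h b).sub (intP μ h a)) ?_
    intro x
    simp only [Pi.sub_apply]
    by_cases hx : x ≤ a
    · rw [indicator_of_mem (mem_Iic.2 hx)]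
      rw [max_eq_left (by linarith : (0:ℝ) ≤ b - x), max_eq_left (by linarith : (0:ℝ) ≤ a - x)]
      ring_nf
      exact le_rfl
    · rw [indicator_of_notMem (by simpa using hx)]
      push_neg at hx
      rw [max_eq_right (by linarith : a - x ≤ (0:ℝ))]
      simp only [sub_zero]
      exact le_max_right _ 0
  rw [integral_sub (intP μ h b) (intP μ h a)] at hmono
  rw [hint] at hmono
  linarith [hmono, mul_comm (b - a) (μ (Iic a)).toReal]
lemma P_two (μ : Measure ℝ) [IsFiniteMeasure μ] (h : Integrable (fun x => x) μ)
    {a b c : ℝ} (hab : a ≤ b) (hbc : b ≤ c) :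
    (∫ x, max (b - x) 0 ∂μ) - ∫ x, max (a - x) 0 ∂μ ≤ (b - a) * (μ (Iio c)).toReal := by
  have hint : ∫ x, (Iio c).indicator (fun _ => b - a) x ∂μ = (μ (Iio c)).toReal * (b - a) := by
    rw [integral_indicator_const (b - a) measurableSet_Iio, smul_eq_mul]
    rfl
  have hmono : ∫ x, (max (b - x) 0 - max (a - x) 0) ∂μ
      ≤ ∫ x, (Iio c).indicator (fun _ => b - a) x ∂μ := by
    refine integral_mono ((intP μ h b).sub (intP μ h a))
      ((integrable_const (b - a)).indicator measurableSet_Iio) ?_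
    intro x
    simp only [Pi.sub_apply]
    by_cases hx : x < c
    · rw [indicator_of_mem (mem_Iio.2 hx)]
      have h1 : max (b - x) 0 ≤ max (a - x) 0 + (b - a) := by
        rcases le_total (b - x) 0 with h' | h'
        · rw [max_eq_right h']
          have := le_max_right (a - x) (0:ℝ)
          linarith
        · rw [max_eq_left h']
          have := le_max_left (a - x) (0:ℝ)
          linarith
      linarith
    · rw [indicator_of_notMem (by simpa using hx)]
      push_neg at hx
      rw [max_eq_right (by linarith : b - x ≤ (0:ℝ)),
        max_eq_right (by linarith : a - x ≤ (0:ℝ))]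
      simp
  rw [integral_sub (intP μ h b) (intP μ h a)] at hmono
  rw [hint] at hmono
  linarith [mul_comm (b - a) (μ (Iio c)).toReal]
lemma convexOn_put (j : ℝ) : ConvexOn ℝ (univ : Set ℝ) (fun x => max (j - x) 0) := by
  have c1 : ConvexOn ℝ (univ : Set ℝ) (fun x : ℝ => j - x) := by
    refine ⟨convex_univ, ?_⟩
    intro x _ y _ p q hp hq hpq
    simp only [smul_eq_mul]
    have heq : j - (p*x + q*y) = p*(j-x) + q*(j-y) := by linear_combination (-j) * hpq
    exact le_of_eq heq
  have c0 : ConvexOn ℝ (univ : Set ℝ) (fun _ : ℝ => (0:ℝ)) := convexOn_const 0 convex_univ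
  have hsup := c1.sup c0
  have heq : ((fun x : ℝ => j - x) ⊔ (fun _ : ℝ => (0:ℝ))) = fun x => max (j - x) 0 := by
    funext x
    simp [Pi.sup_apply]
  rwa [heq] at hsup
set_option maxHeartbeats 1000000 in
theorem stmt15
    (μ ν : Measure ℝ)
    [IsProbabilityMeasure μ] [IsProbabilityMeasure ν]
    (hμint : Integrable (fun x => x) μ) (hνint : Integrable (fun x => x) ν)
    (hcx : ∀ f : ℝ → ℝ, ConvexOn ℝ Set.univ f → Integrable f μ → Integrable f ν →
      ∫ x, f x ∂μ ≤ ∫ x, f x ∂ν)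
    (Pμ Pν D : ℝ → ℝ)
    (hPμ : ∀ k, Pμ k = ∫ x, max (k - x) 0 ∂μ)
    (hPν : ∀ k, Pν k = ∫ x, max (k - x) 0 ∂ν)
    (hD : ∀ k, D k = Pν k - Pμ k)
    (hDconn : Set.OrdConnected {k : ℝ | 0 < D k})
    (G : ℝ → ℝ) (hGmono : MonotoneOn G (Set.Ioo 0 1))
    (hGq : ∀ u ∈ Set.Ioo (0:ℝ) 1,
      (μ (Set.Iio (G u))).toReal ≤ u ∧ u ≤ (μ (Set.Iic (G u))).toReal)
    (E Ec : ℝ → ℝ → ℝ)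
    (hE : ∀ u ∈ Set.Ioo (0:ℝ) 1, ∀ k, E u k = Pν k - Pμ (min k (G u)) - u * max (k - G u) 0)
    (hEcConv : ∀ u ∈ Set.Ioo (0:ℝ) 1, ConvexOn ℝ Set.univ (Ec u))
    (hEcLe : ∀ u ∈ Set.Ioo (0:ℝ) 1, ∀ k, Ec u k ≤ E u k)
    (hEcMax : ∀ u ∈ Set.Ioo (0:ℝ) 1, ∀ h : ℝ → ℝ, ConvexOn ℝ Set.univ h →
      (∀ k, h k ≤ E u k) → ∀ k, h k ≤ Ec u k)
    (hGleft : ∀ u ∈ Set.Ioo (0:ℝ) 1, G u = sInf {x : ℝ | u ≤ (μ (Set.Iic x)).toReal})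
    :
    ∀ v ∈ Set.Ioo (0:ℝ) 1, ∀ k : ℝ,
      Tendsto (fun u => E u k) (nhdsWithin v (Set.Iio v)) (nhds (E v k)) ∧
      Tendsto (fun u => E u k) (nhdsWithin v (Set.Ioi v)) (nhds (E v k)) ∧
      Tendsto (fun u => Ec u k) (nhdsWithin v (Set.Iio v)) (nhds (Ec v k)) ∧
      Tendsto (fun u => Ec u k) (nhdsWithin v (Set.Ioi v)) (nhds (Ec v k)) := by
  intro v hv k
  obtain ⟨hv0, hv1⟩ := hv
  set u₀ : ℝ := v / 2 with hu₀def
  set u₁ : ℝ := (v + 1) / 2 with hu₁def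
  have hu₀0 : 0 < u₀ := by simp only [hu₀def]; linarith
  have hu₀v : u₀ < v := by simp only [hu₀def]; linarith
  have hvu₁ : v < u₁ := by simp only [hu₁def]; linarith
  have hu₁1 : u₁ < 1 := by simp only [hu₁def]; linarith
  have memIoo : ∀ u ∈ Icc u₀ u₁, u ∈ Ioo (0:ℝ) 1 :=
    fun u hu => ⟨lt_of_lt_of_le hu₀0 hu.1, lt_of_le_of_lt hu.2 hu₁1⟩
  have hu₀m : u₀ ∈ Ioo (0:ℝ) 1 := ⟨hu₀0, by linarith⟩
  have hu₁m : u₁ ∈ Ioo (0:ℝ) 1 := ⟨by linarith, hu₁1⟩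
  have hvIcc : v ∈ Icc u₀ u₁ := ⟨hu₀v.le, hvu₁.le⟩
  -- translated potential facts
  have Pμ_mono : ∀ {a b : ℝ}, a ≤ b → Pμ a ≤ Pμ b := by
    intro a b hab; rw [hPμ, hPμ]; exact P_mono μ hμint hab
  have hPμν : ∀ j : ℝ, Pμ j ≤ Pν j := by
    intro j
    rw [hPμ, hPν]
    exact hcx _ (convexOn_put j) (intP μ hμint j) (intP ν hνint j)
  have P1 : ∀ {a b : ℝ}, a ≤ b → (b - a) * (μ (Iic a)).toReal ≤ Pμ b - Pμ a := by
    intro a b hab; rw [hPμ, hPμ]; exact P_one μ hμint hab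
  have P2 : ∀ {a b c : ℝ}, a ≤ b → b ≤ c → Pμ b - Pμ a ≤ (b - a) * (μ (Iio c)).toReal := by
    intro a b c hab hbc; rw [hPμ, hPμ]; exact P_two μ hμint hab hbc
  have Pν_lb : ∀ a : ℝ, a - ∫ x, x ∂ν ≤ Pν a := by
    intro a; rw [hPν]; exact P_lb ν hνint a
  -- E is nonnegative
  have Epos : ∀ u ∈ Ioo (0:ℝ) 1, ∀ j : ℝ, 0 ≤ E u j := by
    intro u hu j
    rw [hE u hu j]
    rcases le_or_gt j (G u) with hj | hj
    · rw [min_eq_left hj, max_eq_right (by linarith : j - G u ≤ 0)]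
      have := hPμν j
      linarith
    · rw [min_eq_right hj.le, max_eq_left (by linarith : (0:ℝ) ≤ j - G u)]
      have h1 := P1 hj.le
      have h2 := (hGq u hu).2
      have h3 : u * (j - G u) ≤ (μ (Iic (G u))).toReal * (j - G u) :=
        mul_le_mul_of_nonneg_right h2 (by linarith)
      have h4 : (μ (Iic (G u))).toReal * (j - G u) = (j - G u) * (μ (Iic (G u))).toReal :=
        mul_comm _ _
      have h5 := hPμν j
      linarith
  -- monotonicity and Lipschitz property of E in u
  have Emono : ∀ u w : ℝ, u ∈ Ioo (0:ℝ) 1 → w ∈ Ioo (0:ℝ) 1 → u ≤ w → ∀ j : ℝ,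
      0 ≤ E u j - E w j ∧ E u j - E w j ≤ (w - u) * max (j - G u) 0 := by
    intro u w hu hw huw j
    have hgg : G u ≤ G w := hGmono hu hw huw
    rw [hE u hu j, hE w hw j]
    rcases le_or_gt j (G u) with hj | hj
    · rw [min_eq_left hj, min_eq_left (le_trans hj hgg),
        max_eq_right (by linarith : j - G u ≤ 0),
        max_eq_right (by linarith : j - G w ≤ 0)]
      constructor
      · linarith
      · have : (0:ℝ) ≤ (w - u) * 0 := by simp
        linarith
    · rw [min_eq_right hj.le, max_eq_left (by linarith : (0:ℝ) ≤ j - G u)]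
      rcases le_or_gt j (G w) with hj2 | hj2
      · rw [min_eq_left hj2, max_eq_right (by linarith : j - G w ≤ 0)]
        have h1 := P1 (le_of_lt hj)
        have h2 := (hGq u hu).2
        have h3 : u * (j - G u) ≤ (μ (Iic (G u))).toReal * (j - G u) :=
          mul_le_mul_of_nonneg_right h2 (by linarith)
        have h4 : (μ (Iic (G u))).toReal * (j - G u) = (j - G u) * (μ (Iic (G u))).toReal :=
          mul_comm _ _
        have h5 := P2 hj.le hj2
        have h6 := (hGq w hw).1
        have h7 : (j - G u) * (μ (Iio (G w))).toReal ≤ (j - G u) * w :=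
          mul_le_mul_of_nonneg_left h6 (by linarith)
        constructor
        · linarith
        · linarith
      · rw [min_eq_right hj2.le, max_eq_left (by linarith : (0:ℝ) ≤ j - G w)]
        have h1 := P1 hgg
        have h2 := (hGq u hu).2
        have h3 : u * (G w - G u) ≤ (μ (Iic (G u))).toReal * (G w - G u) :=
          mul_le_mul_of_nonneg_right h2 (by linarith)
        have h4 : (μ (Iic (G u))).toReal * (G w - G u) = (G w - G u) * (μ (Iic (G u))).toReal :=
          mul_comm _ _
        have h5 := P2 hgg (le_refl (G w))
        have h6 := (hGq w hw).1
        have h7 : (G w - G u) * (μ (Iio (G w))).toReal ≤ (G w - G u) * w :=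
          mul_le_mul_of_nonneg_left h6 (by linarith)
        constructor
        · nlinarith
        · nlinarith
    -- growth bound
  set Mν : ℝ := ∫ x, x ∂ν with hMν
  set g₀ : ℝ := G u₀ with hg₀
  set pstar : ℝ → ℝ := fun j => max (j - g₀) 0 with hpstar
  set A : ℝ := 1 - u₁ with hA
  have hApos : 0 < A := by rw [hA]; linarith
  set C₀ : ℝ := |Mν| + |Pμ (G u₁)| + u₁ * |g₀| + 1 with hC₀
  have hC₀pos : 0 < C₀ := by
    have h1 : 0 ≤ u₁ * |g₀| := mul_nonneg (by linarith) (abs_nonneg _)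
    rw [hC₀]
    linarith [abs_nonneg Mν, abs_nonneg (Pμ (G u₁))]
  have Egrow : ∀ w ∈ Icc u₀ u₁, ∀ j : ℝ, A * j - C₀ ≤ E w j := by
    intro w hw j
    have hwm := memIoo w hw
    by_cases hj : A * j - C₀ ≤ 0
    · linarith [Epos w hwm j]
    · push_neg at hj
      have hjpos : 0 < j := by nlinarith
      have base : Pν j - Pμ (G w) - w * max (j - G w) 0 ≤ E w j := by
        rw [hE w hwm j]
        rcases le_or_gt j (G w) with h | h
        · rw [min_eq_left h]
          have := Pμ_mono h
          linarith
        · rw [min_eq_right h.le]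
      have c1 : j - Mν ≤ Pν j := Pν_lb j
      have c2 : Pμ (G w) ≤ |Pμ (G u₁)| :=
        le_trans (Pμ_mono (hGmono hwm hu₁m hw.2)) (le_abs_self _)
      have c3 : w * max (j - G w) 0 ≤ u₁ * max (j - g₀) 0 := by
        refine mul_le_mul hw.2 ?_ (le_max_right _ _) (by linarith)
        exact max_le_max (by linarith [hGmono hu₀m hwm hw.1]) le_rfl
      have bound : u₁ * max (j - g₀) 0 ≤ u₁ * j + u₁ * |g₀| + 1 := by
        rcases le_total (j - g₀) 0 with h' | h'
        · rw [max_eq_right h']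
          have e1 : 0 ≤ u₁ * j := mul_nonneg (by linarith) hjpos.le
          have e2 : 0 ≤ u₁ * |g₀| := mul_nonneg (by linarith) (abs_nonneg _)
          linarith
        · rw [max_eq_left h']
          have e1 : u₁ * (j - g₀) = u₁ * j + u₁ * (-g₀) := by ring
          have e2 : u₁ * (-g₀) ≤ u₁ * |g₀| :=
            mul_le_mul_of_nonneg_left (neg_le_abs g₀) (by linarith)
          linarith
      have eA : A * j = j - u₁ * j := by rw [hA]; ring
      rw [hC₀]
      linarith [le_abs_self Mν, neg_abs_le Mν]
  -- constants for the Lipschitz bound on the convex hull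
  set M : ℝ := E u₀ k + 1 with hM
  have hMpos : 0 < M := by
    have := Epos u₀ hu₀m k
    rw [hM]; linarith
  set b₁ : ℝ := max g₀ ((C₀ + 1) / A) with hb₁
  have hb₁g₀ : g₀ ≤ b₁ := le_max_left _ _
  have hb₁C : C₀ + 1 ≤ A * b₁ := by
    have h1 : (C₀ + 1) / A ≤ b₁ := le_max_right _ _
    rw [div_le_iff₀ hApos] at h1
    linarith [h1, mul_comm b₁ A]
  set K : ℝ := pstar k + (b₁ - g₀) + M / A with hK
  have hKnn : 0 ≤ K := by
    have h1 : 0 ≤ pstar k := le_max_right _ _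
    have h2 : 0 ≤ M / A := div_nonneg hMpos.le hApos.le
    rw [hK]; linarith
  have pstar_mono : ∀ {a b : ℝ}, a ≤ b → pstar a ≤ pstar b :=
    fun hab => max_le_max (by linarith) le_rfl
  have pstar_nn : ∀ a : ℝ, 0 ≤ pstar a := fun a => le_max_right _ _
  -- bound on the pstar-combination for low-value combinations
  have half : ∀ w ∈ Icc u₀ u₁, ∀ a b l : ℝ, 0 ≤ l → l ≤ 1 → l * a + (1 - l) * b = k →
      l * E w a + (1 - l) * E w b ≤ M → a ≤ b →
      l * pstar a + (1 - l) * pstar b ≤ K := by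
    intro w hw a b l h0 h1 hcomb hval hab
    have hwm := memIoo w hw
    have hak : a ≤ k := by
      have e : k - a = (1 - l) * (b - a) := by rw [← hcomb]; ring
      have hp : 0 ≤ (1 - l) * (b - a) := mul_nonneg (by linarith) (by linarith)
      linarith
    have hkb : k ≤ b := by
      have e : b - k = l * (b - a) := by rw [← hcomb]; ring
      have hp : 0 ≤ l * (b - a) := mul_nonneg h0 (by linarith)
      linarith
    have t1 : l * pstar a ≤ pstar k :=
      le_trans (mul_le_of_le_one_left (pstar_nn a) h1) (pstar_mono hak)
    have hEa : 0 ≤ l * E w a := mul_nonneg h0 (Epos w hwm a)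
    have hEb : 0 ≤ E w b := Epos w hwm b
    have t2 : (1 - l) * pstar b ≤ (b₁ - g₀) + M / A := by
      by_cases hb : b ≤ b₁
      · have := pstar_mono hb
        have h2 : (1 - l) * pstar b ≤ pstar b₁ :=
          le_trans (mul_le_of_le_one_left (pstar_nn b) (by linarith)) this
        have h3 : pstar b₁ = b₁ - g₀ := max_eq_left (by linarith)
        have h4 : 0 ≤ M / A := div_nonneg hMpos.le hApos.le
        rw [h3] at h2
        linarith
      · push_neg at hb
        have e1 : (1 - l) * E w b ≤ M := by linarith
        have e2 : A * b - C₀ ≤ E w b := Egrow w hw b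
        have e3 : A * (b - b₁) ≤ E w b := by
          have : A * (b - b₁) = A * b - A * b₁ := by ring
          linarith
        have e4 : (1 - l) * (A * (b - b₁)) ≤ M := by
          have h5 : (1 - l) * (A * (b - b₁)) ≤ (1 - l) * E w b :=
            mul_le_mul_of_nonneg_left e3 (by linarith)
          linarith
        have e5 : (1 - l) * (b - b₁) ≤ M / A := by
          rw [le_div_iff₀ hApos]
          calc (1 - l) * (b - b₁) * A = (1 - l) * (A * (b - b₁)) := by ring
            _ ≤ M := e4
        have e6 : pstar b = b - g₀ := max_eq_left (by linarith)
        have e7 : (1 - l) * (b₁ - g₀) ≤ b₁ - g₀ :=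
          mul_le_of_le_one_left (by linarith) (by linarith)
        have e8 : (1 - l) * pstar b = (1 - l) * (b - b₁) + (1 - l) * (b₁ - g₀) := by
          rw [e6]; ring
        linarith
    rw [hK]
    linarith
  have Tbound : ∀ w ∈ Icc u₀ u₁, ∀ a b l : ℝ, 0 ≤ l → l ≤ 1 → l * a + (1 - l) * b = k →
      l * E w a + (1 - l) * E w b ≤ M →
      l * pstar a + (1 - l) * pstar b ≤ K := by
    intro w hw a b l h0 h1 hcomb hval
    rcases le_total a b with hab | hba
    · exact half w hw a b l h0 h1 hcomb hval hab
    · have h := half w hw b a (1 - l) (by linarith) (by linarith)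
        (by linarith) (by linarith) hba
      have e : 1 - (1 - l) = l := by ring
      rw [e] at h
      linarith
  -- Lipschitz estimate for the convex hull at k
  have EposIoo : ∀ u ∈ Icc u₀ u₁, ∀ y : ℝ, 0 ≤ E u y := fun u hu => Epos u (memIoo u hu)
  have lip : ∀ u w : ℝ, u ∈ Icc u₀ u₁ → w ∈ Icc u₀ u₁ → u ≤ w →
      chull (E w) k ≤ chull (E u) k ∧ chull (E u) k ≤ chull (E w) k + (w - u) * K := by
    intro u w hu hw huw
    have hum := memIoo u hu
    have hwm := memIoo w hw
    constructor
    · refine le_csInf (cset_nonempty (E u) k) ?_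
      rintro y ⟨a, b, l, h0, h1, hx, rfl⟩
      have c1 := chull_le_combo (EposIoo w hw) h0 h1 hx
      have m1 := (Emono u w hum hwm huw a).1
      have m2 := (Emono u w hum hwm huw b).1
      have c2 : l * E w a ≤ l * E u a := mul_le_mul_of_nonneg_left (by linarith) h0
      have c3 : (1 - l) * E w b ≤ (1 - l) * E u b :=
        mul_le_mul_of_nonneg_left (by linarith) (by linarith)
      linarith
    · refine le_of_forall_pos_le_add ?_
      intro δ hδ
      have hδ1 : 0 < min δ 1 := lt_min hδ one_pos
      obtain ⟨y, hymem, hylt⟩ := exists_lt_of_csInf_lt (cset_nonempty (E w) k)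
        (lt_add_of_pos_right (sInf (cset (E w) k)) hδ1)
      obtain ⟨a, b, l, h0, h1, hx, hval⟩ := hymem
      have hyM : y ≤ M := by
        have h2 : chull (E w) k ≤ E w k := chull_le (EposIoo w hw) k
        have h3 := (Emono u₀ w hu₀m hwm hw.1 k).1
        have h4 : min δ 1 ≤ 1 := min_le_right _ _
        rw [hM]
        have : sInf (cset (E w) k) = chull (E w) k := rfl
        rw [this] at hylt
        linarith
      have hT := Tbound w hw a b l h0 h1 hx (by rw [hval]; exact hyM)
      have key1 : chull (E u) k ≤ l * E u a + (1 - l) * E u b :=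
        chull_le_combo (EposIoo u hu) h0 h1 hx
      have hEa : E u a ≤ E w a + (w - u) * pstar a := by
        have m1 := (Emono u w hum hwm huw a).2
        have m2 : max (a - G u) 0 ≤ pstar a := by
          rw [hpstar]
          exact max_le_max (by linarith [hGmono hu₀m hum hu.1]) le_rfl
        have m3 : (w - u) * max (a - G u) 0 ≤ (w - u) * pstar a :=
          mul_le_mul_of_nonneg_left m2 (by linarith)
        linarith
      have hEb : E u b ≤ E w b + (w - u) * pstar b := by
        have m1 := (Emono u w hum hwm huw b).2
        have m2 : max (b - G u) 0 ≤ pstar b := by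
          rw [hpstar]
          exact max_le_max (by linarith [hGmono hu₀m hum hu.1]) le_rfl
        have m3 : (w - u) * max (b - G u) 0 ≤ (w - u) * pstar b :=
          mul_le_mul_of_nonneg_left m2 (by linarith)
        linarith
      have key2 : l * E u a + (1 - l) * E u b
          ≤ y + (w - u) * (l * pstar a + (1 - l) * pstar b) := by
        have c2 : l * E u a ≤ l * (E w a + (w - u) * pstar a) :=
          mul_le_mul_of_nonneg_left hEa h0
        have c3 : (1 - l) * E u b ≤ (1 - l) * (E w b + (w - u) * pstar b) :=
          mul_le_mul_of_nonneg_left hEb (by linarith)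
        have c4 : l * (E w a + (w - u) * pstar a) + (1 - l) * (E w b + (w - u) * pstar b)
            = (l * E w a + (1 - l) * E w b)
              + (w - u) * (l * pstar a + (1 - l) * pstar b) := by ring
        rw [← hval]
        linarith
      have key3 : (w - u) * (l * pstar a + (1 - l) * pstar b) ≤ (w - u) * K :=
        mul_le_mul_of_nonneg_left hT (by linarith)
      have hylt' : y < chull (E w) k + min δ 1 := hylt
      have h4 : min δ 1 ≤ δ := min_le_left _ _
      linarith
  -- identification of Ec with the convex hull
  have EcId : ∀ u ∈ Icc u₀ u₁, Ec u k = chull (E u) k := by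
    intro u hu
    have hum := memIoo u hu
    refine le_antisymm ?_ ?_
    · refine le_csInf (cset_nonempty (E u) k) ?_
      rintro y ⟨a, b, l, h0, h1, hx, rfl⟩
      have h2 := (hEcConv u hum).2 (mem_univ a) (mem_univ b) h0
        (by linarith : (0:ℝ) ≤ 1 - l) (by ring)
      simp only [smul_eq_mul] at h2
      rw [hx] at h2
      have h3 : l * Ec u a ≤ l * E u a :=
        mul_le_mul_of_nonneg_left (hEcLe u hum a) h0
      have h4 : (1 - l) * Ec u b ≤ (1 - l) * E u b :=
        mul_le_mul_of_nonneg_left (hEcLe u hum b) (by linarith)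
      linarith
    · exact hEcMax u hum (chull (E u)) (chull_convex (Epos u hum))
        (fun j => chull_le (Epos u hum) j) k
  -- Lipschitz bounds around v
  have EcLip : ∀ u ∈ Icc u₀ u₁, |Ec u k - Ec v k| ≤ K * |u - v| := by
    intro u hu
    rw [EcId u hu, EcId v hvIcc]
    rcases le_total u v with h | h
    · have hl := lip u v hu hvIcc h
      have habs : |u - v| = v - u := by rw [abs_of_nonpos (by linarith)]; ring
      rw [habs, abs_le]
      constructor
      · have : 0 ≤ K * (v - u) := mul_nonneg hKnn (by linarith)
        linarith [hl.1]
      · have e : (v - u) * K = K * (v - u) := mul_comm _ _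
        linarith [hl.2]
    · have hl := lip v u hvIcc hu h
      have habs : |u - v| = u - v := abs_of_nonneg (by linarith)
      rw [habs, abs_le]
      constructor
      · have e : (u - v) * K = K * (u - v) := mul_comm _ _
        linarith [hl.2]
      · have : 0 ≤ K * (u - v) := mul_nonneg hKnn (by linarith)
        linarith [hl.1]
  have ELip : ∀ u ∈ Icc u₀ u₁, |E u k - E v k| ≤ (pstar k + 1) * |u - v| := by
    intro u hu
    have hum := memIoo u hu
    have hp : max (k - G u₀) 0 ≤ pstar k + 1 := by
      rw [hpstar, hg₀]; linarith [le_refl (max (k - G u₀) 0)]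
    rcases le_total u v with h | h
    · have hm := Emono u v hum ⟨hv0, hv1⟩ h k
      have habs : |u - v| = v - u := by rw [abs_of_nonpos (by linarith)]; ring
      have m2 : max (k - G u) 0 ≤ pstar k + 1 := by
        refine le_trans (max_le_max (by linarith [hGmono hu₀m hum hu.1]) le_rfl) hp
      have m3 : (v - u) * max (k - G u) 0 ≤ (v - u) * (pstar k + 1) :=
        mul_le_mul_of_nonneg_left m2 (by linarith)
      rw [habs, abs_le]
      constructor
      · have : 0 ≤ (pstar k + 1) * (v - u) :=
          mul_nonneg (by linarith [pstar_nn k]) (by linarith)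
        linarith [hm.1]
      · have e : (v - u) * (pstar k + 1) = (pstar k + 1) * (v - u) := mul_comm _ _
        linarith [hm.2]
    · have hm := Emono v u ⟨hv0, hv1⟩ hum h k
      have habs : |u - v| = u - v := abs_of_nonneg (by linarith)
      have m2 : max (k - G v) 0 ≤ pstar k + 1 := by
        refine le_trans (max_le_max (by linarith [hGmono hu₀m ⟨hv0, hv1⟩ hu₀v.le]) le_rfl) hp
      have m3 : (u - v) * max (k - G v) 0 ≤ (u - v) * (pstar k + 1) :=
        mul_le_mul_of_nonneg_left m2 (by linarith)
      rw [habs, abs_le]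
      constructor
      · have e : (u - v) * (pstar k + 1) = (pstar k + 1) * (u - v) := mul_comm _ _
        linarith [hm.2]
      · have : 0 ≤ (pstar k + 1) * (u - v) :=
          mul_nonneg (by linarith [pstar_nn k]) (by linarith)
        linarith [hm.1]
  -- general limit helper
  have helper : ∀ (φ : ℝ → ℝ) (B : ℝ), (∀ u ∈ Icc u₀ u₁, |φ u - φ v| ≤ B * |u - v|) →
      Tendsto φ (nhdsWithin v (Iio v)) (nhds (φ v)) ∧
      Tendsto φ (nhdsWithin v (Ioi v)) (nhds (φ v)) := by
    intro φ B hB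
    have hg : ∀ l : Filter ℝ, l ≤ nhds v → Tendsto (fun u => B * |u - v|) l (nhds 0) := by
      intro l hl
      have hcont : Continuous fun u : ℝ => B * |u - v| :=
        continuous_const.mul ((continuous_id.sub continuous_const).abs)
      have := hcont.tendsto v
      simp only [sub_self, abs_zero, mul_zero] at this
      exact this.mono_left hl
    constructor
    · rw [← tendsto_sub_nhds_zero_iff]
      refine squeeze_zero_norm' ?_ (hg _ nhdsWithin_le_nhds)
      filter_upwards [Ioo_mem_nhdsLT_of_mem (show v ∈ Ioc u₀ v from ⟨hu₀v, le_rfl⟩)] with u hu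
      rw [Real.norm_eq_abs]
      exact hB u ⟨hu.1.le, le_trans hu.2.le hvu₁.le⟩
    · rw [← tendsto_sub_nhds_zero_iff]
      refine squeeze_zero_norm' ?_ (hg _ nhdsWithin_le_nhds)
      filter_upwards [Ioo_mem_nhdsGT_of_mem (show v ∈ Ico v u₁ from ⟨le_rfl, hvu₁⟩)] with u hu
      rw [Real.norm_eq_abs]
      exact hB u ⟨le_trans hu₀v.le hu.1.le, hu.2.le⟩
  obtain ⟨t1, t2⟩ := helper (fun u => E u k) (pstar k + 1) ELip
  obtain ⟨t3, t4⟩ := helper (fun u => Ec u k) K EcLip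
  exact ⟨t1, t2, t3, t4⟩
end
end

section
/- For all 0 < u < v < 1 and every k ∈ ℝ: (ℰ_u^c)'(k−) − (v−u) ≤ (ℰ_v^c)'(k−) ≤ (ℰ_u^c)'(k−), and (ℰ_u^c)'(k+) − (v−u) ≤ (ℰ_v^c)'(k+) ≤ (ℰ_u^c)'(k+), where g'(k−) and g'(k+) denote the left and right derivatives of the convex function g at k. -/
open MeasureTheory Set Filter Topology



noncomputable def lD (F : ℝ → ℝ) (k : ℝ) : ℝ := sSup (slope F k '' Set.Iio k)
noncomputable def rD (F : ℝ → ℝ) (k : ℝ) : ℝ := sInf (slope F k '' Set.Ioi k)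

section SlopeBasics

variable {F : ℝ → ℝ} {k : ℝ}

lemma my_slope_mono (hF : ConvexOn ℝ Set.univ F) {x y : ℝ} (hx : x ≠ k) (hy : y ≠ k)
    (hxy : x ≤ y) : slope F k x ≤ slope F k y := by
  rw [slope_def_field, slope_def_field]
  exact hF.secant_mono (Set.mem_univ k) (Set.mem_univ x) (Set.mem_univ y) hx hy hxy

lemma lD_nonempty : ((slope F k '' Set.Iio k)).Nonempty :=
  ⟨_, Set.mem_image_of_mem _ (show k - 1 ∈ Set.Iio k by simp [sub_lt_self_iff])⟩

lemma rD_nonempty : ((slope F k '' Set.Ioi k)).Nonempty :=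
  ⟨_, Set.mem_image_of_mem _ (show k + 1 ∈ Set.Ioi k by simp)⟩

lemma lD_bddAbove (hF : ConvexOn ℝ Set.univ F) : BddAbove (slope F k '' Set.Iio k) := by
  refine ⟨slope F k (k + 1), ?_⟩
  rintro a ⟨x, hx, rfl⟩
  exact my_slope_mono hF (ne_of_lt hx) (by norm_num) (by linarith [Set.mem_Iio.1 hx])

lemma rD_bddBelow (hF : ConvexOn ℝ Set.univ F) : BddBelow (slope F k '' Set.Ioi k) := by
  refine ⟨slope F k (k - 1), ?_⟩
  rintro a ⟨x, hx, rfl⟩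
  exact my_slope_mono hF (by norm_num) (ne_of_gt hx) (by linarith [Set.mem_Ioi.1 hx])

lemma slope_le_lD (hF : ConvexOn ℝ Set.univ F) {x : ℝ} (hx : x < k) :
    slope F k x ≤ lD F k :=
  le_csSup (lD_bddAbove hF) (Set.mem_image_of_mem _ hx)

lemma rD_le_slope (hF : ConvexOn ℝ Set.univ F) {y : ℝ} (hy : k < y) :
    rD F k ≤ slope F k y :=
  csInf_le (rD_bddBelow hF) (Set.mem_image_of_mem _ hy)

lemma lD_le_slope (hF : ConvexOn ℝ Set.univ F) {y : ℝ} (hy : k < y) :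
    lD F k ≤ slope F k y := by
  refine csSup_le lD_nonempty ?_
  rintro a ⟨x, hx, rfl⟩
  exact my_slope_mono hF (ne_of_lt hx) (ne_of_gt hy) (le_of_lt (lt_trans hx hy))

lemma slope_le_rD (hF : ConvexOn ℝ Set.univ F) {x : ℝ} (hx : x < k) :
    slope F k x ≤ rD F k := by
  refine le_csInf rD_nonempty ?_
  rintro a ⟨y, hy, rfl⟩
  exact my_slope_mono hF (ne_of_lt hx) (ne_of_gt hy) (le_of_lt (lt_trans hx hy))

lemma lD_le_rD (hF : ConvexOn ℝ Set.univ F) : lD F k ≤ rD F k := by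
  refine csSup_le lD_nonempty ?_
  rintro a ⟨x, hx, rfl⟩
  exact slope_le_rD hF hx

/-- support line with slope rD -/
lemma rD_support (hF : ConvexOn ℝ Set.univ F) (w : ℝ) :
    F k + rD F k * (w - k) ≤ F w := by
  rcases lt_trichotomy w k with h | rfl | h
  · have := slope_le_rD hF h
    rw [slope_def_field, div_le_iff_of_neg (by linarith : w - k < 0)] at this
    linarith
  · simp
  · have := rD_le_slope hF h
    rw [slope_def_field, le_div_iff₀ (by linarith : (0:ℝ) < w - k)] at this
    linarith

/-- support line with slope lD -/
lemma lD_support (hF : ConvexOn ℝ Set.univ F) (w : ℝ) :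
    F k + lD F k * (w - k) ≤ F w := by
  rcases lt_trichotomy w k with h | rfl | h
  · have := slope_le_lD hF h
    rw [slope_def_field, div_le_iff_of_neg (by linarith : w - k < 0)] at this
    linarith
  · simp
  · have := lD_le_slope hF h
    rw [slope_def_field, le_div_iff₀ (by linarith : (0:ℝ) < w - k)] at this
    linarith

lemma le_rD_of_support {s : ℝ}
    (h : ∀ w, k < w → F k + s * (w - k) ≤ F w) : s ≤ rD F k := by
  refine le_csInf rD_nonempty ?_
  rintro a ⟨y, hy, rfl⟩
  have hy' : k < y := hy
  rw [slope_def_field, le_div_iff₀ (by linarith : (0:ℝ) < y - k)]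
  have := h y hy'
  linarith

lemma lD_le_of_support {s : ℝ}
    (h : ∀ w, w < k → F k + s * (w - k) ≤ F w) : lD F k ≤ s := by
  refine csSup_le lD_nonempty ?_
  rintro a ⟨x, hx, rfl⟩
  have hx' : x < k := hx
  rw [slope_def_field, div_le_iff_of_neg (by linarith : x - k < 0)]
  have := h x hx'
  linarith

lemma hasDerivWithinAt_lD (hF : ConvexOn ℝ Set.univ F) :
    HasDerivWithinAt F (lD F k) (Set.Iio k) k := by
  rw [hasDerivWithinAt_iff_tendsto_slope' (by simp : k ∉ Set.Iio k)]
  exact MonotoneOn.tendsto_nhdsLT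
    (fun x hx y hy hxy => my_slope_mono hF (ne_of_lt hx) (ne_of_lt hy) hxy)
    (lD_bddAbove hF)

lemma hasDerivWithinAt_rD (hF : ConvexOn ℝ Set.univ F) :
    HasDerivWithinAt F (rD F k) (Set.Ioi k) k := by
  rw [hasDerivWithinAt_iff_tendsto_slope' (by simp : k ∉ Set.Ioi k)]
  exact MonotoneOn.tendsto_nhdsGT
    (fun x hx y hy hxy => my_slope_mono hF (ne_of_gt hx) (ne_of_gt hy) hxy)
    (rD_bddBelow hF)

lemma derivWithin_Iio_eq_lD (hF : ConvexOn ℝ Set.univ F) :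
    derivWithin F (Set.Iio k) k = lD F k :=
  (hasDerivWithinAt_lD hF).derivWithin (uniqueDiffWithinAt_Iio k)

lemma derivWithin_Ioi_eq_rD (hF : ConvexOn ℝ Set.univ F) :
    derivWithin F (Set.Ioi k) k = rD F k :=
  (hasDerivWithinAt_rD hF).derivWithin (uniqueDiffWithinAt_Ioi k)

end SlopeBasics

structure IsHull (f F : ℝ → ℝ) : Prop where
  conv : ConvexOn ℝ Set.univ F
  le : ∀ x, F x ≤ f x
  maximal : ∀ h : ℝ → ℝ, ConvexOn ℝ Set.univ h → (∀ x, h x ≤ f x) → ∀ x, h x ≤ F x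

lemma line_convexOn (c s k : ℝ) : ConvexOn ℝ Set.univ (fun w => c + s * (w - k)) := by
  refine ⟨convex_univ, ?_⟩
  intro x _ y _ a b ha hb hab
  simp only [smul_eq_mul]
  have : a * (c + s * (x - k)) + b * (c + s * (y - k)) = c + s * ((a * x + b * y) - k) := by
    linear_combination (c - s * k) * hab
  linarith [this.le]

lemma IsHull.line_le {f F : ℝ → ℝ} (hH : IsHull f F) {c s k : ℝ}
    (h : ∀ w, c + s * (w - k) ≤ f w) : ∀ w, c + s * (w - k) ≤ F w := by
  intro w
  have hconv : ConvexOn ℝ Set.univ (fun w => (F w) ⊔ (c + s * (w - k))) :=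
    hH.conv.sup (line_convexOn c s k)
  have hle : ∀ x, (F x) ⊔ (c + s * (x - k)) ≤ f x :=
    fun x => max_le (hH.le x) (h x)
  exact le_trans (le_max_right _ _) (hH.maximal _ hconv hle w)

/-- value of the best finite convex combination of `g`-values with barycenter `y`,
    as a set of achievable values -/
def comboSet (g : ℝ → ℝ) (y : ℝ) : Set ℝ :=
  {c | ∃ (n : ℕ) (w x : Fin n → ℝ), (∀ i, 0 ≤ w i) ∧ (∑ i, w i) = 1 ∧
      (∑ i, w i * x i) = y ∧ (∑ i, w i * g (x i)) = c}

lemma comboSet_nonempty (g : ℝ → ℝ) (y : ℝ) : (comboSet g y).Nonempty := by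
  refine ⟨g y, 1, (fun _ => 1), (fun _ => y), fun i => zero_le_one, ?_, ?_, ?_⟩ <;> simp

lemma comboSet_lowerBound {g G : ℝ → ℝ} (hG : ConvexOn ℝ Set.univ G)
    (hGg : ∀ x, G x ≤ g x) (y : ℝ) : ∀ c ∈ comboSet g y, G y ≤ c := by
  rintro c ⟨n, w, x, h0, h1, hbar, rfl⟩
  have hj : G (∑ i, w i • x i) ≤ ∑ i, w i • G (x i) :=
    hG.map_sum_le (fun i _ => h0 i) h1 (fun i _ => Set.mem_univ _)
  simp only [smul_eq_mul] at hj
  rw [hbar] at hj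
  refine le_trans hj (Finset.sum_le_sum ?_)
  intro i _
  exact mul_le_mul_of_nonneg_left (hGg (x i)) (h0 i)

lemma comboSet_bddBelow {g G : ℝ → ℝ} (hG : ConvexOn ℝ Set.univ G)
    (hGg : ∀ x, G x ≤ g x) (y : ℝ) : BddBelow (comboSet g y) :=
  ⟨G y, fun c hc => comboSet_lowerBound hG hGg y c hc⟩

/-- combination of two combos -/
lemma comboSet_combine {g : ℝ → ℝ} {y z c d a b : ℝ} (hc : c ∈ comboSet g y)
    (hd : d ∈ comboSet g z) (ha : 0 ≤ a) (hb : 0 ≤ b) (hab : a + b = 1) :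
    a * c + b * d ∈ comboSet g (a * y + b * z) := by
  obtain ⟨n, w, x, h0, h1, hbar, hval⟩ := hc
  obtain ⟨m, w', x', h0', h1', hbar', hval'⟩ := hd
  refine ⟨n + m, Fin.append (fun i => a * w i) (fun i => b * w' i), Fin.append x x',
    ?_, ?_, ?_, ?_⟩
  · intro i
    refine Fin.addCases ?_ ?_ i
    · intro j; rw [Fin.append_left]; exact mul_nonneg ha (h0 j)
    · intro j; rw [Fin.append_right]; exact mul_nonneg hb (h0' j)
  · rw [Fin.sum_univ_add]
    simp only [Fin.append_left, Fin.append_right]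
    rw [← Finset.mul_sum, ← Finset.mul_sum, h1, h1']
    simpa using hab
  · rw [Fin.sum_univ_add]
    simp only [Fin.append_left, Fin.append_right]
    have e1 : (∑ i : Fin n, a * w i * x i) = a * ∑ i, w i * x i := by
      rw [Finset.mul_sum]; congr 1; funext i; ring
    have e2 : (∑ i : Fin m, b * w' i * x' i) = b * ∑ i, w' i * x' i := by
      rw [Finset.mul_sum]; congr 1; funext i; ring
    rw [e1, e2, hbar, hbar']
  · rw [Fin.sum_univ_add]
    simp only [Fin.append_left, Fin.append_right]
    have e1 : (∑ i : Fin n, a * w i * g (x i)) = a * ∑ i, w i * g (x i) := by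
      rw [Finset.mul_sum]; congr 1; funext i; ring
    have e2 : (∑ i : Fin m, b * w' i * g (x' i)) = b * ∑ i, w' i * g (x' i) := by
      rw [Finset.mul_sum]; congr 1; funext i; ring
    rw [e1, e2, hval, hval']

lemma combo_convexOn {g G : ℝ → ℝ} (hG : ConvexOn ℝ Set.univ G)
    (hGg : ∀ x, G x ≤ g x) : ConvexOn ℝ Set.univ (fun y => sInf (comboSet g y)) := by
  refine ⟨convex_univ, ?_⟩
  intro y _ z _ a b ha hb hab
  simp only [smul_eq_mul]
  refine le_of_forall_pos_le_add ?_
  intro ε hε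
  obtain ⟨c, hc, hclt⟩ := exists_lt_of_csInf_lt (comboSet_nonempty g y)
    (lt_add_of_pos_right _ hε : sInf (comboSet g y) < sInf (comboSet g y) + ε)
  obtain ⟨d, hd, hdlt⟩ := exists_lt_of_csInf_lt (comboSet_nonempty g z)
    (lt_add_of_pos_right _ hε : sInf (comboSet g z) < sInf (comboSet g z) + ε)
  have hmem := comboSet_combine hc hd ha hb hab
  have h1 : sInf (comboSet g (a * y + b * z)) ≤ a * c + b * d :=
    csInf_le (comboSet_bddBelow hG hGg _) hmem
  nlinarith [h1, mul_le_mul_of_nonneg_left hclt.le ha, mul_le_mul_of_nonneg_left hdlt.le hb]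

/-- Key: existence of a combination with value close to the hull value. -/
lemma exists_combo_close {g G : ℝ → ℝ} (hH : IsHull g G) (k : ℝ) {ε : ℝ} (hε : 0 < ε) :
    ∃ (n : ℕ) (w x : Fin n → ℝ), (∀ i, 0 ≤ w i) ∧ (∑ i, w i) = 1 ∧
      (∑ i, w i * x i) = k ∧ (∑ i, w i * g (x i)) ≤ G k + ε := by
  have hC : ConvexOn ℝ Set.univ (fun y => sInf (comboSet g y)) := combo_convexOn hH.conv hH.le
  have hCg : ∀ y, sInf (comboSet g y) ≤ g y := by
    intro y
    refine csInf_le (comboSet_bddBelow hH.conv hH.le y) ?_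
    exact ⟨1, (fun _ => 1), (fun _ => y), fun i => zero_le_one, by simp, by simp, by simp⟩
  have hCk : sInf (comboSet g k) ≤ G k := hH.maximal _ hC hCg k
  obtain ⟨c, hc, hclt⟩ := exists_lt_of_csInf_lt (comboSet_nonempty g k)
    (lt_add_of_pos_right _ hε : sInf (comboSet g k) < sInf (comboSet g k) + ε)
  obtain ⟨n, w, x, h0, h1, hbar, hval⟩ := hc
  exact ⟨n, w, x, h0, h1, hbar, by rw [hval]; linarith⟩


/-- Core comparison: if `f - g` is nondecreasing and `g` is continuous, then the right
derivatives of the convex hulls satisfy `rD G k ≤ rD F k`. -/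
theorem core_right {f g F G : ℝ → ℝ} (hHf : IsHull f F) (hHg : IsHull g G)
    (hgc : Continuous g) (hd : ∀ x y, x ≤ y → f x - g x ≤ f y - g y) (k : ℝ) :
    rD G k ≤ rD F k := by
  by_contra hcon
  push_neg at hcon
  set σ := rD F k with hσ
  set t := rD G k with ht
  set s : ℝ := (σ + t) / 2 with hsdef
  have hs1 : σ < s := by simp only [hsdef]; linarith
  have hs2 : s < t := by simp only [hsdef]; linarith
  have hlDF : lD F k ≤ σ := lD_le_rD hHf.conv
  set Δ : ℝ := F k - G k - (f k - g k) with hΔdef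
  -- the basic lower bound for f on the left of k with slope s
  have hleft : ∀ w, w ≤ k → F k + s * (w - k) ≤ F w := by
    intro w hw
    rcases eq_or_lt_of_le hw with rfl | hw
    · simp
    · have h1 := lD_support hHf.conv (k := k) w
      nlinarith [h1, hw, hlDF, hs1]
  rcases le_or_gt Δ 0 with hΔ | hΔ
  · -- easy case: `F k ≤ G k + d k`
    have hline : ∀ w, F k + s * (w - k) ≤ f w := by
      intro w
      rcases le_total w k with hw | hw
      · exact le_trans (hleft w hw) (hHf.le w)
      · have h1 : f k - g k ≤ f w - g w := hd k w hw
        have h2 : G k + t * (w - k) ≤ G w := rD_support hHg.conv w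
        have h3 : G w ≤ g w := hHg.le w
        nlinarith [hs2, hw]
    have h4 : ∀ w, F k + s * (w - k) ≤ F w := hHf.line_le hline
    have h5 : s ≤ σ := le_rD_of_support (fun w hw => h4 w)
    linarith
  · -- hard case: Δ > 0
    set η : ℝ := Δ / 4 with hηdef
    have hη : 0 < η := by positivity
    -- continuity of g at k
    obtain ⟨δ0, hδ0, hδ0p⟩ : ∃ δ0 > 0, ∀ y, |y - k| < δ0 → |g y - g k| < η := by
      have := Metric.continuous_iff.1 hgc k η hη
      obtain ⟨δ0, h1, h2⟩ := this
      exact ⟨δ0, h1, fun y hy => by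
        have := h2 y (by simpa [Real.dist_eq] using hy)
        simpa [Real.dist_eq] using this⟩
    set δ : ℝ := min (δ0 / 2) (Δ / (4 * (|s| + 1))) with hδdef
    have hδpos : 0 < δ := by
      apply lt_min (by linarith)
      positivity
    have hδs : |s| * δ ≤ Δ / 4 := by
      have h1 : δ ≤ Δ / (4 * (|s| + 1)) := min_le_right _ _
      have h2 : 0 ≤ |s| := abs_nonneg s
      have h3 : |s| * δ ≤ |s| * (Δ / (4 * (|s| + 1))) := by
        apply mul_le_mul_of_nonneg_left h1 h2
      have h4 : |s| * (Δ / (4 * (|s| + 1))) ≤ Δ / 4 := by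
        rw [mul_div_assoc', div_le_div_iff₀ (by positivity) (by norm_num)]
        nlinarith [abs_nonneg s, hΔ]
      linarith
    have hgnear : ∀ y, k ≤ y → y ≤ k + δ → g k - η ≤ g y := by
      intro y h1 h2
      have : |y - k| < δ0 := by
        rw [abs_of_nonneg (by linarith)]
        have : δ ≤ δ0 / 2 := min_le_left _ _
        linarith
      have := hδ0p y this
      have := abs_lt.1 this
      linarith [this.1]
    set c : ℝ := min (Δ / 2) ((t - s) * δ) with hcdef
    have hcpos : 0 < c := by
      apply lt_min (by linarith)
      apply mul_pos (by linarith) hδpos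
    obtain ⟨n, w, x, h0, h1, hbar, hval⟩ := exists_combo_close hHg k (show 0 < c / 2 by linarith)
    -- pointwise lower bounds
    have hGsup : ∀ z, G k + t * (z - k) ≤ G z := fun z => rD_support hHg.conv z
    have hptL : ∀ z, z < k → G k + (Δ + s * (z - k)) ≤ g z := by
      intro z hz
      have h2 : f z - g z ≤ f k - g k := hd z k hz.le
      have h3 : F z ≤ f z := hHf.le z
      have h4 := hleft z hz.le
      -- g z = f z - (f z - g z) ≥ F z - (f k - g k) ≥ F k + s(z-k) - (f k - g k)
      have : F k + s * (z - k) - (f k - g k) ≤ g z := by linarith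
      simp only [hΔdef]; linarith
    have hptN : ∀ z, k ≤ z → z ≤ k + δ → G k + (Δ - η) ≤ g z := by
      intro z h2 h3
      have h4 := hgnear z h2 h3
      have h5 : F k ≤ f k := hHf.le k
      simp only [hΔdef]; linarith
    have hptF : ∀ z, k + δ < z → G k + t * (z - k) ≤ g z :=
      fun z hz => le_trans (hGsup z) (hHg.le z)
    -- sums
    have hsum : (∑ i, w i * (g (x i))) ≤ G k + c / 2 := hval
    -- partition
    classical
    set A : Finset (Fin n) := Finset.univ.filter (fun i => x i < k) with hA
    set B : Finset (Fin n) := Finset.univ.filter (fun i => ¬ x i < k ∧ x i ≤ k + δ) with hB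
    set C : Finset (Fin n) := Finset.univ.filter (fun i => ¬ x i < k ∧ ¬ x i ≤ k + δ) with hC
    have hsplit : ∀ h : Fin n → ℝ,
        (∑ i ∈ A, h i) + ((∑ i ∈ B, h i) + (∑ i ∈ C, h i)) = ∑ i, h i := by
      intro h
      have e1 := Finset.sum_filter_add_sum_filter_not Finset.univ (fun i => x i < k) h
      have e2 := Finset.sum_filter_add_sum_filter_not
        (Finset.univ.filter (fun i => ¬ x i < k)) (fun i => x i ≤ k + δ) h
      rw [Finset.filter_filter, Finset.filter_filter] at e2
      rw [hA, hB, hC, e2, e1]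
    set mL : ℝ := ∑ i ∈ A, w i with hmL
    set mN : ℝ := ∑ i ∈ B, w i with hmN
    set mF : ℝ := ∑ i ∈ C, w i with hmF
    set AL : ℝ := ∑ i ∈ A, w i * (x i - k) with hAL
    set BN : ℝ := ∑ i ∈ B, w i * (x i - k) with hBN
    set BF : ℝ := ∑ i ∈ C, w i * (x i - k) with hBF
    have hm1 : mL + (mN + mF) = 1 := by rw [hmL, hmN, hmF, hsplit w, h1]
    have hbar0 : AL + (BN + BF) = 0 := by
      rw [hAL, hBN, hBF, hsplit (fun i => w i * (x i - k))]
      have : (∑ i, w i * (x i - k)) = (∑ i, w i * x i) - (∑ i, w i) * k := by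
        rw [Finset.sum_mul, ← Finset.sum_sub_distrib]
        exact Finset.sum_congr rfl (fun i _ => by ring)
      rw [this, hbar, h1]; ring
    have hmLpos : 0 ≤ mL := Finset.sum_nonneg (fun i _ => h0 i)
    have hmNpos : 0 ≤ mN := Finset.sum_nonneg (fun i _ => h0 i)
    have hmFpos : 0 ≤ mF := Finset.sum_nonneg (fun i _ => h0 i)
    have hALnp : AL ≤ 0 := by
      refine Finset.sum_nonpos (fun i hi => ?_)
      have hxi : x i < k := (Finset.mem_filter.1 hi).2
      exact mul_nonpos_of_nonneg_of_nonpos (h0 i) (by linarith)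
    have hBNlb : 0 ≤ BN := by
      refine Finset.sum_nonneg (fun i hi => ?_)
      have hxi := (Finset.mem_filter.1 hi).2
      exact mul_nonneg (h0 i) (by push_neg at hxi; linarith [hxi.1])
    have hBNub : BN ≤ δ * mN := by
      rw [hBN, hmN, Finset.mul_sum]
      refine Finset.sum_le_sum (fun i hi => ?_)
      have hxi := (Finset.mem_filter.1 hi).2
      have h6 : x i - k ≤ δ := by linarith [hxi.2]
      calc w i * (x i - k) ≤ w i * δ := mul_le_mul_of_nonneg_left h6 (h0 i)
        _ = δ * w i := by ring
    have hBFlb : δ * mF ≤ BF := by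
      rw [hBF, hmF, Finset.mul_sum]
      refine Finset.sum_le_sum (fun i hi => ?_)
      have hxi := (Finset.mem_filter.1 hi).2
      push_neg at hxi
      have h6 : δ ≤ x i - k := by linarith [hxi.2]
      calc δ * w i = w i * δ := by ring
        _ ≤ w i * (x i - k) := mul_le_mul_of_nonneg_left h6 (h0 i)
    -- main inequality
    have hmain : G k * (mL + (mN + mF)) + (Δ * mL + s * AL + ((Δ - η) * mN + t * BF))
        ≤ G k + c / 2 := by
      refine le_trans ?_ hsum
      have e3 : ∀ i ∈ A, w i * (G k + (Δ + s * (x i - k))) ≤ w i * g (x i) := by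
        intro i hi
        exact mul_le_mul_of_nonneg_left (hptL _ (Finset.mem_filter.1 hi).2) (h0 i)
      have e4 : ∀ i ∈ B, w i * (G k + (Δ - η)) ≤ w i * g (x i) := by
        intro i hi
        have hxi := (Finset.mem_filter.1 hi).2
        push_neg at hxi
        exact mul_le_mul_of_nonneg_left (hptN _ hxi.1 hxi.2) (h0 i)
      have e5 : ∀ i ∈ C, w i * (G k + t * (x i - k)) ≤ w i * g (x i) := by
        intro i hi
        have hxi := (Finset.mem_filter.1 hi).2
        push_neg at hxi
        exact mul_le_mul_of_nonneg_left (hptF _ hxi.2) (h0 i)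
      have eA : (∑ i ∈ A, w i * (G k + (Δ + s * (x i - k)))) ≤ ∑ i ∈ A, w i * g (x i) :=
        Finset.sum_le_sum e3
      have eB : (∑ i ∈ B, w i * (G k + (Δ - η))) ≤ ∑ i ∈ B, w i * g (x i) :=
        Finset.sum_le_sum e4
      have eC : (∑ i ∈ C, w i * (G k + t * (x i - k))) ≤ ∑ i ∈ C, w i * g (x i) :=
        Finset.sum_le_sum e5
      have idA : (∑ i ∈ A, w i * (G k + (Δ + s * (x i - k))))
          = G k * mL + (Δ * mL + s * AL) := by
        rw [hmL, hAL, Finset.mul_sum, Finset.mul_sum, Finset.mul_sum]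
        rw [← Finset.sum_add_distrib, ← Finset.sum_add_distrib]
        exact Finset.sum_congr rfl (fun i _ => by ring)
      have idB : (∑ i ∈ B, w i * (G k + (Δ - η))) = G k * mN + (Δ - η) * mN := by
        rw [hmN, Finset.mul_sum, Finset.mul_sum, ← Finset.sum_add_distrib]
        exact Finset.sum_congr rfl (fun i _ => by ring)
      have idC : (∑ i ∈ C, w i * (G k + t * (x i - k))) = G k * mF + t * BF := by
        rw [hmF, hBF, Finset.mul_sum, Finset.mul_sum, ← Finset.sum_add_distrib]
        exact Finset.sum_congr rfl (fun i _ => by ring)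
      have etot : (∑ i ∈ A, w i * g (x i)) + ((∑ i ∈ B, w i * g (x i))
          + (∑ i ∈ C, w i * g (x i))) = ∑ i, w i * g (x i) :=
        hsplit (fun i => w i * g (x i))
      rw [← etot]
      rw [idA] at eA
      rw [idB] at eB
      rw [idC] at eC
      linarith
    rw [hm1, mul_one] at hmain
    -- now finish with arithmetic
    have hsBN : s * BN ≤ (Δ / 4) * mN := by
      have e1 : s * BN ≤ |s| * BN := mul_le_mul_of_nonneg_right (le_abs_self s) hBNlb
      have e2 : |s| * BN ≤ |s| * (δ * mN) :=
        mul_le_mul_of_nonneg_left hBNub (abs_nonneg s)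
      have e3 : |s| * δ * mN ≤ (Δ / 4) * mN := mul_le_mul_of_nonneg_right hδs hmNpos
      have e4 : |s| * (δ * mN) = |s| * δ * mN := by ring
      linarith
    have htsBF : (t - s) * (δ * mF) ≤ (t - s) * BF :=
      mul_le_mul_of_nonneg_left hBFlb (by linarith)
    have hcL : c * mL ≤ Δ * mL :=
      mul_le_mul_of_nonneg_right (le_trans (min_le_left _ _) (by linarith)) hmLpos
    have hcN : c * mN ≤ (Δ / 2) * mN :=
      mul_le_mul_of_nonneg_right (min_le_left _ _) hmNpos
    have hcF : c * mF ≤ (t - s) * δ * mF :=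
      mul_le_mul_of_nonneg_right (min_le_right _ _) hmFpos
    -- AL = -(BN + BF)
    have hALval : AL = -(BN + BF) := by linarith
    have eq1 : s * AL + s * BN + s * BF = 0 := by rw [hALval]; ring
    have eq2 : t * BF - s * BF = (t - s) * BF := by ring
    have eq3 : (Δ - η) * mN = Δ * mN - (Δ / 4) * mN := by rw [hηdef]; ring
    have eq4 : (t - s) * (δ * mF) = (t - s) * δ * mF := by ring
    have eq5 : c * mL + c * mN + c * mF = c := by
      calc c * mL + c * mN + c * mF = c * (mL + (mN + mF)) := by ring
        _ = c * 1 := by rw [hm1]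
        _ = c := mul_one c
    have eq6 : (Δ / 2) * mN + (Δ / 4) * mN + (Δ / 4) * mN = Δ * mN := by ring
    clear_value σ t s Δ η δ c mL mN mF AL BN BF
    have k1 : Δ * mL + (Δ - η) * mN - s * BN + (t - s) * BF ≤ c / 2 := by
      linarith [hmain, eq1, eq2]
    have k2 : c ≤ Δ * mL + Δ / 2 * mN + (t - s) * δ * mF := by
      linarith [eq5, hcL, hcN, hcF]
    have k3 : Δ / 2 * mN ≤ (Δ - η) * mN - s * BN := by
      linarith [eq3, eq6, hsBN]
    have k4 : (t - s) * δ * mF ≤ (t - s) * BF := by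
      linarith [eq4, htsBF]
    have k6 : Δ * mL + Δ / 2 * mN + (t - s) * δ * mF
        ≤ Δ * mL + ((Δ - η) * mN - s * BN) + (t - s) * BF := by linarith [k3, k4]
    have k5 : c ≤ c / 2 := by linarith [k1, k2, k6]
    linarith [k5, hcpos]


section Transport

variable {f F : ℝ → ℝ}

lemma sInf_neg_image {S : Set ℝ} (hne : S.Nonempty) (hbd : BddAbove S) :
    sInf ((fun z => -z) '' S) = - sSup S := by
  have h1 : IsLUB S (sSup S) := isLUB_csSup hne hbd
  have h2 : IsGLB ((fun z => -z) '' S) (-sSup S) := by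
    constructor
    · rintro a ⟨x, hx, rfl⟩
      exact neg_le_neg (h1.1 hx)
    · intro b hb
      have hub : ∀ x ∈ S, x ≤ -b := by
        intro x hx
        have h3 : b ≤ -x := hb ⟨x, hx, rfl⟩
        linarith
      have := h1.2 hub
      linarith
  exact h2.csInf_eq (hne.image _)

lemma sInf_sub_const_image {S : Set ℝ} (hne : S.Nonempty) (hbd : BddBelow S) (c : ℝ) :
    sInf ((fun z => z - c) '' S) = sInf S - c := by
  have h1 : IsGLB S (sInf S) := isGLB_csInf hne hbd
  have h2 : IsGLB ((fun z => z - c) '' S) (sInf S - c) := by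
    constructor
    · rintro a ⟨x, hx, rfl⟩
      exact sub_le_sub_right (h1.1 hx) c
    · intro b hb
      have hlb : ∀ x ∈ S, b + c ≤ x := by
        intro x hx
        have h3 : b ≤ x - c := hb ⟨x, hx, rfl⟩
        linarith
      have := h1.2 hlb
      linarith
  exact h2.csInf_eq (hne.image _)

lemma sSup_sub_const_image {S : Set ℝ} (hne : S.Nonempty) (hbd : BddAbove S) (c : ℝ) :
    sSup ((fun z => z - c) '' S) = sSup S - c := by
  have h1 : IsLUB S (sSup S) := isLUB_csSup hne hbd
  have h2 : IsLUB ((fun z => z - c) '' S) (sSup S - c) := by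
    constructor
    · rintro a ⟨x, hx, rfl⟩
      exact sub_le_sub_right (h1.1 hx) c
    · intro b hb
      have hub : ∀ x ∈ S, x ≤ b + c := by
        intro x hx
        have h3 : x - c ≤ b := hb ⟨x, hx, rfl⟩
        linarith
      have := h1.2 hub
      linarith
  exact h2.csSup_eq (hne.image _)

lemma convexOn_comp_neg (hF : ConvexOn ℝ Set.univ F) :
    ConvexOn ℝ Set.univ (fun x => F (-x)) := by
  refine ⟨convex_univ, ?_⟩
  intro x _ y _ a b ha hb hab
  have := hF.2 (Set.mem_univ (-x)) (Set.mem_univ (-y)) ha hb hab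
  simp only [smul_eq_mul] at this ⊢
  have e : -(a * x + b * y) = a * (-x) + b * (-y) := by ring
  rw [e]
  exact this

lemma IsHull.reflect (hH : IsHull f F) : IsHull (fun x => f (-x)) (fun x => F (-x)) := by
  refine ⟨convexOn_comp_neg hH.conv, fun x => hH.le (-x), ?_⟩
  intro h hconv hle x
  have h2 : ∀ y, h (-y) ≤ f y := by intro y; simpa using hle (-y)
  have h3 := hH.maximal (fun y => h (-y)) (convexOn_comp_neg hconv) h2
  simpa using h3 (-x)

lemma convexOn_sub_linear (hF : ConvexOn ℝ Set.univ F) (c : ℝ) :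
    ConvexOn ℝ Set.univ (fun x => F x - c * x) := by
  refine ⟨convex_univ, ?_⟩
  intro x _ y _ a b ha hb hab
  have := hF.2 (Set.mem_univ x) (Set.mem_univ y) ha hb hab
  simp only [smul_eq_mul] at this ⊢
  nlinarith [this]

lemma IsHull.sub_linear (hH : IsHull f F) (c : ℝ) :
    IsHull (fun x => f x - c * x) (fun x => F x - c * x) := by
  refine ⟨convexOn_sub_linear hH.conv c, fun x => sub_le_sub_right (hH.le x) (c * x), ?_⟩
  intro h hconv hle x
  have h2 : ∀ y, h y + c * y ≤ f y := by
    intro y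
    have h4 : h y ≤ f y - c * y := hle y
    linarith
  have h3 : ConvexOn ℝ Set.univ (fun y => h y + c * y) := by
    have := convexOn_sub_linear hconv (-c)
    have e : (fun x => h x - -c * x) = (fun y => h y + c * y) := by
      funext y; ring
    rwa [e] at this
  have := hH.maximal _ h3 h2 x
  linarith

lemma slope_comp_neg (F : ℝ → ℝ) (k y : ℝ) :
    slope (fun x => F (-x)) (-k) y = - slope F k (-y) := by
  rw [slope_def_field, slope_def_field]
  show (F (-y) - F (-(-k))) / (y - -k) = -((F (-y) - F k) / (-y - k))
  rw [neg_neg]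
  rcases eq_or_ne y (-k) with rfl | hy
  · simp
  · have h1 : y - -k ≠ 0 := sub_ne_zero.2 hy
    have h2 : -y - k ≠ 0 := by
      intro h
      apply hy
      have : -y = k := by linarith [sub_eq_zero.1 h]
      linarith
    rw [div_eq_iff h1, neg_mul_comm, div_mul_eq_mul_div, eq_div_iff h2]
    ring

/-- reflection identity for the right slope-derivative -/
lemma rD_reflect (hF : ConvexOn ℝ Set.univ F) (k : ℝ) :
    rD (fun x => F (-x)) (-k) = - lD F k := by
  have himg : slope (fun x => F (-x)) (-k) '' Set.Ioi (-k)
      = (fun z => -z) '' (slope F k '' Set.Iio k) := by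
    ext c
    constructor
    · rintro ⟨y, hy, rfl⟩
      have hy' : (-y : ℝ) < k := by
        have : (-k : ℝ) < y := hy
        linarith
      refine ⟨slope F k (-y), ⟨-y, hy', rfl⟩, (slope_comp_neg F k y).symm⟩
    · rintro ⟨z, ⟨x, hx, rfl⟩, rfl⟩
      have hx' : (-k : ℝ) < -x := by
        have : (x : ℝ) < k := hx
        linarith
      refine ⟨-x, hx', ?_⟩
      rw [slope_comp_neg F k (-x), neg_neg]
  rw [rD, himg, lD, sInf_neg_image lD_nonempty (lD_bddAbove hF)]

/-- shift identities -/
lemma rD_sub_linear (hF : ConvexOn ℝ Set.univ F) (c k : ℝ) :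
    rD (fun x => F x - c * x) k = rD F k - c := by
  have himg : slope (fun x => F x - c * x) k '' Set.Ioi k
      = (fun z => z - c) '' (slope F k '' Set.Ioi k) := by
    have hsl : ∀ y ∈ Set.Ioi k, slope (fun x => F x - c * x) k y = slope F k y - c := by
      intro y hy
      have hyk : y - k ≠ 0 := sub_ne_zero.2 (ne_of_gt hy)
      rw [slope_def_field, slope_def_field]
      field_simp
      ring
    ext z
    constructor
    · rintro ⟨y, hy, rfl⟩
      exact ⟨slope F k y, ⟨y, hy, rfl⟩, (hsl y hy).symm⟩
    · rintro ⟨w, ⟨y, hy, rfl⟩, rfl⟩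
      exact ⟨y, hy, hsl y hy⟩
  rw [rD, himg, rD, sInf_sub_const_image rD_nonempty (rD_bddBelow hF)]

lemma lD_sub_linear (hF : ConvexOn ℝ Set.univ F) (c k : ℝ) :
    lD (fun x => F x - c * x) k = lD F k - c := by
  have himg : slope (fun x => F x - c * x) k '' Set.Iio k
      = (fun z => z - c) '' (slope F k '' Set.Iio k) := by
    have hsl : ∀ y ∈ Set.Iio k, slope (fun x => F x - c * x) k y = slope F k y - c := by
      intro y hy
      have hyk : y - k ≠ 0 := sub_ne_zero.2 (ne_of_lt hy)
      rw [slope_def_field, slope_def_field]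
      field_simp
      ring
    ext z
    constructor
    · rintro ⟨y, hy, rfl⟩
      exact ⟨slope F k y, ⟨y, hy, rfl⟩, (hsl y hy).symm⟩
    · rintro ⟨w, ⟨y, hy, rfl⟩, rfl⟩
      exact ⟨y, hy, hsl y hy⟩
  rw [lD, himg, lD, sSup_sub_const_image lD_nonempty (lD_bddAbove hF)]

/-- Core comparison, left version. Needs continuity of `f`. -/
theorem core_left {f g F G : ℝ → ℝ} (hHf : IsHull f F) (hHg : IsHull g G)
    (hfc : Continuous f) (hd : ∀ x y, x ≤ y → f x - g x ≤ f y - g y) (k : ℝ) :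
    lD G k ≤ lD F k := by
  have h := core_right (hHg.reflect) (hHf.reflect)
    (hfc.comp continuous_neg)
    (fun a b hab => by
      have h2 := hd (-b) (-a) (by linarith)
      show g (-a) - f (-a) ≤ g (-b) - f (-b)
      linarith) (-k)
  rw [rD_reflect hHf.conv, rD_reflect hHg.conv] at h
  linarith

end Transport


section App

variable {μ : Measure ℝ} [IsProbabilityMeasure μ]

lemma integrable_put (hμint : Integrable (fun x => x) μ) (k : ℝ) :
    Integrable (fun x => max (k - x) 0) μ := by
  have h1 : Integrable (fun x => k - x) μ := (integrable_const k).sub hμint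
  have h2 : Integrable (fun x => |k - x|) μ := h1.abs
  have e : (fun x => max (k - x) 0) = fun x => ((k - x) + |k - x|) / 2 := by
    funext z
    rcases le_total 0 (k - z) with h | h
    · rw [abs_of_nonneg h, max_eq_left h]; ring
    · rw [abs_of_nonpos h, max_eq_right h]; ring
  rw [e]
  exact (h1.add h2).div_const 2

/-- increments of the put price function -/
lemma put_increment (hμint : Integrable (fun x => x) μ) {Pm : ℝ → ℝ}
    (hPm : ∀ k, Pm k = ∫ x, max (k - x) 0 ∂μ) {a b : ℝ} (hab : a ≤ b) :
    (b - a) * (μ (Set.Iic a)).toReal ≤ Pm b - Pm a ∧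
      Pm b - Pm a ≤ (b - a) * (μ (Set.Iio b)).toReal := by
  have hint : ∀ k : ℝ, Integrable (fun x => max (k - x) 0) μ := integrable_put hμint
  have hdiff : Pm b - Pm a = ∫ x, (max (b - x) 0 - max (a - x) 0) ∂μ := by
    rw [hPm, hPm, ← integral_sub (hint b) (hint a)]
  constructor
  · rw [hdiff]
    have hi : ∫ x, (Set.Iic a).indicator (fun _ => b - a) x ∂μ
        = (b - a) * (μ (Set.Iic a)).toReal := by
      rw [integral_indicator measurableSet_Iic, setIntegral_const, smul_eq_mul, mul_comm, measureReal_def]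
    rw [← hi]
    refine integral_mono ((integrable_const (b - a)).indicator measurableSet_Iic)
      ((hint b).sub (hint a)) ?_
    intro z
    show (Set.Iic a).indicator (fun _ => b - a) z ≤ max (b - z) 0 - max (a - z) 0
    by_cases hz : z ∈ Set.Iic a
    · have hza : z ≤ a := hz
      rw [Set.indicator_of_mem hz]
      rw [max_eq_left (by linarith : (0:ℝ) ≤ b - z), max_eq_left (by linarith : (0:ℝ) ≤ a - z)]
      linarith
    · rw [Set.indicator_of_notMem hz]
      have : max (a - z) 0 ≤ max (b - z) 0 := by
        apply max_le_max _ le_rfl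
        linarith
      linarith
  · rw [hdiff]
    have hi : ∫ x, (Set.Iio b).indicator (fun _ => b - a) x ∂μ
        = (b - a) * (μ (Set.Iio b)).toReal := by
      rw [integral_indicator measurableSet_Iio, setIntegral_const, smul_eq_mul, mul_comm, measureReal_def]
    rw [← hi]
    refine integral_mono ((hint b).sub (hint a))
      ((integrable_const (b - a)).indicator measurableSet_Iio) ?_
    intro z
    show max (b - z) 0 - max (a - z) 0 ≤ (Set.Iio b).indicator (fun _ => b - a) z
    by_cases hz : z ∈ Set.Iio b
    · have hzb : z < b := hz
      rw [Set.indicator_of_mem hz]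
      rcases le_total z a with h | h
      · rw [max_eq_left (by linarith : (0:ℝ) ≤ b - z), max_eq_left (by linarith : (0:ℝ) ≤ a - z)]
        linarith
      · rw [max_eq_left (by linarith : (0:ℝ) ≤ b - z), max_eq_right (by linarith : a - z ≤ 0)]
        linarith
    · rw [Set.indicator_of_notMem hz]
      have hzb : b ≤ z := not_lt.1 hz
      rw [max_eq_right (by linarith : b - z ≤ 0), max_eq_right (by linarith : a - z ≤ 0)]
      linarith

lemma put_lipschitz (hμint : Integrable (fun x => x) μ) {Pm : ℝ → ℝ}
    (hPm : ∀ k, Pm k = ∫ x, max (k - x) 0 ∂μ) : Continuous Pm := by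
  rw [Metric.continuous_iff]
  intro b ε hε
  refine ⟨ε, hε, ?_⟩
  intro a hab
  rw [Real.dist_eq] at *
  have key : ∀ x y : ℝ, x ≤ y → 0 ≤ Pm y - Pm x ∧ Pm y - Pm x ≤ y - x := by
    intro x y hxy
    obtain ⟨h1, h2⟩ := put_increment hμint hPm hxy
    constructor
    · refine le_trans ?_ h1
      have h5 : (0:ℝ) ≤ (μ (Set.Iic x)).toReal := ENNReal.toReal_nonneg
      nlinarith [sub_nonneg.2 hxy]
    · refine le_trans h2 ?_
      have h3 : (μ (Set.Iio y)).toReal ≤ 1 := by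
        have h4 : ((1:ENNReal)).toReal = 1 := by simp
        rw [← h4]
        exact ENNReal.toReal_mono (by simp) prob_le_one
      nlinarith [sub_nonneg.2 hxy]
  rcases le_total a b with h | h
  · obtain ⟨h1, h2⟩ := key a b h
    rw [abs_of_nonpos (by linarith)]
    rw [abs_of_nonpos (by linarith)] at hab
    linarith
  · obtain ⟨h1, h2⟩ := key b a h
    rw [abs_of_nonneg (by linarith)]
    rw [abs_of_nonneg (by linarith)] at hab
    linarith

end App


theorem stmt16
    (μ ν : Measure ℝ)
    [IsProbabilityMeasure μ] [IsProbabilityMeasure ν]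
    (hμint : Integrable (fun x => x) μ) (hνint : Integrable (fun x => x) ν)
    (hcx : ∀ f : ℝ → ℝ, ConvexOn ℝ Set.univ f → Integrable f μ → Integrable f ν →
      ∫ x, f x ∂μ ≤ ∫ x, f x ∂ν)
    (Pμ Pν D : ℝ → ℝ)
    (hPμ : ∀ k, Pμ k = ∫ x, max (k - x) 0 ∂μ)
    (hPν : ∀ k, Pν k = ∫ x, max (k - x) 0 ∂ν)
    (hD : ∀ k, D k = Pν k - Pμ k)
    (hDconn : Set.OrdConnected {k : ℝ | 0 < D k})
    (G : ℝ → ℝ) (hGmono : MonotoneOn G (Set.Ioo 0 1))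
    (hGq : ∀ u ∈ Set.Ioo (0:ℝ) 1,
      (μ (Set.Iio (G u))).toReal ≤ u ∧ u ≤ (μ (Set.Iic (G u))).toReal)
    (E Ec : ℝ → ℝ → ℝ)
    (hE : ∀ u ∈ Set.Ioo (0:ℝ) 1, ∀ k, E u k = Pν k - Pμ (min k (G u)) - u * max (k - G u) 0)
    (hEcConv : ∀ u ∈ Set.Ioo (0:ℝ) 1, ConvexOn ℝ Set.univ (Ec u))
    (hEcLe : ∀ u ∈ Set.Ioo (0:ℝ) 1, ∀ k, Ec u k ≤ E u k)
    (hEcMax : ∀ u ∈ Set.Ioo (0:ℝ) 1, ∀ h : ℝ → ℝ, ConvexOn ℝ Set.univ h →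
      (∀ k, h k ≤ E u k) → ∀ k, h k ≤ Ec u k)
    :
    ∀ u v : ℝ, 0 < u → u < v → v < 1 → ∀ k : ℝ,
      (derivWithin (Ec u) (Set.Iio k) k - (v - u) ≤ derivWithin (Ec v) (Set.Iio k) k ∧
        derivWithin (Ec v) (Set.Iio k) k ≤ derivWithin (Ec u) (Set.Iio k) k) ∧
      (derivWithin (Ec u) (Set.Ioi k) k - (v - u) ≤ derivWithin (Ec v) (Set.Ioi k) k ∧
        derivWithin (Ec v) (Set.Ioi k) k ≤ derivWithin (Ec u) (Set.Ioi k) k) := by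
  intro u v hu huv hv k
  have hu' : u ∈ Set.Ioo (0:ℝ) 1 := ⟨hu, lt_trans huv hv⟩
  have hv' : v ∈ Set.Ioo (0:ℝ) 1 := ⟨lt_trans hu huv, hv⟩
  set q : ℝ := G u with hqdef
  set r : ℝ := G v with hrdef
  have hqr : q ≤ r := hGmono hu' hv' (le_of_lt huv)
  have huq : u ≤ (μ (Set.Iic q)).toReal := (hGq u hu').2
  have hvr : (μ (Set.Iio r)).toReal ≤ v := (hGq v hv').1
  -- the put-price increment bounds on [q, r]
  have hR2 : ∀ a b : ℝ, q ≤ a → a ≤ b → b ≤ r →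
      u * (b - a) ≤ Pμ b - Pμ a ∧ Pμ b - Pμ a ≤ v * (b - a) := by
    intro a b h1 h2 h3
    obtain ⟨l1, l2⟩ := put_increment hμint hPμ h2
    have m1 : (μ (Set.Iic q)).toReal ≤ (μ (Set.Iic a)).toReal :=
      ENNReal.toReal_mono (measure_ne_top μ _) (measure_mono (Set.Iic_subset_Iic.2 h1))
    have m2 : (μ (Set.Iio b)).toReal ≤ (μ (Set.Iio r)).toReal :=
      ENNReal.toReal_mono (measure_ne_top μ _) (measure_mono (Set.Iio_subset_Iio h3))
    have hba : (0:ℝ) ≤ b - a := by linarith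
    constructor
    · nlinarith
    · nlinarith
  -- the "clamp" identity
  have hid : ∀ w : ℝ, min (max w q) r + max (w - r) 0 = max w q := by
    intro w
    rcases le_total w r with h | h
    · rw [max_eq_right (sub_nonpos.2 h), min_eq_left (max_le h hqr), add_zero]
    · rw [max_eq_left (sub_nonneg.2 h), min_eq_right (le_trans h (le_max_left w q)),
        max_eq_left (le_trans hqr h)]
      ring
  -- difference formula
  have hEdiff : ∀ w : ℝ, E u w - E v w
      = (Pμ (min (max w q) r) - Pμ q - u * (min (max w q) r - q))
        + (v - u) * max (w - r) 0 := by
    intro w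
    rw [hE u hu' w, hE v hv' w]
    rcases le_total w q with h1 | h1
    · rw [min_eq_left h1, min_eq_left (le_trans h1 hqr),
        max_eq_right h1, min_eq_left hqr,
        max_eq_right (sub_nonpos.2 h1), max_eq_right (sub_nonpos.2 (le_trans h1 hqr))]
      ring
    · rcases le_total w r with h2 | h2
      · rw [min_eq_right h1, min_eq_left h2, max_eq_left h1, min_eq_left h2,
          max_eq_left (sub_nonneg.2 h1), max_eq_right (sub_nonpos.2 h2)]
        ring
      · rw [min_eq_right h1, min_eq_right h2, max_eq_left h1, min_eq_right h2,
          max_eq_left (sub_nonneg.2 h1), max_eq_left (sub_nonneg.2 h2)]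
        ring
  -- increments of the difference
  have hEd : ∀ x y : ℝ, x ≤ y →
      0 ≤ (E u y - E v y) - (E u x - E v x) ∧
        (E u y - E v y) - (E u x - E v x) ≤ (v - u) * (y - x) := by
    intro x y hxy
    set cx : ℝ := min (max x q) r with hcx
    set cy : ℝ := min (max y q) r with hcy
    have hq1 : q ≤ cx := le_min (le_max_right x q) hqr
    have hxy2 : cx ≤ cy := min_le_min (max_le_max hxy le_rfl) le_rfl
    have hr1 : cy ≤ r := min_le_right _ _
    obtain ⟨r1, r2⟩ := hR2 cx cy hq1 hxy2 hr1
    have hmax1 : max (x - r) 0 ≤ max (y - r) 0 := max_le_max (by linarith) le_rfl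
    have hmaxq : max x q ≤ max y q := max_le_max hxy le_rfl
    have hmaxq2 : max y q - max x q ≤ y - x := by
      rcases le_total q x with h | h
      · rw [max_eq_left h, max_eq_left (le_trans h hxy)]
      · rcases le_total q y with h2 | h2
        · rw [max_eq_right h, max_eq_left h2]; linarith
        · rw [max_eq_right h, max_eq_right h2]; linarith
    have hsum : (cy - cx) + (max (y - r) 0 - max (x - r) 0) = max y q - max x q := by
      have e1 := hid x
      have e2 := hid y
      rw [hcx, hcy]
      linarith
    have huv0 : (0:ℝ) ≤ v - u := by linarith
    constructor
    · rw [hEdiff x, hEdiff y]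
      nlinarith [mul_le_mul_of_nonneg_left hmax1 huv0]
    · rw [hEdiff x, hEdiff y]
      have t1 : (v - u) * (max y q - max x q) ≤ (v - u) * (y - x) :=
        mul_le_mul_of_nonneg_left hmaxq2 huv0
      nlinarith [t1, r2]
  -- continuity
  have hPνc : Continuous Pν := put_lipschitz hνint hPν
  have hPμc : Continuous Pμ := put_lipschitz hμint hPμ
  have hEuc : Continuous (E u) := by
    have he : E u = fun w => Pν w - Pμ (min w q) - u * max (w - q) 0 := funext (hE u hu')
    rw [he]
    exact (hPνc.sub (hPμc.comp (continuous_id.min continuous_const))).sub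
      (continuous_const.mul ((continuous_id.sub continuous_const).max continuous_const))
  have hEvc : Continuous (E v) := by
    have he : E v = fun w => Pν w - Pμ (min w r) - v * max (w - r) 0 := funext (hE v hv')
    rw [he]
    exact (hPνc.sub (hPμc.comp (continuous_id.min continuous_const))).sub
      (continuous_const.mul ((continuous_id.sub continuous_const).max continuous_const))
  -- hulls
  have Hu : IsHull (E u) (Ec u) := ⟨hEcConv u hu', hEcLe u hu', hEcMax u hu'⟩
  have Hv : IsHull (E v) (Ec v) := ⟨hEcConv v hv', hEcLe v hv', hEcMax v hv'⟩
  have Hu' : IsHull (fun x => E u x - (v - u) * x) (fun x => Ec u x - (v - u) * x) :=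
    Hu.sub_linear (v - u)
  have hEuc' : Continuous (fun x => E u x - (v - u) * x) :=
    hEuc.sub (continuous_const.mul continuous_id)
  have hd1 : ∀ x y : ℝ, x ≤ y → E u x - E v x ≤ E u y - E v y := by
    intro x y h; linarith [(hEd x y h).1]
  have hd2 : ∀ x y : ℝ, x ≤ y →
      E v x - (E u x - (v - u) * x) ≤ E v y - (E u y - (v - u) * y) := by
    intro x y h
    have h2 := (hEd x y h).2
    show E v x - (E u x - (v - u) * x) ≤ E v y - (E u y - (v - u) * y)
    nlinarith [h2]
  -- core comparisons
  have hRb : rD (Ec v) k ≤ rD (Ec u) k := core_right Hu Hv hEvc hd1 k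
  have hRa : rD (fun x => Ec u x - (v - u) * x) k ≤ rD (Ec v) k :=
    core_right Hv Hu' hEuc' hd2 k
  rw [rD_sub_linear (hEcConv u hu') (v - u) k] at hRa
  have hLb : lD (Ec v) k ≤ lD (Ec u) k := core_left Hu Hv hEuc hd1 k
  have hLa : lD (fun x => Ec u x - (v - u) * x) k ≤ lD (Ec v) k :=
    core_left Hv Hu' hEvc hd2 k
  rw [lD_sub_linear (hEcConv u hu') (v - u) k] at hLa
  -- translate to derivWithin
  rw [derivWithin_Iio_eq_lD (hEcConv u hu'), derivWithin_Iio_eq_lD (hEcConv v hv'),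
    derivWithin_Ioi_eq_rD (hEcConv u hu'), derivWithin_Ioi_eq_rD (hEcConv v hv')]
  exact ⟨⟨by linarith, hLb⟩, ⟨by linarith, hRb⟩⟩
end
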